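/- arXiv:2210.02679 — 10 statements merged into one kernel-verified Lean document; each statement's English description precedes it below -/
import Mathlib

section
/- Let G be a group, let L ≤ H be finite subgroups of G, and let g ∈ G satisfy g² ∈ L. Then either L ∩ H^g = H ∩ L^g = L ∩ L^g, or the three subgroups L ∩ H^g, H ∩ L^g and L ∩ L^g are pairwise distinct. -/
/-- The conjugate subgroup `H^g = g⁻¹ H g`. -/
def conjSG {G : Type*} [Group G] (H : Subgroup G) (g : G) : Subgroup G :=
  Subgroup.comap (MulAut.conj g).toMonoidHom H

lemma mem_conjSG {G : Type*} [Group G] {H : Subgroup G} {g x : G} :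
    x ∈ conjSG H g ↔ g * x * g⁻¹ ∈ H := Iff.rfl

/-- **Trichotomy of stabilizers.**  Let `L ≤ H` be finite subgroups of a group `G` and
`g ∈ G` with `g² ∈ L`.  Then either `L ∩ H^g = H ∩ L^g = L ∩ L^g`, or the three
subgroups `L ∩ H^g`, `H ∩ L^g` and `L ∩ L^g` are pairwise distinct. -/
theorem stabilizer_trichotomy {G : Type*} [Group G] (L H : Subgroup G) (hLH : L ≤ H)
    (hLfin : (L : Set G).Finite) (hHfin : (H : Set G).Finite) (g : G) (hg2 : g ^ 2 ∈ L) :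
    (L ⊓ conjSG H g = H ⊓ conjSG L g ∧ H ⊓ conjSG L g = L ⊓ conjSG L g) ∨
    (L ⊓ conjSG H g ≠ H ⊓ conjSG L g ∧ L ⊓ conjSG H g ≠ L ⊓ conjSG L g ∧
      H ⊓ conjSG L g ≠ L ⊓ conjSG L g) := by
  set A := L ⊓ conjSG H g with hA
  set B := H ⊓ conjSG L g with hB
  set C := L ⊓ conjSG L g with hC
  have hg2H : g ^ 2 ∈ H := hLH hg2
  have hfinA : (A : Set G).Finite := hLfin.subset (fun x hx => hx.1)
  have hfinB : (B : Set G).Finite := hHfin.subset (fun x hx => hx.1)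
  -- g⁻¹ x g : image of A under this map is B
  have himg : (fun x => g⁻¹ * x * g) '' (A : Set G) = (B : Set G) := by
    ext y
    simp only [Set.mem_image, SetLike.mem_coe]
    constructor
    · rintro ⟨x, hx, rfl⟩
      obtain ⟨hxL, hxH⟩ := Subgroup.mem_inf.mp hx
      replace hxH : g * x * g⁻¹ ∈ H := hxH
      rw [Subgroup.mem_inf]
      constructor
      · -- g⁻¹ * x * g ∈ H : equals (g^2)⁻¹ * (g*x*g⁻¹) * g^2
        have : g⁻¹ * x * g = (g ^ 2)⁻¹ * (g * x * g⁻¹) * g ^ 2 := by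
          group
        rw [this]
        exact H.mul_mem (H.mul_mem (H.inv_mem hg2H) hxH) hg2H
      · show g * (g⁻¹ * x * g) * g⁻¹ ∈ L
        have : g * (g⁻¹ * x * g) * g⁻¹ = x := by group
        rw [this]; exact hxL
    · rintro hy
      obtain ⟨hyH, hyL⟩ := Subgroup.mem_inf.mp hy
      replace hyL : g * y * g⁻¹ ∈ L := hyL
      refine ⟨g * y * g⁻¹, Subgroup.mem_inf.mpr ⟨hyL, ?_⟩, by group⟩
      rw [mem_conjSG]
      have : g * (g * y * g⁻¹) * g⁻¹ = (g ^ 2) * y * (g ^ 2)⁻¹ := by rw [pow_two]; group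
      rw [this]
      exact H.mul_mem (H.mul_mem hg2H hyH) (H.inv_mem hg2H)
  have hcardAB : (A : Set G).ncard = (B : Set G).ncard := by
    rw [← himg, Set.ncard_image_of_injective]
    intro a b hab
    simpa using hab
  have hCA : (C : Set G) ⊆ (A : Set G) := by
    rintro x ⟨hxL, hxC⟩
    exact ⟨hxL, mem_conjSG.mpr (hLH (mem_conjSG.mp hxC))⟩
  have hCB : (C : Set G) ⊆ (B : Set G) := by
    rintro x ⟨hxL, hxC⟩
    exact ⟨hLH hxL, hxC⟩
  -- key implications
  have keyAB : A = B → A = C := by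
    intro h
    refine le_antisymm ?_ (fun x hx => hCA hx)
    intro x hx
    exact ⟨hx.1, (h ▸ hx : x ∈ B).2⟩
  have keyAC : A = C → B = C := by
    intro h
    have hcard : (B : Set G).ncard ≤ (C : Set G).ncard := by
      rw [← hcardAB, h]
    exact SetLike.coe_injective
      ((Set.eq_of_subset_of_ncard_le hCB hcard hfinB).symm)
  have keyBC : B = C → A = C := by
    intro h
    have hcard : (A : Set G).ncard ≤ (C : Set G).ncard := by
      rw [hcardAB, h]
    exact SetLike.coe_injective
      ((Set.eq_of_subset_of_ncard_le hCA hcard hfinA).symm)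
  by_cases h1 : A = B
  · exact Or.inl ⟨h1, h1.symm.trans (keyAB h1)⟩
  · refine Or.inr ⟨h1, ?_, ?_⟩
    · intro h2; exact h1 (h2.trans (keyAC h2).symm)
    · intro h3; exact h1 ((keyBC h3).trans h3.symm)
end

section
/- Let Γ be a finite connected simple graph with at least one edge, let G ≤ Aut(Γ) be arc-transitive on Γ, and let B be a block system for G on the vertex set VΓ with 1 < |B| < |VΓ|. Suppose that Γ is locally primitive for G and that the valency (common vertex degree) of Γ equals the valency of the quotient graph Γ_B. Then Γ is a cover of Γ_B: for every pair of blocks B₁, B₂ that are adjacent in Γ_B, every vertex of B₁ has exactly one neighbour in B₂ and every vertex of B₂ has exactly one neighbour in B₁. -/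
/-- The quotient graph of a graph by a partition (given as a setoid): two classes are
adjacent iff they are distinct and contain some pair of adjacent vertices. -/
def quotGraph {V : Type*} (Γ : SimpleGraph V) (B : Setoid V) : SimpleGraph (Quotient B) where
  Adj x y := x ≠ y ∧ ∃ a b : V, Quotient.mk B a = x ∧ Quotient.mk B b = y ∧ Γ.Adj a b
  symm := by
    constructor
    rintro x y ⟨hne, a, b, ha, hb, hab⟩
    exact ⟨hne.symm, b, a, hb, ha, hab.symm⟩
  loopless := by
    constructor
    rintro x ⟨hne, -⟩
    exact hne rfl

/-- **Corollary 2.3.**  Let `Γ` be a finite connected graph with an edge, `G ≤ Aut Γ`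
arc-transitive, and `B` a nontrivial block system for `G` on the vertices.  If `Γ` is
locally primitive for `G` and `val Γ = val Γ_B`, then `Γ` is a cover of `Γ_B`: for every
pair of adjacent blocks, each vertex of one block has exactly one neighbour in the
other block. -/
theorem locally_primitive_cover {V : Type*} [Fintype V] (Γ : SimpleGraph V)
    (G : Type*) [Group G] [MulAction G V] [FaithfulSMul G V]
    (hact : ∀ (g : G) (a b : V), Γ.Adj (g • a) (g • b) ↔ Γ.Adj a b)
    (hconn : Γ.Connected) (hedge : ∃ a b : V, Γ.Adj a b)
    (harc : ∀ a b c d : V, Γ.Adj a b → Γ.Adj c d → ∃ g : G, g • a = c ∧ g • b = d)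
    (B : Setoid V)
    (hinv : ∀ (g : G) (a b : V), B.r a b → B.r (g • a) (g • b))
    (hnt1 : ∃ a b : V, ¬ B.r a b)
    (hnt2 : ∃ a b : V, a ≠ b ∧ B.r a b)
    (hlocprim : ∀ α : V,
      (∀ b c : V, Γ.Adj α b → Γ.Adj α c → ∃ g : G, g • α = α ∧ g • b = c) ∧
      (∀ T : Set V, T ⊆ Γ.neighborSet α →
        (∀ g : G, g • α = α →
          ((fun v => g • v) '' T = T ∨ Disjoint ((fun v => g • v) '' T) T)) →
        T.Subsingleton ∨ T = Γ.neighborSet α))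
    (d : ℕ)
    (hvalG : ∀ v : V, (Γ.neighborSet v).ncard = d)
    (hvalQ : ∀ x : Quotient B, ((quotGraph Γ B).neighborSet x).ncard = d) :
    ∀ a b : V, (quotGraph Γ B).Adj (Quotient.mk B a) (Quotient.mk B b) →
      ∃! c : V, B.r b c ∧ Γ.Adj a c := by
  intro a b hq
  obtain ⟨hne, a₀, b₀, ha₀, hb₀, hadj⟩ := id hq
  -- Step 1 : no edge joins two vertices of the same block.
  have hnointra : ∀ u w : V, Γ.Adj u w → ¬ B.r u w := by
    intro u w huw hr
    obtain ⟨g, hg1, hg2⟩ := harc u w a₀ b₀ huw hadj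
    have hr' : B.r a₀ b₀ := by rw [← hg1, ← hg2]; exact hinv g u w hr
    exact hne (by rw [← ha₀, ← hb₀]; exact Quotient.sound hr')
  -- Step 2 : the valency is at least 2.
  have hd1 : 1 ≤ d := by
    rw [← hvalG a₀]
    exact (Set.ncard_pos (Set.toFinite _)).2 ⟨b₀, hadj⟩
  have hd2 : 2 ≤ d := by
    rcases Nat.lt_or_ge d 2 with h | h
    · exfalso
      have hd : d = 1 := by omega
      have hsingle : ∀ v w : V, Γ.Adj v w → Γ.neighborSet v = {w} := by
        intro v w hvw
        obtain ⟨x, hx⟩ := Set.ncard_eq_one.mp (by rw [hvalG v, hd])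
        have : w ∈ ({x} : Set V) := hx ▸ hvw
        rw [hx, this]
      have key : ∀ (u v : V) (_ : Γ.Walk u v), (u = a₀ ∨ u = b₀) → (v = a₀ ∨ v = b₀) := by
        intro u v p
        induction p with
        | nil => exact id
        | @cons u u' v'' he q ih =>
          intro hu
          apply ih
          rcases hu with h | h
          · right
            have hx : u' ∈ Γ.neighborSet a₀ := by rw [h] at he; exact he
            rw [hsingle a₀ b₀ hadj] at hx
            exact hx
          · left
            have hx : u' ∈ Γ.neighborSet b₀ := by rw [h] at he; exact he
            rw [hsingle b₀ a₀ hadj.symm] at hx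
            exact hx
      obtain ⟨x, y, hxy, hrxy⟩ := hnt2
      obtain ⟨p⟩ := hconn.preconnected a₀ x
      obtain ⟨p'⟩ := hconn.preconnected a₀ y
      have hx := key a₀ x p (Or.inl rfl)
      have hy := key a₀ y p' (Or.inl rfl)
      rcases hx with h1 | h1 <;> rcases hy with h2 | h2 <;> rw [h1, h2] at hrxy hxy
      · exact hxy rfl
      · exact hnointra a₀ b₀ hadj hrxy
      · exact hnointra a₀ b₀ hadj (B.iseqv.symm hrxy)
      · exact hxy rfl
    · exact h
  -- Step 3 : no vertex has all of its neighbours inside a single block.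
  have hNoFull : ∀ v w : V, Γ.Adj v w → ¬ (∀ x, Γ.Adj v x → B.r w x) := by
    intro v w hvw hfull
    -- transfer : for every arc (p, q), all neighbours of p lie in the block of q.
    have htrans : ∀ p q : V, Γ.Adj p q → ∀ x, Γ.Adj p x → B.r q x := by
      intro p q hpq x hpx
      obtain ⟨g, hg1, hg2⟩ := harc v w p q hvw hpq
      have hx' : Γ.Adj v (g⁻¹ • x) := by
        have : Γ.Adj (g • v) (g • (g⁻¹ • x)) := by
          rw [hg1, smul_inv_smul]; exact hpx
        exact (hact g v (g⁻¹ • x)).1 this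
      have h1 : B.r w (g⁻¹ • x) := hfull _ hx'
      have h2 := hinv g _ _ h1
      rw [hg2, smul_inv_smul] at h2
      exact h2
    set P : V → Prop := fun v' =>
      (B.r a₀ v' ∧ ∀ x, Γ.Adj v' x → B.r b₀ x) ∨ (B.r b₀ v' ∧ ∀ x, Γ.Adj v' x → B.r a₀ x)
      with hP
    have hstep : ∀ u x : V, P u → Γ.Adj u x → P x := by
      intro u x hu hux
      rcases hu with ⟨h1, h2⟩ | ⟨h1, h2⟩
      · exact Or.inr ⟨h2 x hux, fun y hy =>
          B.iseqv.trans h1 (htrans x u hux.symm y hy)⟩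
      · exact Or.inl ⟨h2 x hux, fun y hy =>
          B.iseqv.trans h1 (htrans x u hux.symm y hy)⟩
    have hwalk : ∀ (u v' : V) (_ : Γ.Walk u v'), P u → P v' := by
      intro u v' p
      induction p with
      | nil => exact id
      | cons h q ih => exact fun hu => ih (hstep _ _ hu h)
    have hallP : ∀ v' : V, P v' := by
      intro v'
      obtain ⟨p⟩ := hconn.preconnected a₀ v'
      exact hwalk a₀ v' p (Or.inl ⟨B.iseqv.refl a₀, fun x hx => htrans a₀ b₀ hadj x hx⟩)
    -- then the quotient neighbourhood of [a₀] is contained in {[b₀]}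
    have hsub : (quotGraph Γ B).neighborSet (Quotient.mk B a₀) ⊆ {Quotient.mk B b₀} := by
      intro X hX
      obtain ⟨hne', p, q, hp, hq', hpq⟩ := hX
      have hpa : B.r p a₀ := Quotient.exact hp
      rcases hallP p with ⟨-, h2⟩ | ⟨h1, -⟩
      · have : B.r b₀ q := h2 q hpq
        rw [← hq']
        exact (Quotient.sound this).symm
      · exact absurd (B.iseqv.symm (B.iseqv.trans h1 hpa)) (hnointra a₀ b₀ hadj)
    have hle : ((quotGraph Γ B).neighborSet (Quotient.mk B a₀)).ncard ≤ 1 := by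
      have := Set.ncard_le_ncard hsub (Set.finite_singleton _)
      simpa using this
    rw [hvalQ (Quotient.mk B a₀)] at hle
    omega
  -- Step 4 : uniqueness — distinct neighbours of a vertex lie in distinct blocks.
  have huniq : ∀ v w w' : V, Γ.Adj v w → Γ.Adj v w' → B.r w w' → w = w' := by
    intro v w w' hw hw' hr
    obtain ⟨-, hprim⟩ := hlocprim v
    set T : Set V := Γ.neighborSet v ∩ {x | B.r w x} with hT
    have hTsub : T ⊆ Γ.neighborSet v := Set.inter_subset_left
    have hblock : ∀ g : G, g • v = v →
        ((fun x => g • x) '' T = T ∨ Disjoint ((fun x => g • x) '' T) T) := by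
      intro g hg
      have himg : (fun x => g • x) '' T = Γ.neighborSet v ∩ {x | B.r (g • w) x} := by
        ext x
        simp only [Set.mem_image, hT, Set.mem_inter_iff, SimpleGraph.mem_neighborSet,
          Set.mem_setOf_eq]
        constructor
        · rintro ⟨y, ⟨hy1, hy2⟩, rfl⟩
          refine ⟨?_, hinv g w y hy2⟩
          rw [← hg]
          exact (hact g v y).2 hy1
        · rintro ⟨hx1, hx2⟩
          refine ⟨g⁻¹ • x, ⟨?_, ?_⟩, by simp⟩
          · have : Γ.Adj (g • v) x := by rw [hg]; exact hx1
            have h2 := (hact g⁻¹ _ _).2 this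
            simpa using h2
          · have h3 := hinv g⁻¹ _ _ hx2
            simpa using h3
      by_cases hc : B.r w (g • w)
      · left
        rw [himg, hT]
        ext x
        simp only [Set.mem_inter_iff, Set.mem_setOf_eq]
        exact and_congr_right fun _ =>
          ⟨fun h => B.iseqv.trans hc h, fun h => B.iseqv.trans (B.iseqv.symm hc) h⟩
      · right
        rw [himg, Set.disjoint_left]
        rintro x ⟨-, hx2⟩ hxT
        exact hc (B.iseqv.trans hxT.2 (B.iseqv.symm hx2))
    rcases hprim T hTsub hblock with hss | hfull
    · exact hss ⟨hw, B.iseqv.refl w⟩ ⟨hw', hr⟩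
    · exact absurd (fun x hx => ((hfull.symm ▸ (hx : x ∈ Γ.neighborSet v)) : x ∈ T).2)
        (hNoFull v w hw)
  -- Step 5 : existence, by counting.
  have hinj : Set.InjOn (Quotient.mk B) (Γ.neighborSet a) := by
    intro w hw w' hw' he
    exact huniq a w w' hw hw' (Quotient.exact he)
  have himgsub : Quotient.mk B '' (Γ.neighborSet a) ⊆
      (quotGraph Γ B).neighborSet (Quotient.mk B a) := by
    rintro X ⟨w, hw, rfl⟩
    exact ⟨fun h => hnointra a w hw (Quotient.exact h), a, w, rfl, rfl, hw⟩
  have heq : Quotient.mk B '' (Γ.neighborSet a) =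
      (quotGraph Γ B).neighborSet (Quotient.mk B a) := by
    apply Set.eq_of_subset_of_ncard_le himgsub
    rw [Set.ncard_image_of_injOn hinj, hvalG a, hvalQ]
  have hmem : Quotient.mk B b ∈ Quotient.mk B '' (Γ.neighborSet a) := by
    rw [heq]
    exact hq
  obtain ⟨c, hc, hcb⟩ := hmem
  refine ⟨c, ⟨B.iseqv.symm (Quotient.exact hcb), hc⟩, ?_⟩
  rintro c' ⟨h1, h2⟩
  exact huniq a c' c h2 hc (B.iseqv.trans (B.iseqv.symm h1) (B.iseqv.symm (Quotient.exact hcb)))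
end

section
/- Let G be a group, let L ≤ H be subgroups of G, and let g ∈ G with g ∉ H and g² ∈ L. Then: (1) the partition of G/L into the fibres of the natural projection G/L → G/H is a G-invariant partition (block system) for the left-multiplication action of G on G/L; and (2) for all x, y ∈ G with xH ≠ yH, the cosets xH and yH are adjacent in Cos(G,H,HgH) if and only if there exist h, h' ∈ H such that xhL is adjacent to yh'L in Cos(G,L,LgL). In other words, the quotient graph of Cos(G,L,LgL) with respect to this block system is the coset graph Cos(G,H,HgH). -/
/-- membership of the double coset `H g H`. -/
def inDC {G : Type*} [Group G] (H : Subgroup G) (g z : G) : Prop :=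
  ∃ h ∈ H, ∃ h' ∈ H, z = h * g * h'

/-- The coset graph `Cos(G,H,HgH)` on the coset space `G/H`: distinct cosets `xH` and `yH`
are adjacent iff `x⁻¹y ∈ HgH`.  (The symmetrised form of the adjacency relation below is
equal to this condition whenever `g² ∈ H`, since then `(HgH)⁻¹ = HgH`.) -/
def cosetGraph {G : Type*} [Group G] (H : Subgroup G) (g : G) : SimpleGraph (G ⧸ H) where
  Adj a b := a ≠ b ∧ ∃ x y : G, (x : G ⧸ H) = a ∧ (y : G ⧸ H) = b ∧
      (inDC H g (x⁻¹ * y) ∨ inDC H g (y⁻¹ * x))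
  symm := by
    constructor
    rintro a b ⟨hne, x, y, hx, hy, h⟩
    exact ⟨hne.symm, y, x, hy, hx, h.symm⟩
  loopless := by
    constructor
    rintro a ⟨hne, -⟩
    exact hne rfl

/-- The natural projection `G/L → G/H` for `L ≤ H`. -/
def cosetProj {G : Type*} [Group G] {L H : Subgroup G} (hLH : L ≤ H) : G ⧸ L → G ⧸ H :=
  Quotient.map' id (fun a b hab => by
    rw [QuotientGroup.leftRel_apply] at hab ⊢
    exact hLH hab)

lemma cosetProj_mk {G : Type*} [Group G] {L H : Subgroup G} (hLH : L ≤ H) (x : G) :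
    cosetProj hLH (x : G ⧸ L) = (x : G ⧸ H) := rfl

/-- **Proposition 2.2.**  Let `L ≤ H ≤ G` and `g ∈ G` with `g ∉ H` and `g² ∈ L`.  Then
(1) the fibres of the projection `G/L → G/H` form a `G`-invariant partition (block
system) of `G/L` for the left-multiplication action; and
(2) two distinct cosets `xH, yH` are adjacent in `Cos(G,H,HgH)` iff some pair of
representatives of the corresponding fibres, `xhL` and `yh'L` with `h, h' ∈ H`, is
adjacent in `Cos(G,L,LgL)`; i.e. the quotient graph of `Cos(G,L,LgL)` modulo this block
system is `Cos(G,H,HgH)`. -/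
theorem cosetGraph_quotient {G : Type*} [Group G] (L H : Subgroup G) (hLH : L ≤ H)
    (g : G) (hg : g ∉ H) (hg2 : g ^ 2 ∈ L) :
    (∀ (z : G) (u v : G ⧸ L),
        cosetProj hLH u = cosetProj hLH v → cosetProj hLH (z • u) = cosetProj hLH (z • v)) ∧
    (∀ x y : G, (x : G ⧸ H) ≠ (y : G ⧸ H) →
      ((cosetGraph H g).Adj (x : G ⧸ H) (y : G ⧸ H) ↔
        ∃ h ∈ H, ∃ h' ∈ H, (cosetGraph L g).Adj ((x * h : G) : G ⧸ L) ((y * h' : G) : G ⧸ L))) := by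
  constructor
  · intro z u v h
    induction u using QuotientGroup.induction_on with
    | H a =>
    induction v using QuotientGroup.induction_on with
    | H b =>
    have hz : ∀ c : G, z • ((c : G ⧸ L)) = ((z * c : G) : G ⧸ L) := fun c => rfl
    rw [hz, hz, cosetProj_mk, cosetProj_mk, QuotientGroup.eq]
    rw [cosetProj_mk, cosetProj_mk, QuotientGroup.eq] at h
    simpa [mul_assoc] using h
  · intro x y hne
    constructor
    · rintro ⟨-, x', y', hx', hy', hdc⟩
      rw [QuotientGroup.eq] at hx' hy'
      replace hx' : x⁻¹ * x' ∈ H := by simpa [mul_inv_rev] using H.inv_mem hx'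
      replace hy' : y⁻¹ * y' ∈ H := by simpa [mul_inv_rev] using H.inv_mem hy'
      -- x'⁻¹ * x ∈ H, y'⁻¹ * y ∈ H
      rcases hdc with ⟨h, hh, h', hh', heq⟩ | ⟨h, hh, h', hh', heq⟩
      · -- x'⁻¹ y' = h g h'
        -- x⁻¹ y = (x⁻¹ x') (x'⁻¹ y') (y'⁻¹ y) = (x⁻¹x') h g h' (y'⁻¹ y)
        refine ⟨(x⁻¹ * x') * h, H.mul_mem hx' hh,
          (y⁻¹ * y') * h'⁻¹, H.mul_mem hy' (H.inv_mem hh'), ?_⟩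
        refine ⟨?_, x * ((x⁻¹ * x') * h), y * ((y⁻¹ * y') * h'⁻¹), rfl, rfl, Or.inl ⟨1, L.one_mem, 1, L.one_mem, ?_⟩⟩
        · intro hc
          apply hne
          rw [QuotientGroup.eq] at hc ⊢
          have := hLH hc
          have hx : (x⁻¹ * x') * h ∈ H := H.mul_mem hx' hh
          have hy : (y⁻¹ * y') * h'⁻¹ ∈ H := H.mul_mem hy' (H.inv_mem hh')
          have : x⁻¹ * y = ((x⁻¹ * x') * h) * ((x * ((x⁻¹ * x') * h))⁻¹ * (y * ((y⁻¹ * y') * h'⁻¹))) * ((y⁻¹ * y') * h'⁻¹)⁻¹ := by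
            group
          rw [this]
          exact H.mul_mem (H.mul_mem hx (hLH hc)) (H.inv_mem hy)
        · have hx'y' : x'⁻¹ * y' = h * g * h' := heq
          have : (x * (x⁻¹ * x' * h))⁻¹ * (y * (y⁻¹ * y' * h'⁻¹)) = h⁻¹ * (x'⁻¹ * y') * h'⁻¹ := by
            group
          rw [this, hx'y']
          group
      · -- y'⁻¹ x' = h g h'
        refine ⟨(x⁻¹ * x') * h'⁻¹, H.mul_mem hx' (H.inv_mem hh'),
          (y⁻¹ * y') * h, H.mul_mem hy' hh, ?_⟩
        refine ⟨?_, x * ((x⁻¹ * x') * h'⁻¹), y * ((y⁻¹ * y') * h), rfl, rfl, Or.inr ⟨1, L.one_mem, 1, L.one_mem, ?_⟩⟩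
        · intro hc
          apply hne
          rw [QuotientGroup.eq] at hc ⊢
          have hx : (x⁻¹ * x') * h'⁻¹ ∈ H := H.mul_mem hx' (H.inv_mem hh')
          have hy : (y⁻¹ * y') * h ∈ H := H.mul_mem hy' hh
          have : x⁻¹ * y = ((x⁻¹ * x') * h'⁻¹) * ((x * ((x⁻¹ * x') * h'⁻¹))⁻¹ * (y * ((y⁻¹ * y') * h))) * ((y⁻¹ * y') * h)⁻¹ := by
            group
          rw [this]
          exact H.mul_mem (H.mul_mem hx (hLH hc)) (H.inv_mem hy)
        · have : (y * (y⁻¹ * y' * h))⁻¹ * (x * (x⁻¹ * x' * h'⁻¹)) = h⁻¹ * (y'⁻¹ * x') * h'⁻¹ := by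
            group
          rw [this, heq]
          group
    · rintro ⟨h, hh, h', hh', -, u, v, hu, hv, hdc⟩
      rw [QuotientGroup.eq] at hu hv
      refine ⟨hne, x, y, rfl, rfl, ?_⟩
      rcases hdc with ⟨l, hl, l', hl', heq⟩ | ⟨l, hl, l', hl', heq⟩
      · refine Or.inl ⟨h * (u⁻¹ * (x * h))⁻¹ * l,
          H.mul_mem (H.mul_mem hh (H.inv_mem (hLH hu))) (hLH hl),
          l' * (v⁻¹ * (y * h')) * h'⁻¹,
          H.mul_mem (H.mul_mem (hLH hl') (hLH hv)) (H.inv_mem hh'), ?_⟩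
        have e : x⁻¹ * y = (h * (u⁻¹ * (x * h))⁻¹) * (u⁻¹ * v) * ((v⁻¹ * (y * h')) * h'⁻¹) := by
          group
        rw [e, heq]; group
      · refine Or.inr ⟨h' * (v⁻¹ * (y * h'))⁻¹ * l,
          H.mul_mem (H.mul_mem hh' (H.inv_mem (hLH hv))) (hLH hl),
          l' * (u⁻¹ * (x * h)) * h⁻¹,
          H.mul_mem (H.mul_mem (hLH hl') (hLH hu)) (H.inv_mem hh), ?_⟩
        have e : y⁻¹ * x = (h' * (v⁻¹ * (y * h'))⁻¹) * (v⁻¹ * u) * ((u⁻¹ * (x * h)) * h⁻¹) := by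
          group
        rw [e, heq]; group
end

section
/- Let Γ be a simple graph with no isolated vertices, let G ≤ Aut(Γ) be arc-transitive on Γ, let B be a block system for G on VΓ, and let Γ_B be the quotient graph. For a vertex α, let ᾱ ∈ B denote the block containing α and let Σ(ᾱ) denote the set of blocks adjacent to ᾱ in Γ_B. Then for every vertex α the following are equivalent: (a) for every pair of blocks B₁, B₂ adjacent in Γ_B, every vertex of B₁ has the same positive number of neighbours in B₂ as every other vertex of B₁ ∪ B₂ has in the opposite block (the induced subgraph of Γ between B₁ and B₂ is regular, i.e. Γ is a multicover of Γ_B); (b) for every block B' ∈ Σ(ᾱ), the vertex α has a neighbour in B'; (c) the stabilizer G_α acts transitively on Σ(ᾱ). -/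
/-- **Lemma 3.1.**  Let `Γ` be a (finite) graph with no isolated vertices, `G ≤ Aut Γ`
arc-transitive, `B` a block system for `G` on the vertices, and `α` a vertex.  Then the
following are equivalent:
(a) `Γ` is a multicover of `Γ_B` (between any two adjacent blocks the induced subgraph
    is regular of positive degree);
(b) `α` has a neighbour in every block adjacent to its own block `ᾱ`;
(c) the stabilizer `G_α` is transitive on the neighbours of `ᾱ` in `Γ_B`. -/
theorem multicover_criterion {V : Type*} [Fintype V] (Γ : SimpleGraph V)
    (G : Type*) [Group G] [MulAction G V] [FaithfulSMul G V]
    (hact : ∀ (g : G) (a b : V), Γ.Adj (g • a) (g • b) ↔ Γ.Adj a b)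
    (hnoiso : ∀ v : V, ∃ w : V, Γ.Adj v w)
    (harc : ∀ a b c d : V, Γ.Adj a b → Γ.Adj c d → ∃ g : G, g • a = c ∧ g • b = d)
    (B : Setoid V)
    (hinv : ∀ (g : G) (a b : V), B.r a b → B.r (g • a) (g • b))
    (α : V) :
    [(∀ a b : V, (quotGraph Γ B).Adj (Quotient.mk B a) (Quotient.mk B b) →
        ∃ k : ℕ, 0 < k ∧
          (∀ a' : V, B.r a a' → ({c : V | B.r b c ∧ Γ.Adj a' c}).ncard = k) ∧
          (∀ b' : V, B.r b b' → ({c : V | B.r a c ∧ Γ.Adj b' c}).ncard = k)),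
     (∀ b : V, (quotGraph Γ B).Adj (Quotient.mk B α) (Quotient.mk B b) →
        ∃ c : V, B.r b c ∧ Γ.Adj α c),
     (∀ b c : V, (quotGraph Γ B).Adj (Quotient.mk B α) (Quotient.mk B b) →
        (quotGraph Γ B).Adj (Quotient.mk B α) (Quotient.mk B c) →
        ∃ g : G, g • α = α ∧ B.r (g • b) c)].TFAE := by
  have hinv' : ∀ (g : G) (a b : V), B.r (g • a) (g • b) → B.r a b := by
    intro g a b h
    have := hinv g⁻¹ _ _ h
    simpa using this
  have hmk : ∀ a b : V, Quotient.mk B a = Quotient.mk B b ↔ B.r a b :=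
    fun a b => ⟨Quotient.exact, Quotient.sound⟩
  -- transporting neighbour-count sets along group elements
  have himg : ∀ (g : G) (x w : V),
      {c : V | B.r (g • w) c ∧ Γ.Adj (g • x) c} = (g • ·) '' {c : V | B.r w c ∧ Γ.Adj x c} := by
    intro g x w
    ext d
    constructor
    · rintro ⟨h1, h2⟩
      refine ⟨g⁻¹ • d, ⟨?_, ?_⟩, by simp⟩
      · have := hinv g⁻¹ _ _ h1; simpa using this
      · have := (hact g⁻¹ (g • x) d).mpr h2; simpa using this
    · rintro ⟨c, ⟨h1, h2⟩, rfl⟩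
      exact ⟨hinv g _ _ h1, (hact g x c).mpr h2⟩
  have hcard : ∀ (g : G) (x w : V),
      ({c : V | B.r (g • w) c ∧ Γ.Adj (g • x) c}).ncard
        = ({c : V | B.r w c ∧ Γ.Adj x c}).ncard := by
    intro g x w
    rw [himg g x w]
    exact Set.ncard_image_of_injective _ (MulAction.injective g)
  -- sets depend on the representative only through its class
  have hsame : ∀ (w w' x : V), B.r w w' →
      {c : V | B.r w c ∧ Γ.Adj x c} = {c : V | B.r w' c ∧ Γ.Adj x c} := by
    intro w w' x h
    ext d
    exact ⟨fun ⟨h1, h2⟩ => ⟨B.trans (B.symm h) h1, h2⟩,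
           fun ⟨h1, h2⟩ => ⟨B.trans h h1, h2⟩⟩
  tfae_have 1 → 2
  | h1 => by
    intro b hadj
    obtain ⟨k, hk, hall, -⟩ := h1 α b hadj
    have hcardα := hall α (B.refl α)
    have hne : ({c : V | B.r b c ∧ Γ.Adj α c}).Nonempty := by
      rw [← Set.ncard_pos (Set.toFinite _)]
      omega
    obtain ⟨c, hc1, hc2⟩ := hne
    exact ⟨c, hc1, hc2⟩
  tfae_have 2 → 3
  | h2 => by
    intro b c hb hc
    obtain ⟨b', hbb', hab'⟩ := h2 b hb
    obtain ⟨c', hcc', hac'⟩ := h2 c hc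
    obtain ⟨g, hg1, hg2⟩ := harc α b' α c' hab' hac'
    refine ⟨g, hg1, ?_⟩
    have h1 : B.r (g • b) (g • b') := hinv g _ _ hbb'
    rw [hg2] at h1
    exact B.trans h1 (B.symm hcc')
  tfae_have 3 → 1
  | h3 => by
    -- first: (b) holds at α
    intro a b hadj
    obtain ⟨hneq, a₀, b₀, ha₀, hb₀, hab₀⟩ := id hadj
    -- α has a neighbour outside its own block
    obtain ⟨w, hw⟩ := hnoiso α
    obtain ⟨g₀, hg₀1, hg₀2⟩ := harc a₀ b₀ α w hab₀ hw
    set w₀ := g₀ • b₀ with hw₀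
    have hadjw₀ : Γ.Adj α w₀ := by rw [hw₀, ← hg₀1]; exact (hact g₀ a₀ b₀).mpr hab₀
    have hnrw₀ : ¬ B.r α w₀ := by
      intro h
      rw [← hg₀1, hw₀] at h
      exact hneq (ha₀ ▸ hb₀ ▸ (hmk a₀ b₀).mpr (hinv' g₀ _ _ h))
    have hqw₀ : (quotGraph Γ B).Adj (Quotient.mk B α) (Quotient.mk B w₀) :=
      ⟨fun h => hnrw₀ ((hmk α w₀).mp h), α, w₀, rfl, rfl, hadjw₀⟩
    -- (b) at α, from (c)
    have hbα : ∀ c : V, (quotGraph Γ B).Adj (Quotient.mk B α) (Quotient.mk B c) →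
        ∃ d : V, B.r c d ∧ Γ.Adj α d := by
      intro c hc
      obtain ⟨g, hg1, hg2⟩ := h3 w₀ c hqw₀ hc
      refine ⟨g • w₀, B.symm hg2, ?_⟩
      rw [← hg1]
      exact (hact g α w₀).mpr hadjw₀
    -- (b) at every vertex
    have hbx : ∀ x c : V, (quotGraph Γ B).Adj (Quotient.mk B x) (Quotient.mk B c) →
        ∃ d : V, B.r c d ∧ Γ.Adj x d := by
      intro x c hc
      obtain ⟨z, hz⟩ := hnoiso x
      obtain ⟨g, hg1, -⟩ := harc α w₀ x z hadjw₀ hz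
      obtain ⟨hne', u, v, hu, hv, huv⟩ := hc
      have hq : (quotGraph Γ B).Adj (Quotient.mk B α) (Quotient.mk B (g⁻¹ • c)) := by
        refine ⟨?_, g⁻¹ • u, g⁻¹ • v, ?_, ?_, ?_⟩
        · intro h
          apply hne'
          have h' := hinv g _ _ ((hmk _ _).mp h)
          rw [smul_inv_smul, hg1] at h'
          exact (hmk x c).mpr h'
        · rw [hmk]
          have : B.r u x := (hmk u x).mp hu
          have := hinv g⁻¹ _ _ this
          rw [← hg1] at this
          simpa using this
        · rw [hmk]
          exact hinv g⁻¹ _ _ ((hmk v c).mp hv)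
        · exact (hact g⁻¹ u v).mpr huv
      obtain ⟨d, hd1, hd2⟩ := hbα (g⁻¹ • c) hq
      refine ⟨g • d, ?_, ?_⟩
      · have := hinv g _ _ hd1
        simpa using this
      · rw [← hg1]
        exact (hact g α d).mpr hd2
    -- the constant k
    set k := ({c : V | B.r w₀ c ∧ Γ.Adj α c}).ncard with hk
    have hkpos : 0 < k := by
      rw [hk, Set.ncard_pos (Set.toFinite _)]
      exact ⟨w₀, B.refl w₀, hadjw₀⟩
    -- every edge (x, y) gives count k from x into the block of y
    have hedge : ∀ x y : V, Γ.Adj x y →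
        ({c : V | B.r y c ∧ Γ.Adj x c}).ncard = k := by
      intro x y hxy
      obtain ⟨g, hg1, hg2⟩ := harc α w₀ x y hadjw₀ hxy
      rw [hk, ← hcard g α w₀, hg1, hg2]
    refine ⟨k, hkpos, ?_, ?_⟩
    · intro a' ha'
      have hq : (quotGraph Γ B).Adj (Quotient.mk B a') (Quotient.mk B b) :=
        ((hmk a a').mpr ha') ▸ hadj
      obtain ⟨d, hd1, hd2⟩ := hbx a' b hq
      rw [hsame b d a' hd1]
      exact hedge a' d hd2
    · intro b' hb'
      have hq : (quotGraph Γ B).Adj (Quotient.mk B b') (Quotient.mk B a) :=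
        ((hmk b b').mpr hb') ▸ hadj.symm
      obtain ⟨d, hd1, hd2⟩ := hbx b' a hq
      rw [hsame a d b' hd1]
      exact hedge b' d hd2
  tfae_finish
end

section
/- Let Σ be a finite simple graph that is regular of valency m ≥ 2, and let G ≤ Aut(Σ) be arc-transitive on Σ. Then there exist a finite simple graph Δ that is regular of valency m, a group acting on Δ by graph automorphisms and arc-transitively, and a block system B for this group on VΔ, such that: the quotient graph Δ_B is isomorphic to Σ, the graph Δ is disconnected, and Δ is not a cover of Δ_B (for some pair of adjacent blocks of B the induced subgraph of Δ between them is not a perfect matching). In particular, every arc-transitive finite graph that is not a perfect matching has a disconnected symmetric pseudocover. -/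
namespace DPC

variable {n : ℕ}

abbrev Arc (S : SimpleGraph (Fin n)) : Type := {q : Fin n × Fin n // S.Adj q.1 q.2}
abbrev Wt (S : SimpleGraph (Fin n)) (m : ℕ) : Type := Arc S × Fin m
variable (S : SimpleGraph (Fin n)) (m : ℕ)
def rev (x : Arc S) : Arc S := ⟨(x.1.2, x.1.1), x.2.symm⟩
@[simp] lemma rev_rev (x : Arc S) : rev S (rev S x) = x := rfl
lemma ne_rev (x : Arc S) : x ≠ rev S x := by
  intro h
  have h1 : x.1.1 = x.1.2 := congrArg (fun z : Arc S => z.1.1) h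
  have h2 := x.2
  rw [h1] at h2
  exact S.loopless.irrefl _ h2
def Dg : SimpleGraph (Wt S m) where
  Adj x y := x.1 = rev S y.1
  symm := by
    constructor
    rintro x y (h : x.1 = rev S y.1)
    show y.1 = rev S x.1
    rw [h, rev_rev]
  loopless := by
    constructor
    rintro x (h : x.1 = rev S x.1)
    exact ne_rev S x.1 h
lemma Dg_adj (x y : Wt S m) : (Dg S m).Adj x y ↔ x.1 = rev S y.1 := Iff.rfl
def Bs : Setoid (Wt S m) :=
  ⟨fun a b => a.1.1.1 = b.1.1.1, ⟨fun _ => rfl, fun h => h.symm, fun h1 h2 => h1.trans h2⟩⟩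
def Hg : Subgroup (Equiv.Perm (Wt S m)) where
  carrier := {h | (∀ a b, (Dg S m).Adj (h a) (h b) ↔ (Dg S m).Adj a b) ∧
      ∀ a b : Wt S m, ((h a).1.1.1 = (h b).1.1.1 ↔ a.1.1.1 = b.1.1.1)}
  one_mem' := ⟨fun _ _ => Iff.rfl, fun _ _ => Iff.rfl⟩
  mul_mem' := by
    rintro g h ⟨hg1, hg2⟩ ⟨hh1, hh2⟩
    exact ⟨fun a b => (hg1 (h a) (h b)).trans (hh1 a b),
           fun a b => (hg2 (h a) (h b)).trans (hh2 a b)⟩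
  inv_mem' := by
    rintro h ⟨h1, h2⟩
    constructor
    · intro a b
      have := h1 (h⁻¹ a) (h⁻¹ b)
      simp only [Equiv.Perm.inv_def, Equiv.apply_symm_apply] at this
      exact this.symm
    · intro a b
      have := h2 (h⁻¹ a) (h⁻¹ b)
      simp only [Equiv.Perm.inv_def, Equiv.apply_symm_apply] at this
      exact this.symm
def liftPerm (p : Equiv.Perm (Fin n)) (hp : ∀ x y, S.Adj (p x) (p y) ↔ S.Adj x y) :
    Equiv.Perm (Wt S m) :=
  Equiv.prodCongr ((Equiv.prodCongr p p).subtypeEquiv (fun q => (hp q.1 q.2).symm))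
    (Equiv.refl (Fin m))
@[simp] lemma liftPerm_apply (p : Equiv.Perm (Fin n))
    (hp : ∀ x y, S.Adj (p x) (p y) ↔ S.Adj x y) (w : Wt S m) :
    liftPerm S m p hp w = (⟨(p w.1.1.1, p w.1.1.2), (hp _ _).mpr w.1.2⟩, w.2) := rfl
lemma liftPerm_mem (p : Equiv.Perm (Fin n))
    (hp : ∀ x y, S.Adj (p x) (p y) ↔ S.Adj x y) : liftPerm S m p hp ∈ Hg S m := by
  constructor
  · intro a b
    rw [Dg_adj, Dg_adj, liftPerm_apply, liftPerm_apply]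
    simp [rev, Subtype.ext_iff, Prod.ext_iff]
  · intro a b
    simp [liftPerm_apply]
def fibPerm (f : Arc S → Equiv.Perm (Fin m)) : Equiv.Perm (Wt S m) :=
  Equiv.prodShear (Equiv.refl (Arc S)) f
@[simp] lemma fibPerm_apply (f : Arc S → Equiv.Perm (Fin m)) (w : Wt S m) :
    fibPerm S m f w = (w.1, f w.1 w.2) := rfl
lemma fibPerm_mem (f : Arc S → Equiv.Perm (Fin m)) : fibPerm S m f ∈ Hg S m :=
  ⟨fun _ _ => Iff.rfl, fun _ _ => Iff.rfl⟩

-- NEW PART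

lemma arcTrans
    (hS : ∀ a b c d : Fin n, S.Adj a b → S.Adj c d →
      ∃ p : Equiv.Perm (Fin n), (∀ x y, S.Adj (p x) (p y) ↔ S.Adj x y) ∧ p a = c ∧ p b = d) :
    ∀ a b c d : Wt S m, (Dg S m).Adj a b → (Dg S m).Adj c d →
      ∃ h ∈ Hg S m, h a = c ∧ h b = d := by
  classical
  intro a b c d hab hcd
  obtain ⟨p, hp, hp1, hp2⟩ := hS a.1.1.1 a.1.1.2 c.1.1.1 c.1.1.2 a.1.2 c.1.2
  rw [Dg_adj] at hab hcd
  have hba : b.1 = rev S a.1 := by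
    have := congrArg (rev S) hab
    rw [rev_rev] at this
    exact this.symm
  have hb1 : b.1.1.1 = a.1.1.2 := congrArg (fun z : Arc S => z.1.1) hba
  have hb2 : b.1.1.2 = a.1.1.1 := congrArg (fun z : Arc S => z.1.2) hba
  have hc1 : c.1.1.1 = d.1.1.2 := congrArg (fun z : Arc S => z.1.1) hcd
  have hc2 : c.1.1.2 = d.1.1.1 := congrArg (fun z : Arc S => z.1.2) hcd
  have hcdne : d.1 ≠ c.1 := by
    intro hE
    rw [← hE] at hcd
    exact ne_rev S c.1 (hE ▸ hcd)
  set τf : Arc S → Equiv.Perm (Fin m) := fun q =>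
    if q = c.1 then Equiv.swap a.2 c.2 else if q = d.1 then Equiv.swap b.2 d.2 else 1 with hτf
  refine ⟨fibPerm S m τf * liftPerm S m p hp,
    mul_mem (fibPerm_mem S m τf) (liftPerm_mem S m p hp), ?_, ?_⟩
  · have h1 : (liftPerm S m p hp) a = (c.1, a.2) := by
      rw [liftPerm_apply]
      exact Prod.ext (Subtype.ext (Prod.ext hp1 hp2)) rfl
    rw [Equiv.Perm.mul_apply, h1, fibPerm_apply]
    simp [hτf, Equiv.swap_apply_left]
  · have h1 : (liftPerm S m p hp) b = (d.1, b.2) := by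
      have e1 : p b.1.1.1 = d.1.1.1 := by rw [hb1, hp2, hc2]
      have e2 : p b.1.1.2 = d.1.1.2 := by rw [hb2, hp1, hc1]
      rw [liftPerm_apply]
      exact Prod.ext (Subtype.ext (Prod.ext e1 e2)) rfl
    rw [Equiv.Perm.mul_apply, h1, fibPerm_apply]
    rw [hτf]
    simp only [if_neg hcdne, if_pos rfl]
    simp [Equiv.swap_apply_left]

lemma valency (w : Wt S m) : ((Dg S m).neighborSet w).ncard = m := by
  have himg : (Dg S m).neighborSet w = (fun j : Fin m => (rev S w.1, j)) '' Set.univ := by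
    ext y
    simp only [SimpleGraph.mem_neighborSet, Set.image_univ, Set.mem_range]
    rw [Dg_adj]
    constructor
    · intro hy
      refine ⟨y.2, ?_⟩
      refine Prod.ext ?_ rfl
      rw [hy, rev_rev]
    · rintro ⟨j, rfl⟩
      show w.1 = rev S (rev S w.1)
      rw [rev_rev]
  rw [himg, Set.ncard_image_of_injective _ (fun j₁ j₂ h => congrArg Prod.snd h),
    Set.ncard_univ, Nat.card_eq_fintype_card, Fintype.card_fin]

lemma sym2_eq_of_adj {x y : Wt S m} (h : (Dg S m).Adj x y) :
    s(x.1.1.1, x.1.1.2) = s(y.1.1.1, y.1.1.2) := by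
  rw [Dg_adj] at h
  have h1 : x.1.1.1 = y.1.1.2 := congrArg (fun z : Arc S => z.1.1) h
  have h2 : x.1.1.2 = y.1.1.1 := congrArg (fun z : Arc S => z.1.2) h
  rw [h1, h2, Sym2.eq_swap]

lemma sym2_eq_of_reach {x y : Wt S m} (h : (Dg S m).Reachable x y) :
    s(x.1.1.1, x.1.1.2) = s(y.1.1.1, y.1.1.2) := by
  obtain ⟨p⟩ := h
  induction p with
  | nil => rfl
  | cons ha _ ih => exact (sym2_eq_of_adj S m ha).trans ih

end DPC

/-- **Proposition 2.6.**  Every finite arc-transitive graph `Sg` of valency `m ≥ 2`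
(in particular, not a perfect matching) has a disconnected symmetric pseudocover:
there are a finite graph `Δ`, regular of valency `m`, a group of automorphisms of `Δ`
(realised as a subgroup of the permutations of the vertices preserving adjacency)
acting arc-transitively, and an invariant partition `B` of the vertices of `Δ`, such
that the quotient graph of `Δ` by `B` is isomorphic to `Sg`, `Δ` is disconnected, and
`Δ` is not a cover of its quotient (for some pair of adjacent blocks and some vertex
of one of them, the number of its neighbours in the other block is not `1`). -/
theorem disconnected_pseudocover_exists {V : Type*} [Fintype V] [Nonempty V]
    (Sg : SimpleGraph V) (m : ℕ) (hm : 2 ≤ m)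
    (hreg : ∀ v : V, (Sg.neighborSet v).ncard = m)
    (G : Type*) [Group G] [MulAction G V] [FaithfulSMul G V]
    (hact : ∀ (g : G) (a b : V), Sg.Adj (g • a) (g • b) ↔ Sg.Adj a b)
    (harc : ∀ a b c d : V, Sg.Adj a b → Sg.Adj c d → ∃ g : G, g • a = c ∧ g • b = d) :
    ∃ (W : Type) (_ : Fintype W) (Δ : SimpleGraph W) (B : Setoid W)
      (H : Subgroup (Equiv.Perm W)),
      (∀ h ∈ H, ∀ a b : W, Δ.Adj (h a) (h b) ↔ Δ.Adj a b) ∧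
      (∀ a b c d : W, Δ.Adj a b → Δ.Adj c d → ∃ h ∈ H, h a = c ∧ h b = d) ∧
      (∀ h ∈ H, ∀ a b : W, B.r a b → B.r (h a) (h b)) ∧
      (∀ w : W, (Δ.neighborSet w).ncard = m) ∧
      Nonempty ((quotGraph Δ B) ≃g Sg) ∧
      ¬ Δ.Connected ∧
      (∃ a b : W, (quotGraph Δ B).Adj (Quotient.mk B a) (Quotient.mk B b) ∧
        ({c : W | B.r b c ∧ Δ.Adj a c}).ncard ≠ 1) := by
  classical
  obtain ⟨e⟩ : Nonempty (V ≃ Fin (Fintype.card V)) := ⟨Fintype.equivFin V⟩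
  set n := Fintype.card V with hn
  set S : SimpleGraph (Fin n) := Sg.comap ⇑e.symm with hSdef
  have hScomap : ∀ x y : Fin n, S.Adj x y ↔ Sg.Adj (e.symm x) (e.symm y) := fun _ _ => Iff.rfl
  have hz : 0 < m := by omega
  -- neighbours exist
  have hnbr : ∀ v : V, ∃ u, Sg.Adj v u := by
    intro v
    have h1 : (Sg.neighborSet v).ncard ≠ 0 := by rw [hreg v]; omega
    obtain ⟨u, hu⟩ := Set.nonempty_of_ncard_ne_zero h1
    exact ⟨u, hu⟩
  choose nb hnb using hnbr
  have harcS : ∀ v : V, S.Adj (e v) (e (nb v)) := by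
    intro v
    rw [hScomap]
    simpa using hnb v
  -- arc transitivity at the level of permutations of `Fin n`
  have hSarc : ∀ a b c d : Fin n, S.Adj a b → S.Adj c d →
      ∃ p : Equiv.Perm (Fin n), (∀ x y, S.Adj (p x) (p y) ↔ S.Adj x y) ∧ p a = c ∧ p b = d := by
    intro a b c d hab hcd
    rw [hScomap] at hab hcd
    obtain ⟨g, hg1, hg2⟩ := harc _ _ _ _ hab hcd
    refine ⟨(e.symm.trans (MulAction.toPerm g)).trans e, ?_, ?_, ?_⟩
    · intro x y
      rw [hScomap, hScomap]
      simp [MulAction.toPerm, hact]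
    · simp [MulAction.toPerm, hg1]
    · simp [MulAction.toPerm, hg2]
  refine ⟨DPC.Wt S m, Fintype.ofFinite _, DPC.Dg S m, DPC.Bs S m, DPC.Hg S m,
    ?_, DPC.arcTrans S m hSarc, ?_, DPC.valency S m, ?_, ?_, ?_⟩
  · -- adjacency preserved
    intro h hh a b
    exact hh.1 a b
  · -- blocks preserved
    intro h hh a b hr
    exact (hh.2 a b).mpr hr
  · -- quotient isomorphism
    have hlift : ∀ a b : DPC.Wt S m, (DPC.Bs S m).r a b →
        e.symm a.1.1.1 = e.symm b.1.1.1 := fun a b h => congrArg e.symm h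
    refine Nonempty.intro ⟨Equiv.mk
      (Quotient.lift (fun w : DPC.Wt S m => e.symm w.1.1.1) hlift)
      (fun v => Quotient.mk (DPC.Bs S m) (⟨(e v, e (nb v)), harcS v⟩, ⟨0, hz⟩))
      ?_ ?_, ?_⟩
    · refine Quotient.ind ?_
      intro w
      apply Quotient.sound
      show e (e.symm w.1.1.1) = w.1.1.1
      simp
    · intro v
      show e.symm (e v) = v
      simp
    · intro x y
      refine Quotient.inductionOn₂ x y ?_
      intro w₁ w₂
      constructor
      · intro hadj
        have hadj' : S.Adj w₁.1.1.1 w₂.1.1.1 := hadj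
        refine ⟨?_, (⟨(w₁.1.1.1, w₂.1.1.1), hadj'⟩, ⟨0, hz⟩),
          (⟨(w₂.1.1.1, w₁.1.1.1), hadj'.symm⟩, ⟨0, hz⟩), ?_, ?_, ?_⟩
        · intro hq
          have hq2 : w₁.1.1.1 = w₂.1.1.1 := Quotient.exact hq
          rw [hq2] at hadj'
          exact S.loopless.irrefl _ hadj'
        · exact Quotient.sound rfl
        · exact Quotient.sound rfl
        · rw [DPC.Dg_adj]
          rfl
      · rintro ⟨hne, a, b, ha, hb, hab⟩
        show Sg.Adj (e.symm w₁.1.1.1) (e.symm w₂.1.1.1)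
        have h₁ : a.1.1.1 = w₁.1.1.1 := Quotient.exact ha
        have h₂ : b.1.1.1 = w₂.1.1.1 := Quotient.exact hb
        rw [DPC.Dg_adj] at hab
        have h3 : a.1.1.2 = b.1.1.1 := congrArg (fun z : DPC.Arc S => z.1.2) hab
        have h4 : S.Adj w₁.1.1.1 w₂.1.1.1 := by
          rw [← h₁, ← h₂, ← h3]
          exact a.1.2
        exact h4
  · -- disconnected
    intro hconn
    obtain ⟨u⟩ := (inferInstance : Nonempty V)
    have h2 : 1 < (Sg.neighborSet u).ncard := by rw [hreg u]; omega
    rw [Set.one_lt_ncard_iff (Set.toFinite _)] at h2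
    obtain ⟨v, w, hv, hw, hvw⟩ := h2
    have hv' : S.Adj (e u) (e v) := by rw [hScomap]; simpa using hv
    have hw' : S.Adj (e u) (e w) := by rw [hScomap]; simpa using hw
    have hr := hconn.preconnected ((⟨(e u, e v), hv'⟩, ⟨0, hz⟩) : DPC.Wt S m)
      ((⟨(e u, e w), hw'⟩, ⟨0, hz⟩) : DPC.Wt S m)
    have hs := DPC.sym2_eq_of_reach S m hr
    simp only [Sym2.eq, Sym2.rel_iff', Prod.mk.injEq, Prod.swap_prod_mk] at hs
    rcases hs with ⟨-, h⟩ | ⟨h1, h2⟩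
    · exact hvw (e.injective h)
    · have : u = w := e.injective h1
      rw [this] at hw
      exact Sg.loopless.irrefl _ hw
  · -- not a cover
    obtain ⟨u⟩ := (inferInstance : Nonempty V)
    set a : DPC.Wt S m := (⟨(e u, e (nb u)), harcS u⟩, ⟨0, hz⟩) with hadef
    set b : DPC.Wt S m := (⟨(e (nb u), e u), (harcS u).symm⟩, ⟨0, hz⟩) with hbdef
    refine ⟨a, b, ⟨?_, a, b, rfl, rfl, ?_⟩, ?_⟩
    · intro hq
      have hq2 : a.1.1.1 = b.1.1.1 := Quotient.exact hq
      have heq : u = nb u := e.injective hq2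
      have h := hnb u
      rw [← heq] at h
      exact Sg.loopless.irrefl u h
    · rw [DPC.Dg_adj]; rfl
    · have hset : {c : DPC.Wt S m | (DPC.Bs S m).r b c ∧ (DPC.Dg S m).Adj a c}
          = (fun j : Fin m => (DPC.rev S a.1, j)) '' Set.univ := by
        ext c
        simp only [Set.mem_setOf_eq, Set.image_univ, Set.mem_range]
        constructor
        · rintro ⟨hB, hAdj⟩
          rw [DPC.Dg_adj] at hAdj
          refine ⟨c.2, Prod.ext ?_ rfl⟩
          show DPC.rev S a.1 = c.1
          rw [hAdj, DPC.rev_rev]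
        · rintro ⟨j, rfl⟩
          constructor
          · rfl
          · rw [DPC.Dg_adj, DPC.rev_rev]
      rw [hset, Set.ncard_image_of_injective _ (fun j₁ j₂ h => congrArg Prod.snd h),
        Set.ncard_univ, Nat.card_eq_fintype_card, Fintype.card_fin]
      omega
end

section
/- Let G be a group, g ∈ G, n ≥ 2 an integer, and let H₁ ≤ H₂ ≤ … ≤ Hₙ be a chain of finite subgroups of G with g² ∈ H₁. Assume that all the indices |Hᵢ : Hᵢ ∩ Hᵢ^g| for 1 ≤ i ≤ n are equal. Then H₁ ∩ Hₙ^g = H₁ ∩ H₁^g if and only if Hᵢ ∩ H_{i+1}^g = Hᵢ ∩ Hᵢ^g for every 1 ≤ i ≤ n−1. -/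
theorem conjSG_mono {G : Type*} [Group G] {H K : Subgroup G} (h : H ≤ K) (g : G) :
    conjSG H g ≤ conjSG K g := fun _ hx => h hx

/-- **Lemma 3.2 (chain lemma, group-theoretic form).**
Let `H 0 ≤ H 1 ≤ ⋯ ≤ H (n-1)` be a chain of finite subgroups of `G` (here `n ≥ 2`),
let `g ∈ G` with `g² ∈ H 0`, and suppose all the indices `|H i : H i ∩ (H i)^g|` are
equal.  Then `H 0 ∩ (H (n-1))^g = H 0 ∩ (H 0)^g` if and only if
`H i ∩ (H (i+1))^g = H i ∩ (H i)^g` for every `i` with `i + 1 < n`. -/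
theorem chain_cover_criterion {G : Type*} [Group G] (n : ℕ) (hn : 2 ≤ n)
    (H : ℕ → Subgroup G) (hfin : ∀ i, i < n → ((H i : Set G)).Finite)
    (hchain : ∀ i, i + 1 < n → H i ≤ H (i + 1))
    (g : G) (hg2 : g ^ 2 ∈ H 0)
    (hval : ∀ i, i < n → (conjSG (H i) g).relIndex (H i) = (conjSG (H 0) g).relIndex (H 0)) :
    H 0 ⊓ conjSG (H (n - 1)) g = H 0 ⊓ conjSG (H 0) g ↔
      ∀ i, i + 1 < n → H i ⊓ conjSG (H (i + 1)) g = H i ⊓ conjSG (H i) g := by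
  -- monotonicity of the chain
  have hle : ∀ i j, i ≤ j → j < n → H i ≤ H j := by
    intro i j hij hjn
    obtain ⟨k, rfl⟩ := Nat.exists_eq_add_of_le hij
    clear hij
    induction k with
    | zero => exact le_refl _
    | succ k ih =>
        exact le_trans (ih (by omega)) (hchain (i + k) (by omega))
  constructor
  · -- hard direction
    intro hglob i hi
    -- all intermediate level-0 intersections collapse
    have hmid : ∀ j, j < n → H 0 ⊓ conjSG (H j) g = H 0 ⊓ conjSG (H 0) g := by
      intro j hj
      refine le_antisymm ?_ (inf_le_inf_left _ (conjSG_mono (hle 0 j (by omega) hj) g))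
      rw [← hglob]
      exact inf_le_inf_left _ (conjSG_mono (hle j (n - 1) (by omega) (by omega)) g)
    refine le_antisymm ?_
      (inf_le_inf_left _ (conjSG_mono (hchain i hi) g))
    intro x hx
    obtain ⟨hxi, hxi1⟩ := hx
    -- set up the counting argument in `H i`
    set s := H 0 with hs
    set t := H i with ht
    set K := conjSG (H i) g with hK
    have hst : s ≤ t := hle 0 i (by omega) (by omega)
    have hfinT : Finite t := (hfin i (by omega)).to_subtype
    have hfinQ : Finite (↥t ⧸ K.subgroupOf t) := Quotient.finite _
    have hfinQs : Finite (↥s ⧸ K.subgroupOf s) :=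
      have : Finite s := Finite.Set.subset _ hst
      Quotient.finite _
    -- cardinalities of the two coset spaces agree
    have hcard : Nat.card (↥s ⧸ K.subgroupOf s) = Nat.card (↥t ⧸ K.subgroupOf t) := by
      have h1 : Nat.card (↥s ⧸ K.subgroupOf s) = K.relIndex s := rfl
      have h2 : Nat.card (↥t ⧸ K.subgroupOf t) = K.relIndex t := rfl
      rw [h1, h2]
      have hKs : K ⊓ s = conjSG (H 0) g ⊓ s := by
        rw [inf_comm, hK, hs, hmid i (by omega), inf_comm]
      calc K.relIndex s = (K ⊓ s).relIndex s := (Subgroup.inf_relIndex_right K s).symm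
        _ = (conjSG (H 0) g ⊓ s).relIndex s := by rw [hKs]
        _ = (conjSG (H 0) g).relIndex (H 0) := Subgroup.inf_relIndex_right _ _
        _ = K.relIndex t := (hval i (by omega)).symm
    -- the natural embedding of coset spaces is bijective
    have hbij : Function.Bijective (Subgroup.quotientSubgroupOfEmbeddingOfLE K hst) :=
      (Nat.bijective_iff_injective_and_card _).mpr
        ⟨(Subgroup.quotientSubgroupOfEmbeddingOfLE K hst).injective, hcard⟩
    obtain ⟨y, hy⟩ := hbij.2 (QuotientGroup.mk (⟨x, hxi⟩ : t))
    obtain ⟨l, rfl⟩ := QuotientGroup.mk_surjective y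
    rw [Subgroup.quotientSubgroupOfEmbeddingOfLE_apply_mk, QuotientGroup.eq] at hy
    -- so `l⁻¹ * x ∈ (H i)^g` for some `l ∈ H 0`
    have hk : (l : G)⁻¹ * x ∈ K := hy
    have hl0 : (l : G) ∈ H 0 := l.2
    -- `l` lies in `H 0 ⊓ (H (i+1))^g = H 0 ⊓ (H 0)^g ≤ (H i)^g`
    have hlconj : (l : G) ∈ conjSG (H (i + 1)) g := by
      have h1 : ((l : G)⁻¹ * x)⁻¹ ∈ conjSG (H (i + 1)) g :=
        (conjSG (H (i + 1)) g).inv_mem (conjSG_mono (hchain i hi) g hk)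
      have h2 : x * ((l : G)⁻¹ * x)⁻¹ = (l : G) := by group
      rw [← h2]
      exact (conjSG (H (i + 1)) g).mul_mem hxi1 h1
    have hl' : (l : G) ∈ H 0 ⊓ conjSG (H 0) g := by
      rw [← hmid (i + 1) hi]
      exact ⟨hl0, hlconj⟩
    have hlK : (l : G) ∈ K := conjSG_mono (hle 0 i (by omega) (by omega)) g hl'.2
    have hxK : x ∈ K := by
      have : (l : G) * ((l : G)⁻¹ * x) = x := by group
      rw [← this]
      exact K.mul_mem hlK hk
    exact ⟨hxi, hxK⟩
  · -- easy direction: compose the steps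
    intro hstep
    have key : ∀ j, j < n → H 0 ⊓ conjSG (H j) g = H 0 ⊓ conjSG (H 0) g := by
      intro j
      induction j with
      | zero => intro _; rfl
      | succ j ih =>
          intro hj
          have hj' : j < n := by omega
          have h0j : H 0 ⊓ H j = H 0 := inf_eq_left.mpr (hle 0 j (by omega) hj')
          calc H 0 ⊓ conjSG (H (j + 1)) g
              = (H 0 ⊓ H j) ⊓ conjSG (H (j + 1)) g := by rw [h0j]
            _ = H 0 ⊓ (H j ⊓ conjSG (H (j + 1)) g) := inf_assoc _ _ _
            _ = H 0 ⊓ (H j ⊓ conjSG (H j) g) := by rw [hstep j hj]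
            _ = (H 0 ⊓ H j) ⊓ conjSG (H j) g := (inf_assoc _ _ _).symm
            _ = H 0 ⊓ conjSG (H j) g := by rw [h0j]
            _ = H 0 ⊓ conjSG (H 0) g := ih hj'
    exact key (n - 1) (by omega)
end

section
/- With the Praeger–Xu setup, let g = g_2 = xy, let H = H_2 = ⟨a_i : 1 ≤ i ≤ r−2⟩⋊⟨y⟩, and let T = ⟨a_0·a_{r−1}, a_1, …, a_{r−2}⟩⋊⟨y⟩, i.e. the set of elements (v, t) with v ∈ M satisfying v_0 = v_{r−1} and t ∈ {1, y}. Then: T is a subgroup of G of order 2p^{r−1} containing H, so |G : T| = rp; T ∩ T^g has order p^{r−2}, so |T : T ∩ T^g| = 2p; M ∩ T ≠ 1; and H ∩ T^g = H ∩ H^g. Consequently the Praeger–Xu graph C(p,r,2) = Cos(G, H, HgH) is a G-symmetric cover of Cos(G, T, TgT) (which is the wreath graph W(r,p)). -/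
open Multiplicative

/-- The natural permutation action of the dihedral group on `ZMod n`:
`r i` acts by `k ↦ k + i` and `sr i` acts by `k ↦ -k - i`. -/
def dihedralPerm (n : ℕ) : DihedralGroup n →* Equiv.Perm (ZMod n) where
  toFun t :=
    match t with
    | .r i => Equiv.addRight i
    | .sr i => (Equiv.neg (ZMod n)).trans (Equiv.addRight (-i))
  map_one' := by
    show Equiv.addRight (0 : ZMod n) = 1
    ext k
    simp
  map_mul' s t := by
    rcases s with i | i <;> rcases t with j | j <;> ext k <;>
      simp [DihedralGroup.r_mul_r, DihedralGroup.r_mul_sr, DihedralGroup.sr_mul_r,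
        DihedralGroup.sr_mul_sr, Equiv.addRight] <;> ring

/-- A permutation of the index type acts on the direct power `ι → A` as a group
automorphism, by permuting coordinates. -/
def permAut {ι A : Type*} [CommGroup A] : Equiv.Perm ι →* MulAut (ι → A) where
  toFun σ :=
    { toFun := fun v => v ∘ σ.symm
      invFun := fun v => v ∘ σ
      left_inv := fun v => by ext k; simp
      right_inv := fun v => by ext k; simp
      map_mul' := fun v w => rfl }
  map_one' := by ext v k; rfl
  map_mul' σ τ := by ext v k; rfl

/-- the group `M ≅ ℤ_p^r` (indices mod `r`, written multiplicatively). -/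
abbrev PXM (r p : ℕ) : Type := ZMod r → Multiplicative (ZMod p)

/-- the action of `T = D_{2r} = ⟨x,y⟩` on `M`, with `a_i ^ x = a_{i+1}` and
`a_i ^ y = a_{r-1-i}`. -/
def PXphi (r p : ℕ) : DihedralGroup r →* MulAut (PXM r p) :=
  permAut.comp (dihedralPerm r)

/-- the group `G = M ⋊ T ≅ ℤ_p^r ⋊ D_{2r}` of the Praeger–Xu setup. -/
abbrev PXG (r p : ℕ) : Type := SemidirectProduct (PXM r p) (DihedralGroup r) (PXphi r p)

/-- the standard generator `a_i` of `M`. -/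
def PXa (r p : ℕ) (i : ZMod r) : PXM r p := fun k => if k = i then ofAdd 1 else 1

/-- the element `x` of `T ≤ G` (rotation: `a_i ^ x = a_{i+1}`). -/
def PXx (r p : ℕ) : PXG r p := SemidirectProduct.inr (DihedralGroup.r 1)

/-- the element `y` of `T ≤ G` (reflection: `a_i ^ y = a_{r-1-i}`). -/
def PXy (r p : ℕ) : PXG r p := SemidirectProduct.inr (DihedralGroup.sr 1)

/-- the subgroup `H_s ≤ G` of the Praeger–Xu setup:
`H_s = ⟨a_i : s/2 ≤ i < r - s/2⟩ ⋊ ⟨y⟩` for `s` even, and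
`H_s = ⟨a_i : (s-1)/2 ≤ i < r - (s+1)/2⟩ ⋊ ⟨xy⟩` for `s` odd. -/
def PXH (r p s : ℕ) : Subgroup (PXG r p) :=
  if s % 2 = 0 then
    Subgroup.closure
      ((fun i : ℕ => SemidirectProduct.inl (PXa r p i)) '' {i : ℕ | s / 2 ≤ i ∧ i < r - s / 2}
        ∪ {PXy r p})
  else
    Subgroup.closure
      ((fun i : ℕ => SemidirectProduct.inl (PXa r p i)) ''
          {i : ℕ | (s - 1) / 2 ≤ i ∧ i < r - (s + 1) / 2}
        ∪ {PXx r p * PXy r p})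

/-- the element `g_s ∈ G` of the Praeger–Xu setup: `g_s = xy` for `s` even and
`g_s = y` for `s` odd. -/
def PXg (r p s : ℕ) : PXG r p :=
  if s % 2 = 0 then PXx r p * PXy r p else PXy r p

/-- the subgroup `T = ⟨a_0 a_{r-1}, a_1, …, a_{r-2}⟩ ⋊ ⟨y⟩` of `G`. -/
def PXT (r p : ℕ) : Subgroup (PXG r p) :=
  Subgroup.closure
    ({SemidirectProduct.inl (PXa r p 0 * PXa r p ((r - 1 : ℕ) : ZMod r))}
      ∪ (fun i : ℕ => SemidirectProduct.inl (PXa r p i)) '' {i : ℕ | 1 ≤ i ∧ i ≤ r - 2}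
      ∪ {PXy r p})


namespace PXaux

open SemidirectProduct DihedralGroup Subgroup

variable {r p : ℕ}

lemma phi_sr_apply (i : ZMod r) (v : PXM r p) (k : ZMod r) :
    PXphi r p (.sr i) v k = v (-k - i) := by
  show v _ = _
  congr 1
  simp [dihedralPerm, Equiv.addRight]
  ring

lemma phi_r_apply (j : ZMod r) (v : PXM r p) (k : ZMod r) :
    PXphi r p (.r j) v k = v (k - j) := by
  show v _ = _
  congr 1
  simp [dihedralPerm, Equiv.addRight, sub_eq_add_neg]

lemma sr_ne_one (i : ZMod r) : DihedralGroup.sr i ≠ 1 := by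
  rw [DihedralGroup.one_def]; exact fun h => by cases h

/-- the subgroup `T` given by its explicit carrier. -/
def Tc (r p : ℕ) : Subgroup (PXG r p) where
  carrier := {z | z.left 0 = z.left (-1 : ZMod r) ∧ (z.right = 1 ∨ z.right = .sr 1)}
  one_mem' := ⟨rfl, Or.inl rfl⟩
  mul_mem' := by
    rintro z w ⟨hz, hz'⟩ ⟨hw, hw'⟩
    constructor
    · show z.left 0 * PXphi r p z.right w.left 0
        = z.left (-1) * PXphi r p z.right w.left (-1)
      rcases hz' with h | h <;> rw [h]
      · simpa using congrArg₂ (· * ·) hz hw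
      · rw [phi_sr_apply, phi_sr_apply, hz]
        norm_num [hw]
    · rcases hz' with h | h <;> rcases hw' with h' | h' <;>
        simp [SemidirectProduct.mul_right, h, h', DihedralGroup.one_def,
          DihedralGroup.sr_mul_r, DihedralGroup.r_mul_sr, DihedralGroup.sr_mul_sr, -DihedralGroup.r_zero]
  inv_mem' := by
    rintro z ⟨hz, hz'⟩
    constructor
    · show PXphi r p z.right⁻¹ z.left⁻¹ 0 = PXphi r p z.right⁻¹ z.left⁻¹ (-1)
      rcases hz' with h | h <;> rw [h]
      · simpa using congrArg Inv.inv hz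
      · show PXphi r p (DihedralGroup.sr 1)⁻¹ z.left⁻¹ 0
          = PXphi r p (DihedralGroup.sr 1)⁻¹ z.left⁻¹ (-1)
        rw [show (DihedralGroup.sr 1 : DihedralGroup r)⁻¹ = DihedralGroup.sr 1 from rfl,
          phi_sr_apply, phi_sr_apply]
        norm_num [hz]
    · rcases hz' with h | h
      · left; simp [SemidirectProduct.inv_right, h]
      · right; rw [SemidirectProduct.inv_right, h]; rfl

lemma mem_Tc {z : PXG r p} :
    z ∈ Tc r p ↔ (z.left 0 = z.left (-1 : ZMod r) ∧ (z.right = 1 ∨ z.right = .sr 1)) :=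
  Iff.rfl


/-- the subgroup `H = H_2` given by its explicit carrier. -/
def Hc (r p : ℕ) : Subgroup (PXG r p) where
  carrier := {z | z.left 0 = 1 ∧ z.left (-1 : ZMod r) = 1 ∧
      (z.right = 1 ∨ z.right = .sr 1)}
  one_mem' := ⟨rfl, rfl, Or.inl rfl⟩
  mul_mem' := by
    rintro z w ⟨hz0, hz1, hz'⟩ ⟨hw0, hw1, hw'⟩
    refine ⟨?_, ?_, ?_⟩
    · show z.left 0 * PXphi r p z.right w.left 0 = 1
      rcases hz' with h | h <;> rw [h]
      · simp [hz0, hw0]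
      · rw [phi_sr_apply, hz0]; norm_num [hw1]
    · show z.left (-1) * PXphi r p z.right w.left (-1) = 1
      rcases hz' with h | h <;> rw [h]
      · simp [hz1, hw1]
      · rw [phi_sr_apply, hz1]; norm_num [hw0]
    · rcases hz' with h | h <;> rcases hw' with h' | h' <;>
        simp [SemidirectProduct.mul_right, h, h', DihedralGroup.one_def,
          DihedralGroup.sr_mul_r, DihedralGroup.r_mul_sr, DihedralGroup.sr_mul_sr, -DihedralGroup.r_zero]
  inv_mem' := by
    rintro z ⟨hz0, hz1, hz'⟩
    refine ⟨?_, ?_, ?_⟩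
    · show PXphi r p z.right⁻¹ z.left⁻¹ 0 = 1
      rcases hz' with h | h <;> rw [h]
      · simp [hz0]
      · show PXphi r p (DihedralGroup.sr 1) z.left⁻¹ 0 = 1
        rw [phi_sr_apply]; norm_num [hz1]
    · show PXphi r p z.right⁻¹ z.left⁻¹ (-1) = 1
      rcases hz' with h | h <;> rw [h]
      · simp [hz1]
      · show PXphi r p (DihedralGroup.sr 1) z.left⁻¹ (-1) = 1
        rw [phi_sr_apply]; norm_num [hz0]
    · rcases hz' with h | h
      · left; simp [SemidirectProduct.inv_right, h]
      · right; rw [SemidirectProduct.inv_right, h]; rfl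

lemma mem_Hc {z : PXG r p} :
    z ∈ Hc r p ↔ (z.left 0 = 1 ∧ z.left (-1 : ZMod r) = 1 ∧
      (z.right = 1 ∨ z.right = .sr 1)) := Iff.rfl

lemma g2_eq : PXg r p 2 = SemidirectProduct.inr (DihedralGroup.sr 0) := by
  show PXx r p * PXy r p = _
  rw [PXx, PXy, ← map_mul]
  congr 1
  rw [DihedralGroup.r_mul_sr]
  norm_num

lemma conj_g2_left (z : PXG r p) :
    ((MulAut.conj (PXg r p 2)) z).left = PXphi r p (.sr 0) z.left := by
  rw [g2_eq]
  show (SemidirectProduct.inr (DihedralGroup.sr 0) * z *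
    (SemidirectProduct.inr (DihedralGroup.sr 0))⁻¹).left = _
  rw [← map_inv]
  simp [SemidirectProduct.mul_left]

lemma conj_g2_right (z : PXG r p) :
    ((MulAut.conj (PXg r p 2)) z).right = DihedralGroup.sr 0 * z.right * DihedralGroup.sr 0 := by
  rw [g2_eq]
  show (SemidirectProduct.inr (DihedralGroup.sr 0) * z *
    (SemidirectProduct.inr (DihedralGroup.sr 0))⁻¹).right = _
  rw [← map_inv]
  simp [SemidirectProduct.mul_right]

lemma right_conj_iff {t : DihedralGroup r} :
    (DihedralGroup.sr 0 * t * DihedralGroup.sr 0 = 1 ∨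
     DihedralGroup.sr 0 * t * DihedralGroup.sr 0 = .sr 1) ↔
    (t = 1 ∨ t = .sr (-1)) := by
  rcases t with j | j <;>
    simp [DihedralGroup.one_def, DihedralGroup.sr_mul_r, DihedralGroup.r_mul_sr,
      DihedralGroup.sr_mul_sr, DihedralGroup.sr_mul_r, neg_eq_iff_eq_neg, eq_comm,
      DihedralGroup.r_mul_r, -DihedralGroup.r_zero]

lemma mem_conj_Tc {z : PXG r p} :
    z ∈ conjSG (Tc r p) (PXg r p 2) ↔
      (z.left 0 = z.left (1 : ZMod r) ∧ (z.right = 1 ∨ z.right = .sr (-1))) := by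
  rw [conjSG, Subgroup.mem_comap]
  show (MulAut.conj (PXg r p 2)) z ∈ Tc r p ↔ _
  rw [mem_Tc, conj_g2_left, conj_g2_right, phi_sr_apply, phi_sr_apply, right_conj_iff]
  norm_num

lemma mem_conj_Hc {z : PXG r p} :
    z ∈ conjSG (Hc r p) (PXg r p 2) ↔
      (z.left 0 = 1 ∧ z.left (1 : ZMod r) = 1 ∧ (z.right = 1 ∨ z.right = .sr (-1))) := by
  rw [conjSG, Subgroup.mem_comap]
  show (MulAut.conj (PXg r p 2)) z ∈ Hc r p ↔ _
  rw [mem_Hc, conj_g2_left, conj_g2_right, phi_sr_apply, phi_sr_apply, right_conj_iff]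
  norm_num


section casts
variable (hr : 3 ≤ r)
include hr

lemma cast_inj_lt {i j : ℕ} (hi : i < r) (hj : j < r) (h : (i : ZMod r) = j) : i = j := by
  rw [← ZMod.val_cast_of_lt hi, ← ZMod.val_cast_of_lt hj, h]

lemma cast_rsub1 : ((r - 1 : ℕ) : ZMod r) = -1 := by
  haveI : NeZero r := ⟨by omega⟩
  rw [Nat.cast_sub (by omega), ZMod.natCast_self, Nat.cast_one, zero_sub]

lemma zr0 : (0 : ZMod r) ≠ -1 := by
  rw [← cast_rsub1 hr, ← Nat.cast_zero]
  intro h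
  have := cast_inj_lt hr (by omega) (by omega) h
  omega

lemma zr1 : (1 : ZMod r) ≠ -1 := by
  rw [← cast_rsub1 hr, ← Nat.cast_one]
  intro h
  have := cast_inj_lt hr (by omega) (by omega) h
  omega

lemma zr01 : (0 : ZMod r) ≠ 1 := by
  rw [← Nat.cast_zero, ← Nat.cast_one]
  intro h
  have := cast_inj_lt hr (by omega) (by omega) h
  omega

lemma cast_mid_ne_zero {i : ℕ} (h1 : 1 ≤ i) (h2 : i < r - 1) : ((i : ℕ) : ZMod r) ≠ 0 := by
  rw [← Nat.cast_zero]
  intro h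
  have := cast_inj_lt hr (by omega) (by omega) h
  omega

lemma cast_mid_ne_neg_one {i : ℕ} (h1 : 1 ≤ i) (h2 : i < r - 1) : ((i : ℕ) : ZMod r) ≠ -1 := by
  rw [← cast_rsub1 hr]
  intro h
  have := cast_inj_lt hr (by omega) (by omega) h
  omega

lemma sr_ne_sr : (DihedralGroup.sr 1 : DihedralGroup r) ≠ .sr (-1) := by
  intro h
  rw [DihedralGroup.sr.injEq] at h
  exact zr1 hr h

end casts

lemma pxa_pow [NeZero p] (i k : ZMod r) (n : ℕ) :
    (PXa r p i ^ n) k = if k = i then ofAdd ((n : ZMod p)) else 1 := by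
  rw [Pi.pow_apply, PXa]
  split
  · rw [← ofAdd_nsmul]
    norm_num
  · exact one_pow n

lemma prod_formula [NeZero r] [NeZero p] (v : PXM r p) :
    v = ∏ i ∈ Finset.range r, PXa r p (i : ZMod r) ^ (toAdd (v (i : ZMod r))).val := by
  funext k
  rw [Finset.prod_apply]
  rw [Finset.prod_eq_single k.val]
  · rw [pxa_pow, if_pos, ZMod.natCast_val, ZMod.cast_id, ZMod.natCast_val, ZMod.cast_id,
      ofAdd_toAdd]
    rw [ZMod.natCast_val, ZMod.cast_id]
  · intro i hi hne
    rw [pxa_pow, if_neg]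
    intro h
    apply hne
    rw [h, ZMod.val_cast_of_lt (Finset.mem_range.1 hi)]
  · intro h
    exact absurd (Finset.mem_range.2 (ZMod.val_lt k)) h


lemma range_split (hr : 3 ≤ r) :
    Finset.range r = insert 0 (insert (r-1) (Finset.Ico 1 (r-1))) := by
  ext m
  simp only [Finset.mem_range, Finset.mem_insert, Finset.mem_Ico]
  omega

lemma pxa_apply (i k : ZMod r) :
    PXa r p i k = if k = i then ofAdd (1 : ZMod p) else 1 := rfl

lemma inl_mem_T [NeZero p] (hr : 3 ≤ r) (v : PXM r p) (hv : v 0 = v (-1 : ZMod r)) :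
    SemidirectProduct.inl v ∈ PXT r p := by
  haveI : NeZero r := ⟨by omega⟩
  show v ∈ Subgroup.comap (SemidirectProduct.inl : PXM r p →* PXG r p) (PXT r p)
  rw [prod_formula v, range_split hr, Finset.prod_insert (by simp; omega),
    Finset.prod_insert (by simp), ← mul_assoc]
  have hcast : ((r - 1 : ℕ) : ZMod r) = -1 := cast_rsub1 hr
  rw [Nat.cast_zero, hcast, ← hv, ← mul_pow]
  refine mul_mem (pow_mem ?_ _) (prod_mem fun i hi => pow_mem ?_ _)
  · rw [Subgroup.mem_comap, ← hcast]
    exact Subgroup.subset_closure (by left; left; rfl)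
  · rw [Subgroup.mem_comap]
    refine Subgroup.subset_closure ?_
    left; right
    exact ⟨i, ⟨(Finset.mem_Ico.1 hi).1, by have := (Finset.mem_Ico.1 hi).2; omega⟩, rfl⟩

lemma H2_def : PXH r p 2 = Subgroup.closure
    ((fun i : ℕ => SemidirectProduct.inl (PXa r p i)) '' {i : ℕ | 1 ≤ i ∧ i < r - 1}
      ∪ {PXy r p}) := by
  rw [PXH]
  norm_num

lemma inl_mem_H [NeZero p] (hr : 3 ≤ r) (v : PXM r p) (hv0 : v 0 = 1)
    (hv1 : v (-1 : ZMod r) = 1) : SemidirectProduct.inl v ∈ PXH r p 2 := by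
  haveI : NeZero r := ⟨by omega⟩
  show v ∈ Subgroup.comap (SemidirectProduct.inl : PXM r p →* PXG r p) (PXH r p 2)
  rw [prod_formula v, range_split hr, Finset.prod_insert (by simp; omega),
    Finset.prod_insert (by simp)]
  have hcast : ((r - 1 : ℕ) : ZMod r) = -1 := cast_rsub1 hr
  rw [Nat.cast_zero, hcast, hv0, hv1]
  simp only [toAdd_one, ZMod.val_zero, pow_zero, one_mul]
  refine prod_mem fun i hi => pow_mem ?_ _
  rw [Subgroup.mem_comap, H2_def]
  refine Subgroup.subset_closure ?_
  left
  exact ⟨i, ⟨(Finset.mem_Ico.1 hi).1, (Finset.mem_Ico.1 hi).2⟩, rfl⟩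

lemma inr_one_or_y_mem {S : Subgroup (PXG r p)} (hy : PXy r p ∈ S) {t : DihedralGroup r}
    (ht : t = 1 ∨ t = .sr 1) : SemidirectProduct.inr t ∈ S := by
  rcases ht with h | h <;> rw [h]
  · rw [map_one]; exact one_mem S
  · exact hy

lemma y_mem_T : PXy r p ∈ PXT r p := Subgroup.subset_closure (by right; rfl)

lemma y_mem_H : PXy r p ∈ PXH r p 2 := by
  rw [H2_def]; exact Subgroup.subset_closure (by right; rfl)

lemma T_eq [NeZero p] (hr : 3 ≤ r) : PXT r p = Tc r p := by
  haveI : NeZero r := ⟨by omega⟩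
  apply le_antisymm
  · rw [PXT, Subgroup.closure_le]
    rintro z (( h | ⟨i, ⟨hi1, hi2⟩, rfl⟩ ) | h)
    · rw [Set.mem_singleton_iff] at h
      subst h
      refine ⟨?_, Or.inl rfl⟩
      show (PXa r p 0 * PXa r p _) 0 = (PXa r p 0 * PXa r p _) (-1)
      rw [cast_rsub1 hr, Pi.mul_apply, Pi.mul_apply, pxa_apply, pxa_apply, pxa_apply,
        pxa_apply, if_pos rfl, if_pos rfl, if_neg (zr0 hr), if_neg (Ne.symm (zr0 hr)),
        mul_one, one_mul]
    · refine ⟨?_, Or.inl rfl⟩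
      show PXa r p i 0 = PXa r p i (-1)
      rw [pxa_apply, pxa_apply, if_neg (Ne.symm (cast_mid_ne_zero hr hi1 (by omega))),
        if_neg (Ne.symm (cast_mid_ne_neg_one hr hi1 (by omega)))]
    · rw [Set.mem_singleton_iff] at h
      subst h
      exact ⟨rfl, Or.inr rfl⟩
  · intro z hz
    rw [← SemidirectProduct.inl_left_mul_inr_right z]
    exact mul_mem (inl_mem_T hr z.left hz.1) (inr_one_or_y_mem y_mem_T hz.2)

lemma H_eq [NeZero p] (hr : 3 ≤ r) : PXH r p 2 = Hc r p := by
  haveI : NeZero r := ⟨by omega⟩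
  apply le_antisymm
  · rw [H2_def, Subgroup.closure_le]
    rintro z (⟨i, ⟨hi1, hi2⟩, rfl⟩ | h)
    · refine ⟨?_, ?_, Or.inl rfl⟩
      · show PXa r p i 0 = 1
        rw [pxa_apply, if_neg (Ne.symm (cast_mid_ne_zero hr hi1 hi2))]
      · show PXa r p i (-1) = 1
        rw [pxa_apply, if_neg (Ne.symm (cast_mid_ne_neg_one hr hi1 hi2))]
    · rw [Set.mem_singleton_iff] at h
      subst h
      exact ⟨rfl, rfl, Or.inr rfl⟩
  · intro z hz
    rw [← SemidirectProduct.inl_left_mul_inr_right z]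
    exact mul_mem (inl_mem_H hr z.left hz.1 hz.2.1) (inr_one_or_y_mem y_mem_H hz.2.2)


section cards

lemma card_two_subtype {α : Type*} {a b : α} (h : a ≠ b) :
    Nat.card {x : α // x = a ∨ x = b} = 2 := by
  rw [Nat.card_eq_two_iff]
  refine ⟨⟨a, Or.inl rfl⟩, ⟨b, Or.inr rfl⟩, by simp [h], ?_⟩
  ext x
  rcases x with ⟨x, rfl | rfl⟩
  · simp
  · simp

/-- values on `D` pinned to the value at `0 ∉ D`. -/
lemma cardA [NeZero r] [NeZero p] (D : Finset (ZMod r)) (h0 : (0 : ZMod r) ∉ D) :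
    Nat.card {v : PXM r p // ∀ d ∈ D, v d = v 0} = p ^ (r - D.card) := by
  have e : {v : PXM r p // ∀ d ∈ D, v d = v 0} ≃ ({k : ZMod r // k ∉ D} → Multiplicative (ZMod p)) :=
    { toFun := fun v k => v.1 k.1
      invFun := fun f => ⟨fun k => if h : k ∈ D then f ⟨0, h0⟩ else f ⟨k, h⟩,
        fun d hd => by simp [hd, h0]⟩
      left_inv := fun v => by
        ext k
        by_cases hk : k ∈ D
        · simp only [dif_pos hk]
          exact (v.2 k hk).symm
        · simp only [dif_neg hk]
      right_inv := fun f => by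
        ext k
        simp only [dif_neg k.2] }
  rw [Nat.card_congr e, Nat.card_fun, Nat.card_congr Multiplicative.toAdd,
    Nat.card_eq_fintype_card, Nat.card_eq_fintype_card, ZMod.card,
    Fintype.card_subtype_compl, ZMod.card, Fintype.card_coe]

/-- values on `D` pinned to `1`. -/
lemma cardB [NeZero r] [NeZero p] (D : Finset (ZMod r)) :
    Nat.card {v : PXM r p // ∀ d ∈ D, v d = 1} = p ^ (r - D.card) := by
  have e : {v : PXM r p // ∀ d ∈ D, v d = 1} ≃ ({k : ZMod r // k ∉ D} → Multiplicative (ZMod p)) :=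
    { toFun := fun v k => v.1 k.1
      invFun := fun f => ⟨fun k => if h : k ∈ D then 1 else f ⟨k, h⟩,
        fun d hd => by simp [hd]⟩
      left_inv := fun v => by
        ext k
        by_cases hk : k ∈ D
        · simp only [dif_pos hk]
          exact (v.2 k hk).symm
        · simp only [dif_neg hk]
      right_inv := fun f => by
        ext k
        simp only [dif_neg k.2] }
  rw [Nat.card_congr e, Nat.card_fun, Nat.card_congr Multiplicative.toAdd,
    Nat.card_eq_fintype_card, Nat.card_eq_fintype_card, ZMod.card,
    Fintype.card_subtype_compl, ZMod.card, Fintype.card_coe]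

lemma cardTc [NeZero p] (hr : 3 ≤ r) : Nat.card (Tc r p) = 2 * p ^ (r - 1) := by
  haveI : NeZero r := ⟨by omega⟩
  have e : ↥(Tc r p) ≃
      ({v : PXM r p // ∀ d ∈ ({-1} : Finset (ZMod r)), v d = v 0} ×
       {t : DihedralGroup r // t = 1 ∨ t = .sr 1}) :=
    { toFun := fun z => (⟨z.1.left, fun d hd => by
        rw [Finset.mem_singleton] at hd
        rw [hd]
        exact z.2.1.symm⟩, ⟨z.1.right, z.2.2⟩)
      invFun := fun w => ⟨⟨w.1.1, w.2.1⟩, (w.1.2 (-1) (by simp)).symm, w.2.2⟩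
      left_inv := fun z => rfl
      right_inv := fun w => rfl }
  rw [Nat.card_congr e, Nat.card_prod, cardA _ (by simpa using (zr0 hr)),
    card_two_subtype (fun h => sr_ne_one (r := r) 1 h.symm), Finset.card_singleton, mul_comm]

lemma cardTinf [NeZero p] (hr : 3 ≤ r) :
    Nat.card ↥(Tc r p ⊓ conjSG (Tc r p) (PXg r p 2)) = p ^ (r - 2) := by
  haveI : NeZero r := ⟨by omega⟩
  have hr1 : (-1 : ZMod r) ≠ 1 := fun h => zr1 hr h.symm
  have e : ↥(Tc r p ⊓ conjSG (Tc r p) (PXg r p 2)) ≃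
      {v : PXM r p // ∀ d ∈ ({-1, 1} : Finset (ZMod r)), v d = v 0} :=
    { toFun := fun z => ⟨z.1.left, fun d hd => by
        have h1 := (Subgroup.mem_inf.1 z.2).1.1
        have h2 := (mem_conj_Tc.1 (Subgroup.mem_inf.1 z.2).2).1
        rcases Finset.mem_insert.1 hd with h | h
        · rw [h]; exact h1.symm
        · rw [Finset.mem_singleton] at h
          rw [h]; exact h2.symm⟩
      invFun := fun w => ⟨⟨w.1, 1⟩, Subgroup.mem_inf.2
        ⟨⟨(w.2 (-1) (by simp)).symm, Or.inl rfl⟩,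
         mem_conj_Tc.2 ⟨(w.2 1 (by simp)).symm, Or.inl rfl⟩⟩⟩
      left_inv := fun z => by
        have h1 := (Subgroup.mem_inf.1 z.2).1.2
        have h2 := (mem_conj_Tc.1 (Subgroup.mem_inf.1 z.2).2).2
        have ht : z.1.right = 1 := by
          rcases h1 with h | h
          · exact h
          · rcases h2 with h' | h'
            · exact h'
            · exact absurd (h ▸ h') (by simpa using sr_ne_sr hr)
        apply Subtype.ext
        ext
        · rfl
        · exact ht.symm
      right_inv := fun w => rfl }
  rw [Nat.card_congr e, cardA _ (by simp [zr0 hr, zr01 hr]),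
    Finset.card_pair hr1]

lemma cardHc [NeZero p] (hr : 3 ≤ r) : Nat.card (Hc r p) = 2 * p ^ (r - 2) := by
  haveI : NeZero r := ⟨by omega⟩
  have e : ↥(Hc r p) ≃
      ({v : PXM r p // ∀ d ∈ ({0, -1} : Finset (ZMod r)), v d = 1} ×
       {t : DihedralGroup r // t = 1 ∨ t = .sr 1}) :=
    { toFun := fun z => (⟨z.1.left, fun d hd => by
        rcases Finset.mem_insert.1 hd with h | h
        · rw [h]; exact z.2.1
        · rw [Finset.mem_singleton] at h
          rw [h]; exact z.2.2.1⟩, ⟨z.1.right, z.2.2.2⟩)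
      invFun := fun w => ⟨⟨w.1.1, w.2.1⟩, w.1.2 0 (by simp), w.1.2 (-1) (by simp), w.2.2⟩
      left_inv := fun z => rfl
      right_inv := fun w => rfl }
  rw [Nat.card_congr e, Nat.card_prod, cardB,
    card_two_subtype (fun h => sr_ne_one (r := r) 1 h.symm), Finset.card_pair (zr0 hr), mul_comm]

lemma cardHinf [NeZero p] (hr : 3 ≤ r) :
    Nat.card ↥(Hc r p ⊓ conjSG (Hc r p) (PXg r p 2)) = p ^ (r - 3) := by
  haveI : NeZero r := ⟨by omega⟩
  have e : ↥(Hc r p ⊓ conjSG (Hc r p) (PXg r p 2)) ≃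
      {v : PXM r p // ∀ d ∈ ({0, -1, 1} : Finset (ZMod r)), v d = 1} :=
    { toFun := fun z => ⟨z.1.left, fun d hd => by
        have h1 := (Subgroup.mem_inf.1 z.2).1
        have h2 := mem_conj_Hc.1 (Subgroup.mem_inf.1 z.2).2
        rcases Finset.mem_insert.1 hd with h | h
        · rw [h]; exact h1.1
        rcases Finset.mem_insert.1 h with h' | h'
        · rw [h']; exact h1.2.1
        · rw [Finset.mem_singleton] at h'
          rw [h']; exact h2.2.1⟩
      invFun := fun w => ⟨⟨w.1, 1⟩, Subgroup.mem_inf.2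
        ⟨⟨w.2 0 (by simp), w.2 (-1) (by simp), Or.inl rfl⟩,
         mem_conj_Hc.2 ⟨w.2 0 (by simp), w.2 1 (by simp), Or.inl rfl⟩⟩⟩
      left_inv := fun z => by
        have h1 := (Subgroup.mem_inf.1 z.2).1.2.2
        have h2 := (mem_conj_Hc.1 (Subgroup.mem_inf.1 z.2).2).2.2
        have ht : z.1.right = 1 := by
          rcases h1 with h | h
          · exact h
          · rcases h2 with h' | h'
            · exact h'
            · exact absurd (h ▸ h') (by simpa using sr_ne_sr hr)
        apply Subtype.ext
        ext
        · rfl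
        · exact ht.symm
      right_inv := fun w => rfl }
  have hcard : ({0, -1, 1} : Finset (ZMod r)).card = 3 := by
    rw [Finset.card_insert_of_notMem (by simp [zr0 hr, zr01 hr]),
      Finset.card_pair (fun h => zr1 hr h.symm)]
  rw [Nat.card_congr e, cardB, hcard]

lemma card_G [NeZero p] (hr : 3 ≤ r) : Nat.card (PXG r p) = 2 * r * p ^ r := by
  haveI : NeZero r := ⟨by omega⟩
  have e : PXG r p ≃ (PXM r p × DihedralGroup r) :=
    ⟨fun z => (z.left, z.right), fun w => ⟨w.1, w.2⟩, fun z => rfl, fun w => rfl⟩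
  rw [Nat.card_congr e, Nat.card_prod, Nat.card_fun, Nat.card_congr Multiplicative.toAdd,
    Nat.card_eq_fintype_card, Nat.card_eq_fintype_card, Nat.card_eq_fintype_card,
    ZMod.card, ZMod.card, DihedralGroup.card]
  ring

lemma relindex_helper {Γ : Type*} [Group Γ] (K H : Subgroup Γ) :
    Nat.card ↥(K ⊓ H) * K.relIndex H = Nat.card H := by
  rw [← Subgroup.inf_relIndex_right K H, Subgroup.relIndex,
    show Nat.card ↥(K ⊓ H) = Nat.card ((K ⊓ H).subgroupOf H) from
      (Nat.card_congr (Subgroup.subgroupOfEquivOfLe inf_le_right).toEquiv).symm]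
  exact Subgroup.card_mul_index _

end cards

end PXaux

/-- **Theorem 4.2(c).**  For a prime `p` and `r ≥ 3`, with `g = g_2 = xy` and
`H = H_2 = ⟨a_1, …, a_{r-2}⟩ ⋊ ⟨y⟩`, the subgroup
`T = ⟨a_0 a_{r-1}, a_1, …, a_{r-2}⟩ ⋊ ⟨y⟩` — concretely, the set of elements `(v, t)`
with `v_0 = v_{r-1}` and `t ∈ {1, y}` — satisfies:  `H ≤ T`, `|T| = 2 p^{r-1}` (so
`|G : T| = r p`), `|T ∩ T^g| = p^{r-2}` (so `|T : T ∩ T^g| = 2p`), `M ∩ T ≠ 1`, and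
`H ∩ T^g = H ∩ H^g`.  By the criterion of Theorem 1.2 (the valencies being equal),
this says exactly that the Praeger–Xu graph `C(p,r,2) = Cos(G, H, HgH)` is a
`G`-symmetric cover of `Cos(G, T, TgT)`, the wreath graph `W(r,p)`. -/
theorem praeger_xu_cover (p r : ℕ) (hp : p.Prime) (hr : 3 ≤ r) :
    (∀ z : PXG r p, z ∈ PXT r p ↔
      (z.left 0 = z.left ((r - 1 : ℕ) : ZMod r) ∧
        (z.right = 1 ∨ z.right = DihedralGroup.sr 1))) ∧
    PXH r p 2 ≤ PXT r p ∧
    Nat.card (PXT r p) = 2 * p ^ (r - 1) ∧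
    (PXT r p).index = r * p ∧
    Nat.card (PXT r p ⊓ conjSG (PXT r p) (PXg r p 2) : Subgroup (PXG r p)) = p ^ (r - 2) ∧
    (conjSG (PXT r p) (PXg r p 2)).relIndex (PXT r p) = 2 * p ∧
    (conjSG (PXH r p 2) (PXg r p 2)).relIndex (PXH r p 2) = 2 * p ∧
    (SemidirectProduct.inl : PXM r p →* PXG r p).range ⊓ PXT r p ≠ ⊥ ∧
    PXH r p 2 ⊓ conjSG (PXT r p) (PXg r p 2) =
      PXH r p 2 ⊓ conjSG (PXH r p 2) (PXg r p 2) := by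
  haveI : NeZero r := ⟨by omega⟩
  haveI : NeZero p := ⟨hp.ne_zero⟩
  have hrc := PXaux.cast_rsub1 (r := r) hr
  have hTeq := PXaux.T_eq (p := p) hr
  have hHeq := PXaux.H_eq (p := p) hr
  have hcT := PXaux.cardTc (p := p) hr
  have hcTi := PXaux.cardTinf (p := p) hr
  have hcH := PXaux.cardHc (p := p) hr
  have hcHi := PXaux.cardHinf (p := p) hr
  refine ⟨?_, ?_, ?_, ?_, ?_, ?_, ?_, ?_, ?_⟩
  · intro z
    rw [hTeq, hrc]
    exact PXaux.mem_Tc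
  · rw [hTeq, hHeq]
    intro z hz
    exact ⟨by rw [hz.1, hz.2.1], hz.2.2⟩
  · rw [hTeq]; exact hcT
  · rw [hTeq]
    have h1 := Subgroup.card_mul_index (PXT r p)
    rw [hTeq, hcT, PXaux.card_G hr] at h1
    have hpow : p ^ (r - 1) * p = p ^ r := by
      rw [← pow_succ]
      congr 1
      omega
    have h2 : 2 * p ^ (r - 1) * (r * p) = 2 * r * p ^ r := by
      calc 2 * p ^ (r - 1) * (r * p) = 2 * r * (p ^ (r - 1) * p) := by ring
        _ = 2 * r * p ^ r := by rw [hpow]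
    have hpos : 0 < 2 * p ^ (r - 1) := by
      have := hp.pos
      positivity
    exact Nat.eq_of_mul_eq_mul_left hpos (h1.trans h2.symm)
  · rw [hTeq]; exact hcTi
  · rw [hTeq]
    have h1 := PXaux.relindex_helper (conjSG (PXaux.Tc r p) (PXg r p 2)) (PXaux.Tc r p)
    rw [inf_comm, hcTi, hcT] at h1
    have hpow : p ^ (r - 2) * p = p ^ (r - 1) := by
      rw [← pow_succ]
      congr 1
      omega
    have h2 : p ^ (r - 2) * (2 * p) = 2 * p ^ (r - 1) := by
      calc p ^ (r - 2) * (2 * p) = 2 * (p ^ (r - 2) * p) := by ring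
        _ = 2 * p ^ (r - 1) := by rw [hpow]
    have hpos : 0 < p ^ (r - 2) := Nat.pow_pos hp.pos
    exact Nat.eq_of_mul_eq_mul_left hpos (h1.trans h2.symm)
  · rw [hHeq]
    have h1 := PXaux.relindex_helper (conjSG (PXaux.Hc r p) (PXg r p 2)) (PXaux.Hc r p)
    rw [inf_comm, hcHi, hcH] at h1
    have hpow : p ^ (r - 3) * p = p ^ (r - 2) := by
      rw [← pow_succ]
      congr 1
      omega
    have h2 : p ^ (r - 3) * (2 * p) = 2 * p ^ (r - 2) := by
      calc p ^ (r - 3) * (2 * p) = 2 * (p ^ (r - 3) * p) := by ring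
        _ = 2 * p ^ (r - 2) := by rw [hpow]
    have hpos : 0 < p ^ (r - 3) := Nat.pow_pos hp.pos
    exact Nat.eq_of_mul_eq_mul_left hpos (h1.trans h2.symm)
  · intro hbot
    have hmem : SemidirectProduct.inl (PXa r p 1) ∈
        (SemidirectProduct.inl : PXM r p →* PXG r p).range ⊓ PXT r p := by
      refine ⟨⟨_, rfl⟩, ?_⟩
      rw [hTeq]
      refine ⟨?_, Or.inl rfl⟩
      show PXa r p 1 0 = PXa r p 1 (-1)
      rw [PXaux.pxa_apply, PXaux.pxa_apply, if_neg (PXaux.zr01 hr),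
        if_neg (fun h => PXaux.zr1 hr h.symm)]
    rw [hbot] at hmem
    have h1 : SemidirectProduct.inl (PXa r p 1) = (1 : PXG r p) := Subgroup.mem_bot.1 hmem
    have h2 : PXa r p 1 = 1 := by
      have := congrArg SemidirectProduct.left h1
      simpa using this
    have h3 : PXa r p 1 1 = 1 := congrFun h2 1
    rw [PXaux.pxa_apply, if_pos rfl] at h3
    have h4 : (1 : ZMod p) = 0 := by
      have := congrArg Multiplicative.toAdd h3
      simpa using this
    haveI : Fact (1 < p) := ⟨hp.one_lt⟩
    have h5 := congrArg ZMod.val h4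
    rw [ZMod.val_one, ZMod.val_zero] at h5
    exact one_ne_zero h5
  · rw [hTeq, hHeq]
    ext z
    simp only [Subgroup.mem_inf, PXaux.mem_Hc, PXaux.mem_conj_Tc, PXaux.mem_conj_Hc]
    constructor
    · rintro ⟨⟨h0, h1, ht⟩, he, ht'⟩
      exact ⟨⟨h0, h1, ht⟩, h0, by rw [← he, h0], ht'⟩
    · rintro ⟨⟨h0, h1, ht⟩, _, h1', ht'⟩
      exact ⟨⟨h0, h1, ht⟩, by rw [h0, h1'], ht'⟩
end

section
/- Let Σ be a finite connected simple graph that is regular of valency 4, let G ≤ Aut(Σ) be arc-transitive on Σ, and let (ω, ω') be an ordered pair of adjacent vertices. Assume the vertex stabilizer G_ω is a (finite) 2-group. Then either (i) the image of G_ω in the symmetric group on the neighbour set Σ(ω) is isomorphic to the dihedral group of order 8, and the image of the arc stabilizer G_{ωω'} = G_ω ∩ G_{ω'} in the symmetric group on Σ(ω) has order 2; or (ii) G_ω is isomorphic to Z₂ × Z₂ or to Z₄. -/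
open Equiv Pointwise

private def d4f' : DihedralGroup 4 → Equiv.Perm (Fin 4)
  | .r i => (finRotate 4) ^ i.val
  | .sr i => Equiv.swap 1 3 * (finRotate 4) ^ i.val

private lemma d4f'_mul : ∀ x y, d4f' (x * y) = d4f' x * d4f' y := by decide

private lemma d4f'_inj : Function.Injective d4f' := by
  intro x y h; revert h; revert x y; decide

private def d4hom' : DihedralGroup 4 →* Equiv.Perm (Fin 4) := MonoidHom.mk' d4f' d4f'_mul

private lemma card_d4range' : Nat.card d4hom'.range = 8 := by
  rw [← Nat.card_congr (MonoidHom.ofInjective (f := d4hom') d4f'_inj).toEquiv]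
  simp [Nat.card_eq_fintype_card, DihedralGroup.card]

private def permMulCongr' {α β : Type*} (e : α ≃ β) : Perm α ≃* Perm β :=
  { e.permCongr with map_mul' := fun f g => by ext x; simp [Equiv.permCongr] }

private lemma sylow_mulEquiv' {K : Type*} [Group K] [Finite K] {p : ℕ} [Fact p.Prime]
    {H₁ H₂ : Subgroup K} (h₁ : Nat.card H₁ = p ^ (Nat.card K).factorization p)
    (h₂ : Nat.card H₂ = p ^ (Nat.card K).factorization p) : Nonempty (H₁ ≃* H₂) := by
  obtain ⟨g, hg⟩ := MulAction.exists_smul_eq K (Sylow.ofCard H₁ h₁) (Sylow.ofCard H₂ h₂)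
  have h : (MulAut.conj g • H₁ : Subgroup K) = H₂ := by
    have := congrArg (Sylow.toSubgroup) hg
    rwa [Sylow.smul_def, Sylow.pointwise_smul_def, Sylow.coe_ofCard, Sylow.coe_ofCard] at this
  exact ⟨(Subgroup.equivSMul (MulAut.conj g) H₁).trans (MulEquiv.subgroupCongr h)⟩

private lemma fac24 : (Nat.factorization 24) 2 = 3 := by
  have h : (24:ℕ) = 2 ^ 3 * 3 := by norm_num
  rw [h, Nat.factorization_mul (by norm_num) (by norm_num)]
  rw [Nat.Prime.factorization_pow (by norm_num : Nat.Prime 2)]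
  simp [Nat.factorization_eq_zero_of_not_dvd]

private lemma subgroup_card_eight_perm' {A : Type*} [Finite A] (hA : Nat.card A = 4)
    (H : Subgroup (Equiv.Perm A)) (hH : Nat.card H = 8) :
    Nonempty (H ≃* DihedralGroup 4) := by
  classical
  haveI : Fact (Nat.Prime 2) := ⟨Nat.prime_two⟩
  let e := Finite.equivFinOfCardEq hA
  let μ : Perm (Fin 4) ≃* Perm A := permMulCongr' e.symm
  let H₂ := Subgroup.map μ.toMonoidHom d4hom'.range
  have hinj : Function.Injective μ.toMonoidHom := μ.injective
  have hH₂ : Nat.card H₂ = 8 := by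
    rw [← card_d4range']
    exact (Nat.card_congr (Subgroup.equivMapOfInjective _ _ hinj).toEquiv).symm
  have hcardPerm : Nat.card (Equiv.Perm A) = 24 := by
    haveI := Fintype.ofFinite A
    have hA' : Fintype.card A = 4 := by rw [← Nat.card_eq_fintype_card, hA]
    rw [Nat.card_eq_fintype_card, Fintype.card_perm, hA']
    norm_num [Nat.factorial]
  have hfac : Nat.card H = 2 ^ (Nat.card (Equiv.Perm A)).factorization 2 := by
    rw [hcardPerm, fac24, hH]; norm_num
  have hfac₂ : Nat.card H₂ = 2 ^ (Nat.card (Equiv.Perm A)).factorization 2 := by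
    rw [hcardPerm, fac24, hH₂]; norm_num
  obtain ⟨i⟩ := sylow_mulEquiv' (p := 2) hfac hfac₂
  exact ⟨i.trans ((Subgroup.equivMapOfInjective d4hom'.range μ.toMonoidHom hinj).symm.trans
    (MonoidHom.ofInjective d4f'_inj).symm)⟩

private lemma group_card_four' {S : Type*} [Group S] [Finite S] (h : Nat.card S = 4) :
    Nonempty (S ≃* Multiplicative (ZMod 2 × ZMod 2)) ∨
      Nonempty (S ≃* Multiplicative (ZMod 4)) := by
  by_cases hx : ∀ x : S, x ^ 2 = 1
  · left
    have hnt : Nontrivial S := by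
      rw [← Finite.one_lt_card_iff_nontrivial, h]; norm_num
    have hexp : Monoid.exponent S = 2 := by
      have hdvd : Monoid.exponent S ∣ 2 := Monoid.exponent_dvd_of_forall_pow_eq_one hx
      rcases (Nat.dvd_prime Nat.prime_two).mp hdvd with h1 | h2
      · exact absurd (Monoid.exp_eq_one_iff.mp h1) (not_subsingleton S)
      · exact h2
    have : IsKleinFour S := ⟨h, hexp⟩
    exact ⟨Classical.choice IsKleinFour.nonempty_mulEquiv⟩
  · right
    push_neg at hx
    obtain ⟨x, hx2⟩ := hx
    have hord : orderOf x = 4 := by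
      have hdvd : orderOf x ∣ 2 ^ 2 := by
        have := orderOf_dvd_natCard x
        rw [h] at this; exact (by norm_num : (4:ℕ) = 2 ^ 2) ▸ this
      obtain ⟨i, hi, hor⟩ := (Nat.dvd_prime_pow Nat.prime_two).mp hdvd
      interval_cases i
      · exact absurd (by simpa using hor : x = 1) (fun h1 => hx2 (by rw [h1, one_pow]))
      · have h2 : orderOf x = 2 := by simpa using hor
        exact absurd (h2 ▸ pow_orderOf_eq_one x) hx2
      · simpa using hor
    haveI : IsCyclic S := isCyclic_of_orderOf_eq_card x (by rw [hord, h])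
    have hc : Nat.card S = Nat.card (Multiplicative (ZMod 4)) := by simp [h]
    exact ⟨mulEquivOfCyclicCardEq hc⟩

/-- **Lemma 5.1.**  Let `Sg` be a finite connected tetravalent graph, `G ≤ Aut Sg`
arc-transitive, `(ω, ω')` an arc, and suppose the vertex stabilizer `G_ω` is a
`2`-group.  Then either the permutation group induced by `G_ω` on the neighbourhood
`Sg(ω)` (i.e. the range of the natural restriction homomorphism `φ`) is dihedral of
order `8` and the induced image of the arc stabilizer `G_{ωω'}` has order `2`, or
`G_ω ≅ ℤ₂ × ℤ₂` or `G_ω ≅ ℤ₄`. -/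
theorem tetravalent_stabilizer_structure {V : Type*} [Fintype V] (Sg : SimpleGraph V)
    {G : Type*} [Group G] [MulAction G V] [FaithfulSMul G V]
    (hact : ∀ (g : G) (a b : V), Sg.Adj (g • a) (g • b) ↔ Sg.Adj a b)
    (hconn : Sg.Connected)
    (hval : ∀ v : V, (Sg.neighborSet v).ncard = 4)
    (harc : ∀ a b c d : V, Sg.Adj a b → Sg.Adj c d → ∃ g : G, g • a = c ∧ g • b = d)
    (ω ω' : V) (hadj : Sg.Adj ω ω')
    (h2 : IsPGroup 2 (MulAction.stabilizer G ω)) :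
    (∀ φ : (MulAction.stabilizer G ω) →* Equiv.Perm {v : V // Sg.Adj ω v},
      (∀ (g : MulAction.stabilizer G ω) (v : {v : V // Sg.Adj ω v}),
          ((φ g v : {v : V // Sg.Adj ω v}) : V) = (g : G) • (v : V)) →
      (Nonempty (φ.range ≃* DihedralGroup 4) ∧
        Nat.card
          (⇑φ '' {g : MulAction.stabilizer G ω | (g : G) ∈ MulAction.stabilizer G ω'}) = 2)) ∨
    Nonempty (MulAction.stabilizer G ω ≃* Multiplicative (ZMod 2 × ZMod 2)) ∨
    Nonempty (MulAction.stabilizer G ω ≃* Multiplicative (ZMod 4)) := by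
  classical
  haveI : Fact (Nat.Prime 2) := ⟨Nat.prime_two⟩
  haveI : Finite G := Finite.of_injective _ (MulAction.toPerm_injective (α := G) (β := V))
  set S := MulAction.stabilizer G ω with hS
  set A := {v : V // Sg.Adj ω v} with hAdef
  -- cardinality of the neighbourhood
  have hA4 : Nat.card A = 4 := by
    have h := hval ω
    rw [← Nat.card_coe_set_eq] at h
    rw [← h]
    exact Nat.card_congr (Equiv.subtypeEquivRight (fun v => (Sg.mem_neighborSet ω v))).symm
  -- membership facts
  have hsm : ∀ (g : S) (v : A), Sg.Adj ω ((g : G) • (v : V)) := by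
    intro g v
    have h := (hact (g : G) ω (v : V)).mpr v.2
    rwa [g.2] at h
  -- the canonical restriction homomorphism
  let φ₀ : S →* Equiv.Perm A :=
    { toFun := fun g =>
        { toFun := fun v => ⟨(g : G) • (v : V), hsm g v⟩
          invFun := fun v => ⟨(g⁻¹ : G) • (v : V), hsm g⁻¹ v⟩
          left_inv := fun v => Subtype.ext (by simp)
          right_inv := fun v => Subtype.ext (by simp) }
      map_one' := by ext v; simp
      map_mul' := fun g h => by ext v; simp [mul_smul] }
  have hφ₀ : ∀ (g : S) (v : A), ((φ₀ g v : A) : V) = (g : G) • (v : V) := fun _ _ => rfl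
  -- uniqueness of compatible homomorphisms
  have huniq : ∀ φ : S →* Equiv.Perm A,
      (∀ (g : S) (v : A), ((φ g v : A) : V) = (g : G) • (v : V)) → φ = φ₀ := by
    intro φ hφ
    ext g v
    exact congrArg Subtype.val (Subtype.ext ((hφ g v).trans (hφ₀ g v).symm) :
      φ g v = φ₀ g v) ▸ rfl
  -- local transitivity
  have htrans : ∀ a b : A, ∃ g : S, (g : G) • (a : V) = (b : V) := by
    intro a b
    obtain ⟨g, hg1, hg2⟩ := harc ω (a : V) ω (b : V) a.2 b.2
    exact ⟨⟨g, hg1⟩, hg2⟩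
  set p' : A := ⟨ω', hadj⟩ with hp'
  set R := φ₀.range with hR
  -- orbit of p' under the range is everything
  have horb : MulAction.orbit R p' = Set.univ := by
    apply Set.eq_univ_of_forall
    intro b
    obtain ⟨g, hg⟩ := htrans p' b
    refine ⟨⟨φ₀ g, ⟨g, rfl⟩⟩, ?_⟩
    exact Subtype.ext hg
  haveI : Fintype A := Fintype.ofFinite A
  haveI : Fintype R := Fintype.ofFinite R
  have hos : 4 * Nat.card (MulAction.stabilizer R p') = Nat.card R := by
    have h := MulAction.card_orbit_mul_card_stabilizer_eq_card_group R p'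
    have horbcard : Fintype.card (MulAction.orbit R p') = 4 := by
      rw [← Nat.card_eq_fintype_card, horb, Nat.card_congr (Equiv.Set.univ A)]
      exact hA4
    rw [horbcard] at h
    simpa [Nat.card_eq_fintype_card] using h
  -- the range is a 2-group
  have hR2 : IsPGroup 2 R := h2.of_surjective φ₀.rangeRestrict φ₀.rangeRestrict_surjective
  obtain ⟨n, hn⟩ := IsPGroup.iff_card.mp hR2
  have hdvd24 : Nat.card R ∣ 24 := by
    have h := Subgroup.card_subgroup_dvd_card R
    have hcardPerm : Nat.card (Equiv.Perm A) = 24 := by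
      have hA' : Fintype.card A = 4 := by rw [← Nat.card_eq_fintype_card, hA4]
      rw [Nat.card_eq_fintype_card, Fintype.card_perm, hA']
      norm_num [Nat.factorial]
    rwa [hcardPerm] at h
  have hcases : Nat.card R = 4 ∨ Nat.card R = 8 := by
    have h4dvd : 4 ∣ Nat.card R := ⟨_, hos.symm⟩
    have hn2 : 2 ≤ n := by
      by_contra hlt
      push_neg at hlt
      interval_cases n <;> rw [hn] at h4dvd <;> omega
    have hn3 : n ≤ 3 := by
      by_contra hgt
      push_neg at hgt
      have h16R : 2 ^ 4 ∣ Nat.card R := hn ▸ pow_dvd_pow 2 hgt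
      have h16 : (16 : ℕ) ∣ 24 := by
        refine dvd_trans ?_ hdvd24
        simpa using h16R
      norm_num at h16
    interval_cases n <;> rw [hn] <;> norm_num
  rcases hcases with h4 | h8
  · -- regular local action: kernel argument
    right
    have hstabbot : MulAction.stabilizer R p' = ⊥ := by
      rw [← Subgroup.card_eq_one]
      omega
    -- regularity at the base arc
    have hKreg : ∀ g : G, g • ω = ω → g • ω' = ω' → ∀ w, Sg.Adj ω w → g • w = w := by
      intro g hgω hgω' w hw
      have hgS : g ∈ S := hgω
      have hmem : (⟨φ₀ ⟨g, hgS⟩, ⟨⟨g, hgS⟩, rfl⟩⟩ : R) ∈ MulAction.stabilizer R p' := by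
        show _ • p' = p'
        exact Subtype.ext hgω'
      rw [hstabbot, Subgroup.mem_bot] at hmem
      have h1 : φ₀ ⟨g, hgS⟩ = 1 := congrArg Subtype.val hmem
      have := congrArg Subtype.val (Equiv.ext_iff.mp h1 ⟨w, hw⟩)
      exact this
    -- regularity at every arc by conjugation
    have hreg : ∀ v u : V, Sg.Adj v u → ∀ g : G, g • v = v → g • u = u →
        ∀ w, Sg.Adj v w → g • w = w := by
      intro v u hvu g hgv hgu w hw
      obtain ⟨h, hv, hu⟩ := harc v u ω ω' hvu hadj
      have hconj1 : (h * g * h⁻¹) • ω = ω := by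
        rw [mul_smul, mul_smul, ← hv, inv_smul_smul, hgv, hv]
      have hconj2 : (h * g * h⁻¹) • ω' = ω' := by
        rw [mul_smul, mul_smul, ← hu, inv_smul_smul, hgu, hu]
      have hadjw : Sg.Adj ω (h • w) := by
        rw [← hv]; exact (hact h v w).mpr hw
      have := hKreg _ hconj1 hconj2 (h • w) hadjw
      rw [mul_smul, mul_smul, inv_smul_smul] at this
      exact MulAction.injective h this
    -- the kernel of φ₀ is trivial
    have hinj : Function.Injective φ₀ := by
      rw [injective_iff_map_eq_one]
      intro g hg1
      have hgω : (g : G) • ω = ω := g.2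
      have hgnb : ∀ x, Sg.Adj ω x → (g : G) • x = x := by
        intro x hx
        have := congrArg Subtype.val (Equiv.ext_iff.mp hg1 ⟨x, hx⟩)
        exact this
      have hfixall : ∀ w : V, (g : G) • w = w := by
        have key : ∀ (u v : V) (p : Sg.Walk u v),
            ((g : G) • u = u ∧ ∀ x, Sg.Adj u x → (g : G) • x = x) →
            (g : G) • v = v ∧ ∀ x, Sg.Adj v x → (g : G) • x = x := by
          intro u v p
          induction p with
          | nil => exact id
          | @cons a b c hab q ih =>
            intro hP
            have hb : (g : G) • b = b := hP.2 b hab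
            exact ih ⟨hb, hreg b a hab.symm _ hb hP.1⟩
        intro w
        exact ((hconn.preconnected ω w).elim fun p => (key ω w p ⟨hgω, hgnb⟩)).1
      have : (g : G) = 1 := eq_of_smul_eq_smul (fun v : V => by rw [hfixall v, one_smul])
      exact Subtype.ext this
    have hcardS : Nat.card S = 4 := by
      rw [← h4]
      exact Nat.card_congr (MonoidHom.ofInjective hinj).toEquiv
    exact group_card_four' hcardS
  · -- dihedral case
    left
    intro φ hφ
    rw [huniq φ hφ]
    constructor
    · exact subgroup_card_eight_perm' hA4 R h8
    · -- the image of the arc-stabilizer has two elements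
      have hseteq : ⇑φ₀ '' {g : S | (g : G) ∈ MulAction.stabilizer G ω'} =
          Subtype.val '' ((MulAction.stabilizer R p' : Subgroup R) : Set R) := by
        ext σ
        constructor
        · rintro ⟨g, hg, rfl⟩
          refine ⟨⟨φ₀ g, ⟨g, rfl⟩⟩, ?_, rfl⟩
          show _ • p' = p'
          exact Subtype.ext hg
        · rintro ⟨⟨σ, g, rfl⟩, hfix, rfl⟩
          refine ⟨g, ?_, rfl⟩
          have : φ₀ g p' = p' := hfix
          show (g : G) • ω' = ω'
          have := congrArg Subtype.val this
          exact this
      rw [hseteq, Nat.card_image_of_injective Subtype.val_injective]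
      have : Nat.card ((MulAction.stabilizer R p' : Subgroup R) : Set R) =
          Nat.card (MulAction.stabilizer R p') := Nat.card_congr (Equiv.refl _)
      rw [this]
      omega
end

section
/- Let Σ be a finite connected simple graph that is regular of valency 4, let G ≤ Aut(Σ) be arc-transitive on Σ, and let ω be a vertex. Assume the vertex stabilizer G_ω is a (finite) 2-group with |G_ω| < 16. Then G_ω^{[1]} = 1 (G_ω acts faithfully on the neighbour set Σ(ω)), and G_ω is isomorphic to the dihedral group of order 8, to Z₂ × Z₂, or to Z₄. -/
/-- The pointwise stabilizer `G_ω^{[1]}` of the neighbourhood of `ω` within the vertex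
stabilizer `G_ω`: the subgroup of elements fixing `ω` and all of its neighbours. -/
def pstab {V : Type*} (Sg : SimpleGraph V) (G : Type*) [Group G] [MulAction G V] (ω : V) :
    Subgroup G :=
  MulAction.stabilizer G ω ⊓ ⨅ v ∈ Sg.neighborSet ω, MulAction.stabilizer G v

set_option linter.unusedSectionVars false

section Aux

variable {V : Type*} [Fintype V] {Sg : SimpleGraph V}
  {G : Type*} [Group G] [MulAction G V]

lemma mem_pstab {g : G} {ω : V} :
    g ∈ pstab Sg G ω ↔ g • ω = ω ∧ ∀ v, Sg.Adj ω v → g • v = v := by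
  simp [pstab, Subgroup.mem_inf, Subgroup.mem_iInf, MulAction.mem_stabilizer_iff,
    SimpleGraph.mem_neighborSet]

lemma pstab_le_inf {v α : V} (hadj : Sg.Adj v α) :
    pstab Sg G v ≤ MulAction.stabilizer G v ⊓ MulAction.stabilizer G α := by
  intro g hg
  rw [mem_pstab] at hg
  exact Subgroup.mem_inf.mpr ⟨hg.1, hg.2 α hadj⟩

section
variable (hact : ∀ (g : G) (a b : V), Sg.Adj (g • a) (g • b) ↔ Sg.Adj a b)
include hact

lemma pstab_conj_mem (g : G) (v : V) (x : G) :
    x ∈ pstab Sg G (g • v) ↔ g⁻¹ * x * g ∈ pstab Sg G v := by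
  rw [mem_pstab, mem_pstab]
  constructor
  · rintro ⟨h1, h2⟩
    refine ⟨?_, fun u hu => ?_⟩
    · rw [mul_smul, mul_smul, h1, inv_smul_smul]
    · have : Sg.Adj (g • v) (g • u) := (hact g v u).mpr hu
      have := h2 _ this
      rw [mul_smul, mul_smul, this, inv_smul_smul]
  · rintro ⟨h1, h2⟩
    refine ⟨?_, fun w hw => ?_⟩
    · have : (g⁻¹ * x * g) • v = v := h1
      calc x • g • v = g • (g⁻¹ * x * g) • v := by simp [mul_smul]
        _ = g • v := by rw [this]
    · have hadj : Sg.Adj v (g⁻¹ • w) := by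
        have := (hact g⁻¹ (g • v) w).mpr hw
        rwa [inv_smul_smul] at this
      have := h2 _ hadj
      calc x • w = g • (g⁻¹ * x * g) • g⁻¹ • w := by simp [mul_smul]
        _ = g • g⁻¹ • w := by rw [this]
        _ = w := by simp

noncomputable def pstabConjEquiv (g : G) (v : V) :
    (pstab Sg G (g • v)) ≃ (pstab Sg G v) where
  toFun x := ⟨g⁻¹ * x * g, (pstab_conj_mem hact g v x).mp x.2⟩
  invFun y := ⟨g * y * g⁻¹, by
    rw [pstab_conj_mem hact g v]
    have h : g⁻¹ * (g * ↑y * g⁻¹) * g = (y:G) := by group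
    rw [h]; exact y.2⟩
  left_inv x := by ext; simp; group
  right_inv y := by ext; simp; group

end

section
variable (hact : ∀ (g : G) (a b : V), Sg.Adj (g • a) (g • b) ↔ Sg.Adj a b)
  (harc : ∀ a b c d : V, Sg.Adj a b → Sg.Adj c d → ∃ g : G, g • a = c ∧ g • b = d)
  (hval : ∀ v : V, (Sg.neighborSet v).ncard = 4)

include harc in
lemma vertex_trans (hconn : Sg.Connected) (v w : V) : ∃ g : G, g • v = w := by
  have key : ∀ {x y : V}, Sg.Walk x y → ∃ g : G, g • x = y := by
    intro x y p
    induction p with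
    | nil => exact ⟨1, one_smul _ _⟩
    | @cons u a b h p ih =>
      obtain ⟨g, hg⟩ := ih
      obtain ⟨g', hg', -⟩ := harc u a a u h h.symm
      exact ⟨g * g', by rw [mul_smul, hg', hg]⟩
  exact key ((hconn.preconnected v w).some)

include hact harc hval in
lemma card_stab_eq [Finite G] (v α : V) (hadj : Sg.Adj v α) :
    Nat.card (MulAction.stabilizer G v) =
      4 * Nat.card (MulAction.stabilizer G v ⊓ MulAction.stabilizer G α : Subgroup G) := by
  set H := MulAction.stabilizer G v
  have horb : MulAction.orbit H α = Sg.neighborSet v := by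
    ext w
    constructor
    · rintro ⟨h, rfl⟩
      have hv : (h : G) • v = v := h.2
      have : Sg.Adj ((h:G) • v) ((h:G) • α) := (hact _ v α).mpr hadj
      rw [hv] at this
      exact this
    · intro hw
      obtain ⟨g, hg1, hg2⟩ := harc v α v w hadj hw
      exact ⟨⟨g, hg1⟩, hg2⟩
  have hcards := Nat.card_congr (MulAction.orbitProdStabilizerEquivGroup H α)
  rw [Nat.card_prod] at hcards
  have h1 : Nat.card (MulAction.orbit H α) = 4 := by
    rw [horb, Nat.card_coe_set_eq, hval v]
  have h2 : Nat.card (MulAction.stabilizer H α) =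
      Nat.card (MulAction.stabilizer G v ⊓ MulAction.stabilizer G α : Subgroup G) := by
    refine Nat.card_congr
      ⟨fun x => ⟨(x.1 : G), Subgroup.mem_inf.mpr ⟨x.1.2, ?_⟩⟩,
       fun y => ⟨⟨(y : G), (Subgroup.mem_inf.mp y.2).1⟩, ?_⟩, ?_, ?_⟩
    · have := x.2
      rwa [MulAction.mem_stabilizer_iff, Submonoid.smul_def] at this
    · rw [MulAction.mem_stabilizer_iff, Submonoid.smul_def]
      exact (Subgroup.mem_inf.mp y.2).2
    · intro x; rfl
    · intro y; rfl
  rw [← hcards, h1, h2]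
end

section
variable (Sg) (G)
variable (hact : ∀ (g : G) (a b : V), Sg.Adj (g • a) (g • b) ↔ Sg.Adj a b)

/-- The action of the vertex stabilizer on the neighbour set, as a permutation rep. -/
def nbhdHom (ω : V) : MulAction.stabilizer G ω →* Equiv.Perm (Sg.neighborSet ω) where
  toFun h :=
    { toFun := fun x => ⟨(h : G) • x, by
        have : Sg.Adj ((h:G) • ω) ((h:G) • (x:V)) := (hact _ ω x).mpr x.2
        rwa [h.2] at this⟩
      invFun := fun x => ⟨(h⁻¹ : G) • x, by
        have hh : ((h⁻¹ : MulAction.stabilizer G ω) : G) • ω = ω := h⁻¹.2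
        have : Sg.Adj (((h⁻¹ : MulAction.stabilizer G ω) :G) • ω)
            (((h⁻¹: MulAction.stabilizer G ω):G) • (x:V)) := (hact _ ω x).mpr x.2
        rwa [hh] at this⟩
      left_inv := fun x => by ext; simp
      right_inv := fun x => by ext; simp }
  map_one' := by ext x; simp
  map_mul' := fun a b => by ext x; simp [mul_smul]

lemma nbhdHom_injective (ω : V) (hp : pstab Sg G ω = ⊥) :
    Function.Injective (nbhdHom Sg G hact ω) := by
  rw [← MonoidHom.ker_eq_bot_iff, eq_bot_iff]
  intro h hh
  have hfix : ∀ x : Sg.neighborSet ω, (h : G) • (x : V) = (x : V) := by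
    intro x
    have := congrArg (fun p => (p x : V)) (MonoidHom.mem_ker.mp hh)
    simpa [nbhdHom] using this
  have : (h : G) ∈ pstab Sg G ω := by
    rw [mem_pstab]
    exact ⟨h.2, fun v hv => hfix ⟨v, hv⟩⟩
  rw [hp, Subgroup.mem_bot] at this
  simpa [Subgroup.mem_bot] using Subtype.ext this

end

/-- permCongr as a MulEquiv. -/
def permCongrMulEquiv {α β : Type*} (e : α ≃ β) : Equiv.Perm α ≃* Equiv.Perm β where
  toEquiv := e.permCongr
  map_mul' p q := by ext x; simp [Equiv.permCongr_apply]

end Aux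

/-- The standard embedding of the dihedral group of order 8 into `S₄`. -/
def dihedralHom : DihedralGroup 4 →* Equiv.Perm (Fin 4) where
  toFun x := match x with
    | .r i => (finRotate 4) ^ i.val
    | .sr i => (Equiv.swap 1 3) * (finRotate 4) ^ i.val
  map_one' := by decide
  map_mul' := by decide

lemma dihedralHom_injective : Function.Injective dihedralHom := by decide

lemma perm4_factorization : (Nat.card (Equiv.Perm (Fin 4))).factorization 2 = 3 := by
  have h : Nat.card (Equiv.Perm (Fin 4)) = 24 := by
    rw [Nat.card_eq_fintype_card]; simp [Fintype.card_perm]; rfl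
  rw [h]
  have h24 : (24:ℕ) = 2^3 * 3 := by norm_num
  rw [h24, Nat.factorization_mul (by norm_num) (by norm_num),
    Nat.Prime.factorization_pow (by norm_num)]
  have h3 : (3:ℕ).factorization 2 = 0 := Nat.factorization_eq_zero_of_not_dvd (by norm_num)
  simp [h3]

/-- Any subgroup of `S₄` of order `8` is a Sylow `2`-subgroup, hence dihedral. -/
noncomputable def subgroup8Equiv (H : Subgroup (Equiv.Perm (Fin 4))) (hH : Nat.card H = 8) :
    H ≃* DihedralGroup 4 := by
  have hr : Nat.card dihedralHom.range = 8 := by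
    rw [Nat.card_congr (MonoidHom.ofInjective dihedralHom_injective).toEquiv.symm]
    rw [Nat.card_eq_fintype_card]; rfl
  have h8 : (8:ℕ) = 2 ^ (Nat.card (Equiv.Perm (Fin 4))).factorization 2 := by
    rw [perm4_factorization]; norm_num
  let P : Sylow 2 (Equiv.Perm (Fin 4)) := Sylow.ofCard H (hH.trans h8)
  let Q : Sylow 2 (Equiv.Perm (Fin 4)) := Sylow.ofCard dihedralHom.range (hr.trans h8)
  have eP : (P : Subgroup (Equiv.Perm (Fin 4))) = H := IsPGroup.toSylow_coe _ _
  have eQ : (Q : Subgroup (Equiv.Perm (Fin 4))) = dihedralHom.range := IsPGroup.toSylow_coe _ _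
  exact ((MulEquiv.subgroupCongr eP).symm.trans (Sylow.equiv P Q)).trans
    ((MulEquiv.subgroupCongr eQ).trans (MonoidHom.ofInjective dihedralHom_injective).symm)

/-- Classification of groups of order four. -/
lemma group4 (H : Type*) [Group H] [Finite H] (hH : Nat.card H = 4) :
    Nonempty (H ≃* Multiplicative (ZMod 2 × ZMod 2)) ∨ Nonempty (H ≃* Multiplicative (ZMod 4)) := by
  by_cases hc : ∃ x : H, orderOf x = 4
  · right
    obtain ⟨x, hx⟩ := hc
    have hcy : IsCyclic H := isCyclic_of_orderOf_eq_card x (by rw [hH, hx])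
    have e := zmodCyclicMulEquiv hcy
    rw [hH] at e
    exact ⟨e.symm⟩
  · left
    push_neg at hc
    have hdvd : Monoid.exponent H ∣ 2 := Monoid.exponent_dvd_of_forall_pow_eq_one (fun g => by
      have h4 : orderOf g ∣ 4 := hH ▸ orderOf_dvd_natCard g
      have h2 : orderOf g ∣ 2 := by
        have h42 : (4:ℕ) = 2^2 := by norm_num
        rw [h42] at h4
        obtain ⟨k, hk, he⟩ := (Nat.dvd_prime_pow Nat.prime_two).mp h4
        interval_cases k
        · simp [he]
        · simp [he]
        · exact absurd (by rw [he]; norm_num) (hc g)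
      exact orderOf_dvd_iff_pow_eq_one.mp h2)
    have hexp : Monoid.exponent H = 2 := by
      rcases (Nat.dvd_prime Nat.prime_two).mp hdvd with h1 | h2
      · exfalso
        have hnt : Nontrivial H := Finite.one_lt_card_iff_nontrivial.mp (by omega)
        obtain ⟨g, hg⟩ := exists_ne (1 : H)
        have := Monoid.order_dvd_exponent g
        rw [h1, Nat.dvd_one, orderOf_eq_one_iff] at this
        exact hg this
      · exact h2
    have : IsKleinFour H := ⟨hH, hexp⟩
    exact ⟨(IsKleinFour.nonempty_mulEquiv).some⟩

/-- **Lemma 5.2 (first part).**  Let `Sg` be a finite connected tetravalent graph,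
`G ≤ Aut Sg` arc-transitive, and suppose the vertex stabilizer `G_ω` is a `2`-group of
order less than `16`.  Then `G_ω^{[1]} = 1` (so `G_ω` acts faithfully on the
neighbourhood `Sg(ω)`), and `G_ω` is isomorphic to `D₈`, `ℤ₂ × ℤ₂` or `ℤ₄`. -/
theorem small_tetravalent_stabilizer {V : Type*} [Fintype V] (Sg : SimpleGraph V)
    {G : Type*} [Group G] [MulAction G V] [FaithfulSMul G V]
    (hact : ∀ (g : G) (a b : V), Sg.Adj (g • a) (g • b) ↔ Sg.Adj a b)
    (hconn : Sg.Connected)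
    (hval : ∀ v : V, (Sg.neighborSet v).ncard = 4)
    (harc : ∀ a b c d : V, Sg.Adj a b → Sg.Adj c d → ∃ g : G, g • a = c ∧ g • b = d)
    (ω : V)
    (h2 : IsPGroup 2 (MulAction.stabilizer G ω))
    (hsmall : Nat.card (MulAction.stabilizer G ω) < 16) :
    pstab Sg G ω = ⊥ ∧
    (Nonempty (MulAction.stabilizer G ω ≃* DihedralGroup 4) ∨
      Nonempty (MulAction.stabilizer G ω ≃* Multiplicative (ZMod 2 × ZMod 2)) ∨
      Nonempty (MulAction.stabilizer G ω ≃* Multiplicative (ZMod 4))) := by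
  classical
  haveI : Finite G := Finite.of_injective (MulAction.toPerm : G → Equiv.Perm V)
    (MulAction.toPerm_injective)
  haveI : Fact (Nat.Prime 2) := ⟨Nat.prime_two⟩
  -- a neighbour of ω
  have hne : (Sg.neighborSet ω).Nonempty :=
    Set.nonempty_of_ncard_ne_zero (by rw [hval]; norm_num)
  obtain ⟨α₀, hα₀⟩ := hne
  have hadj₀ : Sg.Adj ω α₀ := hα₀
  have hcs := card_stab_eq hact harc hval ω α₀ hadj₀
  -- order of the stabilizer is 4 or 8
  have hpos : 0 < Nat.card (MulAction.stabilizer G ω ⊓ MulAction.stabilizer G α₀ : Subgroup G) :=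
    Nat.card_pos
  have hcard48 : Nat.card (MulAction.stabilizer G ω) = 4 ∨
      Nat.card (MulAction.stabilizer G ω) = 8 := by
    obtain ⟨n, hn⟩ := h2.exists_card_eq
    rw [hn] at hsmall hcs
    have hn4 : n < 4 := by
      by_contra hcon
      push_neg at hcon
      have : (2:ℕ)^4 ≤ 2^n := Nat.pow_le_pow_right (by norm_num) hcon
      omega
    have hn2 : 2 ≤ n := by
      rcases n with _ | _ | n
      · simp at hcs; omega
      · simp [pow_succ] at hcs; omega
      · omega
    interval_cases n
    · left; rw [hn]; norm_num
    · right; rw [hn]; norm_num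
  -- first part: pstab = ⊥
  have hbot : pstab Sg G ω = ⊥ := by
    rcases hcard48 with h4 | h8
    · -- arc stabilizer trivial
      have : Nat.card (MulAction.stabilizer G ω ⊓ MulAction.stabilizer G α₀ : Subgroup G) = 1 := by
        omega
      have hb := Subgroup.card_eq_one.mp this
      exact le_bot_iff.mp (hb ▸ pstab_le_inf hadj₀)
    · -- contradiction argument via connectivity
      by_contra hKne
      set K := pstab Sg G ω with hKdef
      -- per-vertex cardinalities
      have hstabcard : ∀ v : V, Nat.card (MulAction.stabilizer G v) = 8 := by
        intro v
        obtain ⟨g, hg⟩ := vertex_trans (G := G) harc hconn ω v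
        rw [← hg, MulAction.stabilizer_smul_eq_stabilizer_map_conj]
        rw [Nat.card_congr (Subgroup.equivMapOfInjective _ _
          ((MulAut.conj g).injective)).toEquiv.symm]
        exact h8
      have hinfcard : ∀ v α : V, Sg.Adj v α →
          Nat.card (MulAction.stabilizer G v ⊓ MulAction.stabilizer G α : Subgroup G) = 2 := by
        intro v α hadj
        have := card_stab_eq hact harc hval v α hadj
        rw [hstabcard v] at this
        omega
      have hK2 : Nat.card K = 2 := by
        have hle : Nat.card K ≤ 2 := by
          have := Subgroup.card_le_of_le (pstab_le_inf (G := G) hadj₀)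
          rwa [hinfcard ω α₀ hadj₀] at this
        have hgt : 1 < Nat.card K := (Subgroup.one_lt_card_iff_ne_bot K).mpr hKne
        omega
      have hpcard : ∀ v : V, Nat.card (pstab Sg G v) = 2 := by
        intro v
        obtain ⟨g, hg⟩ := vertex_trans (G := G) harc hconn ω v
        rw [← hg, Nat.card_congr (pstabConjEquiv hact g ω)]
        exact hK2
      -- closure of the fixed set under adjacency
      have hF : ∀ v α : V, pstab Sg G v = K → Sg.Adj v α → pstab Sg G α = K := by
        intro v α hv hadj
        have h1 : K = MulAction.stabilizer G v ⊓ MulAction.stabilizer G α := by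
          refine Subgroup.eq_of_le_of_card_ge (hv ▸ pstab_le_inf hadj) ?_
          rw [hinfcard v α hadj, hK2]
        have h2' : pstab Sg G α ≤ K := by
          rw [h1]
          refine le_inf (fun g hg => ?_) (fun g hg => ?_)
          · exact (mem_pstab.mp hg).2 v hadj.symm
          · exact (mem_pstab.mp hg).1
        refine Subgroup.eq_of_le_of_card_ge h2' ?_
        rw [hpcard α, hK2]
      -- all vertices have pstab = K
      have hall : ∀ v : V, pstab Sg G v = K := by
        have key : ∀ {x y : V}, Sg.Walk x y → pstab Sg G x = K → pstab Sg G y = K := by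
          intro x y p
          induction p with
          | nil => exact fun h => h
          | @cons u a b h p ih => exact fun hu => ih (hF u a hu h)
        intro v
        exact key ((hconn.preconnected ω v).some) rfl
      -- K fixes everything, hence trivial
      have : K = ⊥ := by
        rw [eq_bot_iff]
        intro g hg
        rw [Subgroup.mem_bot]
        refine eq_of_smul_eq_smul (α := V) (fun v => ?_)
        rw [one_smul]
        have : g ∈ pstab Sg G v := (hall v).symm ▸ hg
        exact (mem_pstab.mp this).1
      exact hKne this
  refine ⟨hbot, ?_⟩
  -- classification
  rcases hcard48 with h4 | h8
  · right
    have := group4 (MulAction.stabilizer G ω) h4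
    tauto
  · left
    -- embed into Perm (Fin 4)
    have hcardN : Nat.card (Sg.neighborSet ω) = 4 := by
      rw [Nat.card_coe_set_eq]; exact hval ω
    let e : (Sg.neighborSet ω) ≃ Fin 4 := Finite.equivFinOfCardEq hcardN
    let ψ : MulAction.stabilizer G ω →* Equiv.Perm (Fin 4) :=
      (permCongrMulEquiv e).toMonoidHom.comp (nbhdHom Sg G hact ω)
    have hψ : Function.Injective ψ :=
      (permCongrMulEquiv e).injective.comp (nbhdHom_injective Sg G hact ω hbot)
    have hrange : Nat.card ψ.range = 8 := by
      rw [Nat.card_congr (MonoidHom.ofInjective hψ).toEquiv.symm]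
      exact h8
    exact ⟨(MonoidHom.ofInjective hψ).trans (subgroup8Equiv ψ.range hrange)⟩
end

section
/- Let Σ be a finite connected simple graph that is regular of valency 4, let G ≤ Aut(Σ) be arc-transitive on Σ, let (ω, ω') be an ordered pair of adjacent vertices, and let g ∈ G satisfy g·ω = ω' and g·ω' = ω. Assume the vertex stabilizer G_ω is a (finite) 2-group with |G_ω| ≥ 16. Then: (a) G_ω^{[1]} ∩ G_{ω'}^{[1]} is a normal subgroup of index 4 in the arc stabilizer G_{ωω'}, and the quotient G_{ωω'}/(G_ω^{[1]} ∩ G_{ω'}^{[1]}) is isomorphic to Z₂ × Z₂; (b) there exist x ∈ G_ω \ G_{ωω'} and y ∈ G_{ω'}^{[1]} \ G_ω^{[1]} such that G_ω = ⟨G_{ωω'}, x⟩ = ⟨G_ω^{[1]}, x, y⟩, G_ω^{[1]} = ⟨G_ω^{[1]} ∩ G_{ω'}^{[1]}, g⁻¹yg⟩, (xy)² ∈ G_ω^{[1]}, and the quotient G_ω/G_ω^{[1]} is dihedral of order 8, generated by the images of x and y; (c) there exists g̃ ∈ G_ω g G_ω such that G_ω g̃ G_ω = G_ω g G_ω, g̃·ω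 = ω', g̃·ω' = ω, and g̃² ∈ G_ω^{[1]}. -/
set_option maxHeartbeats 1600000

namespace Tetra


lemma permCongr_pow {α β : Type*} (e : α ≃ β) (q : Equiv.Perm α) (n : ℕ) :
    (e.permCongr q) ^ n = e.permCongr (q ^ n) := by
  induction n with
  | zero => ext x; simp [Equiv.permCongr_apply]
  | succ n ih => rw [pow_succ, pow_succ, ih]; ext x; simp [Equiv.permCongr_apply]

set_option maxRecDepth 10000 in
lemma perm4_fix_sq' (q : Equiv.Perm (Fin 4)) (b : Fin 4) (h8 : q^8 = 1) (hb : q b = b) :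
    q ^ 2 = 1 := by
  revert hb h8; revert q b; decide

set_option maxRecDepth 10000 in
lemma perm4_fix_sign' (q : Equiv.Perm (Fin 4)) (b : Fin 4) (h8 : q^8 = 1) (hb : q b = b)
    (hs : Equiv.Perm.sign q = 1) : q = 1 := by
  revert hs hb h8; revert q b; decide

lemma perm_card4_fix_sq {α : Type*} [Fintype α] [DecidableEq α] (h4 : Fintype.card α = 4)
    (q : Equiv.Perm α) (b : α) (h8 : q ^ 8 = 1) (hb : q b = b) : q ^ 2 = 1 := by
  let e := Fintype.equivFinOfCardEq h4
  have h1 : (e.permCongr q) ^ 8 = 1 := by rw [permCongr_pow, h8]; ext x; simp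
  have h2 : (e.permCongr q) (e b) = e b := by simp [Equiv.permCongr_apply, hb]
  have := perm4_fix_sq' _ _ h1 h2
  rw [permCongr_pow] at this
  have h3 : e.permCongr (q ^ 2) = e.permCongr 1 := by
    rw [this]; ext x; simp [Equiv.permCongr_apply]
  exact e.permCongr.injective h3

lemma perm_card4_fix_sign {α : Type*} [Fintype α] [DecidableEq α] (h4 : Fintype.card α = 4)
    (q : Equiv.Perm α) (b : α) (h8 : q ^ 8 = 1) (hb : q b = b)
    (hs : Equiv.Perm.sign q = 1) : q = 1 := by
  let e := Fintype.equivFinOfCardEq h4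
  have h1 : (e.permCongr q) ^ 8 = 1 := by rw [permCongr_pow, h8]; ext x; simp
  have h2 : (e.permCongr q) (e b) = e b := by simp [Equiv.permCongr_apply, hb]
  have hs' : Equiv.Perm.sign (e.permCongr q) = 1 := by
    rw [Equiv.Perm.sign_permCongr]; exact hs
  have := perm4_fix_sign' _ _ h1 h2 hs'
  have h3 : e.permCongr q = e.permCongr 1 := by rw [this]; ext x; simp [Equiv.permCongr_apply]
  exact e.permCongr.injective h3

lemma normal_of_index_two {Q : Type*} [Group Q] (H : Subgroup Q) (h : H.index = 2) :
    H.Normal := by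
  constructor
  intro n hn q
  have e1 := Subgroup.mul_mem_iff_of_index_two h (a := q * n) (b := q⁻¹)
  rw [mul_assoc] at e1
  have e2 := Subgroup.mul_mem_iff_of_index_two h (a := q) (b := n)
  rw [show q * n * q⁻¹ = q * (n * q⁻¹) from mul_assoc _ _ _] at *
  rw [e1, e2]
  simp [hn]

lemma nat_dvd8 {d : ℕ} (h : d ∣ 8) : d = 1 ∨ d = 2 ∨ d = 4 ∨ d = 8 := by
  have hle : d ≤ 8 := Nat.le_of_dvd (by norm_num) h
  interval_cases d <;> revert h <;> decide

section
variable {V : Type*} {G : Type*} [Group G] [MulAction G V] (Sg : SimpleGraph V)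

lemma mem_pstab {z : G} {w : V} :
    z ∈ pstab Sg G w ↔ z • w = w ∧ ∀ u, Sg.Adj w u → z • u = u := by
  simp [pstab, Subgroup.mem_iInf, MulAction.mem_stabilizer_iff, SimpleGraph.mem_neighborSet]

lemma pstab_le_stab (w : V) : pstab Sg G w ≤ MulAction.stabilizer G w := inf_le_left

lemma pstab_conj (hact : ∀ (g : G) (a b : V), Sg.Adj (g • a) (g • b) ↔ Sg.Adj a b)
    {z : G} (h : G) (v : V) :
    z ∈ pstab Sg G (h • v) ↔ h⁻¹ * z * h ∈ pstab Sg G v := by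
  rw [mem_pstab, mem_pstab]
  constructor
  · rintro ⟨h1, h2⟩
    refine ⟨?_, fun u hu => ?_⟩
    · simp only [mul_smul]
      rw [h1, inv_smul_smul]
    · simp only [mul_smul]
      rw [h2 (h • u) ((hact h v u).mpr hu), inv_smul_smul]
  · rintro ⟨h1, h2⟩
    simp only [mul_smul] at h1 h2
    refine ⟨?_, fun u hu => ?_⟩
    · rw [inv_smul_eq_iff] at h1
      exact h1
    · have hu' : Sg.Adj v (h⁻¹ • u) := by
        have := (hact h⁻¹ (h • v) u).mpr hu
        rwa [inv_smul_smul] at this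
      have := h2 _ hu'
      rw [smul_inv_smul, inv_smul_eq_iff, smul_inv_smul] at this
      exact this

variable [Finite V]

noncomputable def rho (hact : ∀ (g : G) (a b : V), Sg.Adj (g • a) (g • b) ↔ Sg.Adj a b)
    (v : V) : MulAction.stabilizer G v →* Equiv.Perm (Sg.neighborSet v) where
  toFun a := Equiv.Perm.subtypePerm (MulAction.toPerm (a : G))
    (fun u => by
      have hv : (a : G) • v = v := a.2
      symm
      constructor
      · intro hu
        have : Sg.Adj ((a:G) • v) ((a:G) • u) := (hact _ v u).mpr hu
        rwa [hv] at this
      · intro hu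
        have : Sg.Adj ((a:G) • v) ((a:G) • u) := by rwa [hv]
        exact (hact _ v u).mp this)
  map_one' := Equiv.ext fun u => Subtype.ext (one_smul G (u : V))
  map_mul' a b := Equiv.ext fun u => Subtype.ext (mul_smul (a : G) (b : G) (u : V))

lemma rho_apply (hact : ∀ (g : G) (a b : V), Sg.Adj (g • a) (g • b) ↔ Sg.Adj a b)
    (v : V) (a : MulAction.stabilizer G v) (u : Sg.neighborSet v) :
    ((rho Sg hact v a u : V)) = (a : G) • (u : V) := rfl

lemma rho_eq_one_iff (hact : ∀ (g : G) (a b : V), Sg.Adj (g • a) (g • b) ↔ Sg.Adj a b)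
    (v : V) (a : MulAction.stabilizer G v) :
    rho Sg hact v a = 1 ↔ (a : G) ∈ pstab Sg G v := by
  rw [mem_pstab]
  constructor
  · intro h
    refine ⟨a.2, fun u hu => ?_⟩
    have := congrArg (fun p => (p ⟨u, hu⟩ : V)) h
    simpa [rho_apply] using this
  · rintro ⟨-, h⟩
    ext u
    exact h u u.2

noncomputable def sgn (hact : ∀ (g : G) (a b : V), Sg.Adj (g • a) (g • b) ↔ Sg.Adj a b)
    (v : V) : MulAction.stabilizer G v →* ℤˣ :=
  letI : Fintype ↥(Sg.neighborSet v) := Fintype.ofFinite _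
  letI : DecidableEq ↥(Sg.neighborSet v) := Classical.decEq _
  Equiv.Perm.sign.comp (rho Sg hact v)

lemma card4 (v : V) (hv4 : (Sg.neighborSet v).ncard = 4)
    (inst : Fintype ↥(Sg.neighborSet v)) : @Fintype.card ↥(Sg.neighborSet v) inst = 4 := by
  rw [← Nat.card_eq_fintype_card, Nat.card_coe_set_eq, hv4]

lemma card_perm24 (v : V) (hv4 : (Sg.neighborSet v).ncard = 4) :
    Nat.card (Equiv.Perm ↥(Sg.neighborSet v)) = 24 := by
  letI : Fintype ↥(Sg.neighborSet v) := Fintype.ofFinite _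
  letI : DecidableEq ↥(Sg.neighborSet v) := Classical.decEq _
  rw [Nat.card_eq_fintype_card, Fintype.card_perm, card4 Sg v hv4]
  rfl

lemma rho_pow8 (hact : ∀ (g : G) (a b : V), Sg.Adj (g • a) (g • b) ↔ Sg.Adj a b)
    (v : V) (hv4 : (Sg.neighborSet v).ncard = 4) (a : MulAction.stabilizer G v)
    (h2pow : ∃ k : ℕ, a ^ (2^k) = 1) : (rho Sg hact v a) ^ 8 = 1 := by
  obtain ⟨k, hk⟩ := h2pow
  have h1 : orderOf (rho Sg hact v a) ∣ 2 ^ k :=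
    dvd_trans (orderOf_map_dvd _ a) (orderOf_dvd_of_pow_eq_one hk)
  have h2 : orderOf (rho Sg hact v a) ∣ 24 := by
    have := orderOf_dvd_natCard (rho Sg hact v a)
    rwa [card_perm24 Sg v hv4] at this
  obtain ⟨m, -, hm⟩ := (Nat.dvd_prime_pow Nat.prime_two).mp h1
  rw [hm] at h2
  have hm3 : m ≤ 3 := by
    by_contra hc
    push_neg at hc
    have h16 : (2:ℕ) ^ 4 ∣ 2 ^ m := Nat.pow_dvd_pow 2 hc
    have : (16:ℕ) ∣ 24 := dvd_trans (by norm_num at h16 ⊢; exact h16) h2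
    norm_num at this
  have hdvd : orderOf (rho Sg hact v a) ∣ 8 := by
    rw [hm]
    exact dvd_trans (Nat.pow_dvd_pow 2 hm3) (by norm_num)
  exact orderOf_dvd_iff_pow_eq_one.mp hdvd

lemma sgn_eq_one_of_mem (hact : ∀ (g : G) (a b : V), Sg.Adj (g • a) (g • b) ↔ Sg.Adj a b)
    (v : V) (a : MulAction.stabilizer G v) (h : (a : G) ∈ pstab Sg G v) :
    sgn Sg hact v a = 1 := by
  letI : Fintype ↥(Sg.neighborSet v) := Fintype.ofFinite _
  letI : DecidableEq ↥(Sg.neighborSet v) := Classical.decEq _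
  show Equiv.Perm.sign (rho Sg hact v a) = 1
  rw [(rho_eq_one_iff Sg hact v a).mpr h]
  simp

lemma mem_of_sgn_eq_one (hact : ∀ (g : G) (a b : V), Sg.Adj (g • a) (g • b) ↔ Sg.Adj a b)
    (v : V) (hv4 : (Sg.neighborSet v).ncard = 4) (a : MulAction.stabilizer G v)
    (h2pow : ∃ k : ℕ, a ^ (2^k) = 1) (u0 : V) (hu0 : Sg.Adj v u0)
    (hfix : (a : G) • u0 = u0) (hs : sgn Sg hact v a = 1) : (a : G) ∈ pstab Sg G v := by
  letI : Fintype ↥(Sg.neighborSet v) := Fintype.ofFinite _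
  letI : DecidableEq ↥(Sg.neighborSet v) := Classical.decEq _
  have hs' : Equiv.Perm.sign (rho Sg hact v a) = 1 := hs
  have h8 := rho_pow8 Sg hact v hv4 a h2pow
  have hb : (rho Sg hact v a) ⟨u0, hu0⟩ = ⟨u0, hu0⟩ := Subtype.ext hfix
  have := perm_card4_fix_sign (card4 Sg v hv4 _) _ _ h8 hb hs'
  exact (rho_eq_one_iff Sg hact v a).mp this

lemma sq_mem_pstab (hact : ∀ (g : G) (a b : V), Sg.Adj (g • a) (g • b) ↔ Sg.Adj a b)
    (v : V) (hv4 : (Sg.neighborSet v).ncard = 4) (a : MulAction.stabilizer G v)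
    (h2pow : ∃ k : ℕ, a ^ (2^k) = 1) (u0 : V) (hu0 : Sg.Adj v u0)
    (hfix : (a : G) • u0 = u0) : ((a : G)) ^ 2 ∈ pstab Sg G v := by
  letI : Fintype ↥(Sg.neighborSet v) := Fintype.ofFinite _
  letI : DecidableEq ↥(Sg.neighborSet v) := Classical.decEq _
  have h8 := rho_pow8 Sg hact v hv4 a h2pow
  have hb : (rho Sg hact v a) ⟨u0, hu0⟩ = ⟨u0, hu0⟩ := Subtype.ext hfix
  have hsq := perm_card4_fix_sq (card4 Sg v hv4 _) _ _ h8 hb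
  have : rho Sg hact v (a ^ 2) = 1 := by rw [map_pow, hsq]
  have := (rho_eq_one_iff Sg hact v (a ^ 2)).mp this
  rwa [SubmonoidClass.coe_pow] at this

lemma not_mem_sgn (hact : ∀ (g : G) (a b : V), Sg.Adj (g • a) (g • b) ↔ Sg.Adj a b)
    (v : V) (hv4 : (Sg.neighborSet v).ncard = 4) (a : MulAction.stabilizer G v)
    (h2pow : ∃ k : ℕ, a ^ (2^k) = 1) (u0 : V) (hu0 : Sg.Adj v u0)
    (hfix : (a : G) • u0 = u0) (hnm : (a : G) ∉ pstab Sg G v) :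
    sgn Sg hact v a = -1 := by
  rcases Int.units_eq_one_or (sgn Sg hact v a) with h | h
  · exact absurd (mem_of_sgn_eq_one Sg hact v hv4 a h2pow u0 hu0 hfix h) hnm
  · exact h

lemma sgn_conj (hact : ∀ (g : G) (a b : V), Sg.Adj (g • a) (g • b) ↔ Sg.Adj a b)
    (h : G) (v : V) (a : G) (ha : a ∈ MulAction.stabilizer G v)
    (ha' : h * a * h⁻¹ ∈ MulAction.stabilizer G (h • v)) :
    sgn Sg hact (h • v) ⟨h * a * h⁻¹, ha'⟩ = sgn Sg hact v ⟨a, ha⟩ := by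
  letI i1 : Fintype ↥(Sg.neighborSet v) := Fintype.ofFinite _
  letI i2 : DecidableEq ↥(Sg.neighborSet v) := Classical.decEq _
  letI i3 : Fintype ↥(Sg.neighborSet (h • v)) := Fintype.ofFinite _
  letI i4 : DecidableEq ↥(Sg.neighborSet (h • v)) := Classical.decEq _
  show Equiv.Perm.sign (rho Sg hact (h • v) ⟨h * a * h⁻¹, ha'⟩)
      = Equiv.Perm.sign (rho Sg hact v ⟨a, ha⟩)
  have hmem : ∀ u : V, u ∈ Sg.neighborSet v → h • u ∈ Sg.neighborSet (h • v) :=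
    fun u hu => (hact h v u).mpr hu
  have hmem' : ∀ u : V, u ∈ Sg.neighborSet (h • v) → h⁻¹ • u ∈ Sg.neighborSet v := by
    intro u hu
    have := (hact h⁻¹ (h • v) u).mpr hu
    rwa [inv_smul_smul] at this
  let φ : ↥(Sg.neighborSet v) ≃ ↥(Sg.neighborSet (h • v)) :=
    { toFun := fun u => ⟨h • (u : V), hmem u u.2⟩
      invFun := fun u => ⟨h⁻¹ • (u : V), hmem' u u.2⟩
      left_inv := fun u => Subtype.ext (inv_smul_smul h (u : V))
      right_inv := fun u => Subtype.ext (smul_inv_smul h (u : V)) }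
  have key : rho Sg hact (h • v) ⟨h * a * h⁻¹, ha'⟩ = φ.permCongr (rho Sg hact v ⟨a, ha⟩) := by
    ext u
    show (h * a * h⁻¹) • (u : V) = _
    simp only [Equiv.permCongr_apply]
    show _ = h • (a • (h⁻¹ • (u : V)))
    simp only [mul_smul]
  rw [key, Equiv.Perm.sign_permCongr]

end


section

variable {Q : Type*} [Group Q]

lemma d8_struct (h8 : Nat.card Q = 8) {y : Q} (hy2 : y ^ 2 = 1) (hy1 : y ≠ 1)
    (hnc : ∃ q : Q, q * y ≠ y * q) :
    ∃ x : Q, orderOf x = 4 ∧ y * x * y⁻¹ = x⁻¹ ∧ y ∉ Subgroup.zpowers x ∧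
      Subgroup.closure ({x, y} : Set Q) = ⊤ := by
  haveI : Finite Q := Nat.finite_of_card_ne_zero (by omega)
  have hord : ∀ q : Q, orderOf q ∣ 8 := fun q => h8 ▸ orderOf_dvd_natCard q
  obtain ⟨q0, hq0⟩ := hnc
  -- existence of element of order 4
  have hx : ∃ x : Q, orderOf x = 4 := by
    by_contra hc
    push_neg at hc
    by_cases h8' : ∃ z : Q, orderOf z = 8
    · obtain ⟨z, hz⟩ := h8'
      haveI : IsCyclic Q := isCyclic_of_orderOf_eq_card z (by rw [hz, h8])
      letI := IsCyclic.commGroup (α := Q)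
      exact hq0 (mul_comm q0 y)
    · push_neg at h8'
      have hsq : ∀ q : Q, q ^ 2 = 1 := by
        intro q
        rcases nat_dvd8 (hord q) with h | h | h | h
        · have := pow_orderOf_eq_one q
          rw [h, pow_one] at this
          rw [this]; simp
        · rw [← h]; exact pow_orderOf_eq_one q
        · exact absurd h (hc q)
        · exact absurd h (h8' q)
      have hinv : ∀ a : Q, a⁻¹ = a := by
        intro a
        have : a * a = 1 := by rw [← pow_two]; exact hsq a
        exact inv_eq_of_mul_eq_one_right this
      exact hq0 (by
        calc q0 * y = ((q0 * y)⁻¹)⁻¹ := by rw [inv_inv]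
        _ = (q0 * y)⁻¹ := by rw [hinv]
        _ = y⁻¹ * q0⁻¹ := by rw [mul_inv_rev]
        _ = y * q0 := by rw [hinv, hinv])
  obtain ⟨x, hx4⟩ := hx
  have hx4n : x ^ (4:ℕ) = 1 := by rw [← hx4]; exact pow_orderOf_eq_one x
  have hz4 : x ^ ((4:ℕ):ℤ) = 1 := by rw [zpow_natCast, hx4n]
  have hzsplit : ∀ (n s : ℤ), x ^ (4 * n + s) = x ^ s := by
    intro n s
    rw [zpow_add, show (4:ℤ) = ((4:ℕ):ℤ) by norm_num, zpow_mul, hz4, one_zpow, one_mul]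
  have hz2 : x ^ ((2:ℕ):ℤ) = x ^ (2:ℕ) := zpow_natCast x 2
  have hx2ne : x ^ (2:ℕ) ≠ 1 := by
    intro h
    have hd := orderOf_dvd_of_pow_eq_one h
    rw [hx4] at hd
    exact absurd hd (by decide)
  have hidx : (Subgroup.zpowers x).index = 2 := by
    have := Subgroup.index_mul_card (Subgroup.zpowers x)
    rw [Nat.card_zpowers, hx4, h8] at this
    omega
  have hnormal : (Subgroup.zpowers x).Normal := normal_of_index_two _ hidx
  -- x^2 is central
  have hcen : ∀ q : Q, q * x ^ (2:ℕ) * q⁻¹ = x ^ (2:ℕ) := by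
    intro q
    obtain ⟨k, hk⟩ := hnormal.conj_mem x (Subgroup.mem_zpowers x) q
    change x ^ k = _ at hk
    have hsq : q * x ^ (2:ℕ) * q⁻¹ = (x ^ k) ^ (2:ℕ) := by
      rw [hk, conj_pow]
    have hzp : (x ^ k) ^ (2:ℕ) = x ^ (k * 2) := by
      rw [← zpow_natCast (x ^ k) 2, ← zpow_mul]
      norm_num
    rcases Int.even_or_odd k with ⟨m, hm⟩ | ⟨m, hm⟩
    · exfalso
      have hone : x ^ (k * 2) = 1 := by
        rw [hm, show (m + m) * 2 = 4 * m + 0 by ring, hzsplit]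
        simp
      apply hx2ne
      have h1 : q * x ^ (2:ℕ) * q⁻¹ = 1 := by rw [hsq, hzp, hone]
      have := congrArg (fun z => q⁻¹ * z * q) h1
      simpa [mul_assoc] using this
    · rw [hsq, hzp, hm, show (2 * m + 1) * 2 = 4 * m + 2 by ring, hzsplit,
        show (2:ℤ) = ((2:ℕ):ℤ) by norm_num, hz2]
  -- y not in zpowers x
  have hynot : y ∉ Subgroup.zpowers x := by
    intro hmem
    obtain ⟨k, hk⟩ := hmem
    change x ^ k = _ at hk
    have h2k : x ^ (k * 2) = 1 := by
      have h1 : (x ^ k) ^ (2:ℕ) = 1 := by rw [hk, hy2]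
      rw [← zpow_natCast (x ^ k) 2, ← zpow_mul] at h1
      convert h1 using 2 <;> norm_num
    have hdvd : ((4:ℕ):ℤ) ∣ k * 2 := by
      have := orderOf_dvd_iff_zpow_eq_one.mpr h2k
      rwa [hx4] at this
    have hdvd' : (4:ℤ) ∣ k * 2 := by exact_mod_cast hdvd
    obtain ⟨m, hm⟩ : ∃ m : ℤ, k = 2 * m := ⟨k / 2, by omega⟩
    rcases Int.even_or_odd m with ⟨n, hn⟩ | ⟨n, hn⟩
    · apply hy1
      rw [← hk, hm, hn, show 2 * (n + n) = 4 * n + 0 by ring, hzsplit]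
      simp
    · have hyx2 : y = x ^ (2:ℕ) := by
        rw [← hk, hm, hn, show 2 * (2 * n + 1) = 4 * n + 2 by ring, hzsplit,
          show (2:ℤ) = ((2:ℕ):ℤ) by norm_num, hz2]
      apply hq0
      have hq := hcen q0
      rw [← hyx2] at hq
      calc q0 * y = q0 * y * q0⁻¹ * q0 := by group
      _ = y * q0 := by rw [hq]
  -- closure is top
  have hgen : Subgroup.closure ({x, y} : Set Q) = ⊤ := by
    have hxmem : x ∈ Subgroup.closure ({x, y} : Set Q) :=
      Subgroup.subset_closure (by simp)
    have hymem : y ∈ Subgroup.closure ({x, y} : Set Q) :=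
      Subgroup.subset_closure (by simp)
    have hle : Subgroup.zpowers x ≤ Subgroup.closure ({x, y} : Set Q) :=
      (Subgroup.zpowers_le).mpr hxmem
    have hcd : Nat.card (Subgroup.closure ({x, y} : Set Q)) ∣ 8 :=
      h8 ▸ Subgroup.card_subgroup_dvd_card _
    have h4d : (4:ℕ) ∣ Nat.card (Subgroup.closure ({x, y} : Set Q)) := by
      have := Subgroup.card_dvd_of_le hle
      rwa [Nat.card_zpowers, hx4] at this
    rcases nat_dvd8 hcd with h | h | h | h
    · omega
    · omega
    · exfalso
      have hcard_le : Nat.card (Subgroup.closure ({x, y} : Set Q))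
          ≤ Nat.card (Subgroup.zpowers x) := by
        rw [Nat.card_zpowers, hx4, h]
      have := Subgroup.eq_of_le_of_card_ge hle hcard_le
      rw [← this] at hymem
      exact hynot hymem
    · exact Subgroup.eq_top_of_card_eq _ (by rw [h, h8])
  -- relation
  have hrel : y * x * y⁻¹ = x⁻¹ := by
    obtain ⟨k, hk⟩ := hnormal.conj_mem x (Subgroup.mem_zpowers x) y
    change x ^ k = _ at hk
    have hsq : y * x ^ (2:ℕ) * y⁻¹ = x ^ (k * 2) := by
      rw [← conj_pow, ← hk, ← zpow_natCast (x ^ k) 2, ← zpow_mul]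
      norm_num
    have hko : ∃ m : ℤ, k = 2 * m + 1 := by
      rcases Int.even_or_odd k with ⟨m, hm⟩ | ⟨m, hm⟩
      · exfalso
        have hone : x ^ (k * 2) = 1 := by
          rw [hm, show (m + m) * 2 = 4 * m + 0 by ring, hzsplit]
          simp
        apply hx2ne
        rw [hone] at hsq
        have := congrArg (fun z => y⁻¹ * z * y) hsq
        simpa [mul_assoc] using this
      · exact ⟨m, hm⟩
    obtain ⟨m, hm⟩ := hko
    rcases Int.even_or_odd m with ⟨n, hn⟩ | ⟨n, hn⟩
    · -- k = 4n+1, so y commutes with x : contradiction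
      exfalso
      have hcx : y * x * y⁻¹ = x := by
        rw [← hk, hm, hn, show 2 * (n + n) + 1 = 4 * n + 1 by ring, hzsplit, zpow_one]
      have hxy : y * x = x * y := by
        calc y * x = y * x * y⁻¹ * y := by group
        _ = x * y := by rw [hcx]
      have hsub : ({x, y} : Set Q) ⊆ ↑(Subgroup.centralizer {y}) := by
        intro z hz
        rcases hz with hz | hz
        · subst hz
          rw [SetLike.mem_coe, Subgroup.mem_centralizer_iff]
          intro h hh
          rw [Set.mem_singleton_iff] at hh
          subst hh
          exact hxy
        · rw [Set.mem_singleton_iff] at hz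
          subst hz
          rw [SetLike.mem_coe, Subgroup.mem_centralizer_iff]
          intro h hh
          rw [Set.mem_singleton_iff] at hh
          subst hh
          rfl
      have htop : (⊤ : Subgroup Q) ≤ Subgroup.centralizer {y} := by
        rw [← hgen]
        exact (Subgroup.closure_le _).mpr hsub
      have := htop (Subgroup.mem_top q0)
      rw [Subgroup.mem_centralizer_iff] at this
      exact hq0 (this y (Set.mem_singleton y)).symm
    · -- k = 4n+3, conjugate is x⁻¹
      rw [← hk, hm, hn, show 2 * (2 * n + 1) + 1 = 4 * n + 3 by ring, hzsplit,
        show (3:ℤ) = 4 * 1 + (-1) by ring, hzsplit, zpow_neg_one]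
  exact ⟨x, hx4, hrel, hynot, hgen⟩
lemma dihedral_hom (x y : Q) (hx4 : orderOf x = 4) (hy2 : y ^ 2 = 1)
    (rel : y * x * y⁻¹ = x⁻¹) :
    ∃ ψ : DihedralGroup 4 →* Q, ψ (DihedralGroup.r 1) = x ∧ ψ (DihedralGroup.sr 0) = y := by
  have hx4n : x ^ (4:ℕ) = 1 := by rw [← hx4]; exact pow_orderOf_eq_one x
  have hmod : ∀ n : ℕ, x ^ (n % 4) = x ^ n := by
    intro n
    have := pow_mod_orderOf x n
    rwa [hx4] at this
  have hadd : ∀ i j : ZMod 4, x ^ (i + j).val = x ^ i.val * x ^ j.val := by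
    intro i j
    rw [ZMod.val_add, hmod, pow_add]
  have hsub : ∀ i j : ZMod 4, x ^ (j - i).val = (x ^ i.val)⁻¹ * x ^ j.val := by
    intro i j
    have h := hadd i (j - i)
    rw [show i + (j - i) = j by ring] at h
    rw [eq_inv_mul_iff_mul_eq]
    exact h.symm
  have hyy : y * y = 1 := by rw [← pow_two]; exact hy2
  have hyinv : y⁻¹ = y := inv_eq_of_mul_eq_one_right hyy
  have hconj : ∀ n : ℕ, y * x ^ n * y⁻¹ = (x ^ n)⁻¹ := by
    intro n
    rw [← conj_pow, rel, inv_pow]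
  have hswap' : ∀ i : ZMod 4, x ^ i.val * y = y * (x ^ i.val)⁻¹ := by
    intro i
    calc x ^ i.val * y = x ^ i.val * y⁻¹ := by rw [hyinv]
    _ = (y * y) * (x ^ i.val * y⁻¹) := by rw [hyy, one_mul]
    _ = y * (y * x ^ i.val * y⁻¹) := by group
    _ = y * (x ^ i.val)⁻¹ := by rw [hconj i.val]
  refine ⟨{ toFun := fun d => match d with
            | DihedralGroup.r i => x ^ i.val
            | DihedralGroup.sr i => y * x ^ i.val
            map_one' := ?_
            map_mul' := ?_ }, ?_, ?_⟩
  · show x ^ (0 : ZMod 4).val = 1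
    rw [show (0 : ZMod 4).val = 0 from rfl, pow_zero]
  · rintro (i | i) (j | j)
    · show x ^ (i + j).val = x ^ i.val * x ^ j.val
      exact hadd i j
    · show y * x ^ (j - i).val = x ^ i.val * (y * x ^ j.val)
      rw [hsub, ← mul_assoc, ← hswap' i, mul_assoc]
    · show y * x ^ (i + j).val = (y * x ^ i.val) * x ^ j.val
      rw [hadd, mul_assoc]
    · show x ^ (j - i).val = (y * x ^ i.val) * (y * x ^ j.val)
      rw [hsub]
      calc (x ^ i.val)⁻¹ * x ^ j.val
          = (x ^ i.val)⁻¹ * (y * y) * x ^ j.val := by rw [hyy, mul_one]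
      _ = ((x ^ i.val)⁻¹ * y) * (y * x ^ j.val) := by group
      _ = (y * x ^ i.val) * (y * x ^ j.val) := by
            have h := hconj i.val
            have : (x ^ i.val)⁻¹ * y = y * x ^ i.val := by
              rw [← h]; group
            rw [this]
  · show x ^ (1 : ZMod 4).val = x
    rw [show (1 : ZMod 4).val = 1 from rfl, pow_one]
  · show y * x ^ (0 : ZMod 4).val = y
    rw [show (0 : ZMod 4).val = 0 from rfl, pow_zero, mul_one]

end
end Tetra


def zsgn (u : ℤˣ) : ZMod 2 := if u = 1 then 0 else 1

lemma zsgn_one : zsgn 1 = 0 := rfl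

lemma zsgn_mul : ∀ u v : ℤˣ, zsgn (u * v) = zsgn u + zsgn v := by decide

lemma zsgn_eq_zero : ∀ u : ℤˣ, zsgn u = 0 → u = 1 := by decide

lemma zsgn_neg_one : zsgn (-1) = 1 := by decide


open Tetra

/-- **Lemma 6.3.**  Let `Sg` be a finite connected tetravalent graph, `G ≤ Aut Sg`
arc-transitive, `(ω, ω')` an arc, `g ∈ G` with `g·ω = ω'` and `g·ω' = ω`, and suppose
the vertex stabilizer `G_ω` is a `2`-group of order at least `16`.  Then:
(a) `G_{ωω'}^{[1]} = G_ω^{[1]} ∩ G_{ω'}^{[1]}` is normal of index `4` in the arc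
    stabilizer `G_{ωω'}`, with quotient `ℤ₂ × ℤ₂`;
(b) there are `x ∈ G_ω \ G_{ωω'}` and `y ∈ G_{ω'}^{[1]} \ G_ω^{[1]}` with
    `G_ω = ⟨G_{ωω'}, x⟩ = ⟨G_ω^{[1]}, x, y⟩`, `G_ω^{[1]} = ⟨G_{ωω'}^{[1]}, y^g⟩`,
    `(xy)² ∈ G_ω^{[1]}`, and `G_ω/G_ω^{[1]} ≅ D₈` generated by the images of `x, y`;
(c) there is `g̃ ∈ G_ω g G_ω` with `G_ω g̃ G_ω = G_ω g G_ω`, interchanging `ω` and `ω'`,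
    and with `g̃² ∈ G_ω^{[1]}`. -/
theorem tetravalent_lemma_6_3 {V : Type*} [Fintype V] (Sg : SimpleGraph V)
    {G : Type*} [Group G] [MulAction G V] [FaithfulSMul G V]
    (hact : ∀ (g : G) (a b : V), Sg.Adj (g • a) (g • b) ↔ Sg.Adj a b)
    (hconn : Sg.Connected)
    (hval : ∀ v : V, (Sg.neighborSet v).ncard = 4)
    (harc : ∀ a b c d : V, Sg.Adj a b → Sg.Adj c d → ∃ g : G, g • a = c ∧ g • b = d)
    (ω ω' : V) (hadj : Sg.Adj ω ω')
    (g : G) (hgω : g • ω = ω') (hgω' : g • ω' = ω)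
    (h2 : IsPGroup 2 (MulAction.stabilizer G ω))
    (hbig : 16 ≤ Nat.card (MulAction.stabilizer G ω)) :
    -- (a)
    (((pstab Sg G ω ⊓ pstab Sg G ω').subgroupOf
        (MulAction.stabilizer G ω ⊓ MulAction.stabilizer G ω')).Normal ∧
      (pstab Sg G ω ⊓ pstab Sg G ω').relIndex
        (MulAction.stabilizer G ω ⊓ MulAction.stabilizer G ω') = 4 ∧
      ∃ f : ↥(MulAction.stabilizer G ω ⊓ MulAction.stabilizer G ω') →*
          Multiplicative (ZMod 2 × ZMod 2),
        Function.Surjective f ∧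
        f.ker = (pstab Sg G ω ⊓ pstab Sg G ω').subgroupOf
          (MulAction.stabilizer G ω ⊓ MulAction.stabilizer G ω')) ∧
    -- (b)
    (∃ x y : G, ∃ (hx : x ∈ MulAction.stabilizer G ω) (hy : y ∈ MulAction.stabilizer G ω),
      x ∉ MulAction.stabilizer G ω ⊓ MulAction.stabilizer G ω' ∧
      y ∈ pstab Sg G ω' ∧ y ∉ pstab Sg G ω ∧
      MulAction.stabilizer G ω =
        Subgroup.closure
          (((MulAction.stabilizer G ω ⊓ MulAction.stabilizer G ω') : Set G) ∪ {x}) ∧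
      MulAction.stabilizer G ω = Subgroup.closure ((pstab Sg G ω : Set G) ∪ {x, y}) ∧
      pstab Sg G ω =
        Subgroup.closure (((pstab Sg G ω ⊓ pstab Sg G ω') : Set G) ∪ {g⁻¹ * y * g}) ∧
      (x * y) ^ 2 ∈ pstab Sg G ω ∧
      ∃ f : ↥(MulAction.stabilizer G ω) →* DihedralGroup 4,
        Function.Surjective f ∧
        f.ker = (pstab Sg G ω).subgroupOf (MulAction.stabilizer G ω) ∧
        Subgroup.closure {f ⟨x, hx⟩, f ⟨y, hy⟩} = ⊤) ∧
    -- (c)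
    (∃ gt : G, inDC (MulAction.stabilizer G ω) g gt ∧
      (∀ z : G, inDC (MulAction.stabilizer G ω) gt z ↔ inDC (MulAction.stabilizer G ω) g z) ∧
      gt • ω = ω' ∧ gt • ω' = ω ∧ gt ^ 2 ∈ pstab Sg G ω) := by
  
  classical
  have hadj' : Sg.Adj ω' ω := hadj.symm
  have hKA : pstab Sg G ω ≤ MulAction.stabilizer G ω := pstab_le_stab Sg ω
  have hK'B : pstab Sg G ω' ≤ MulAction.stabilizer G ω' := pstab_le_stab Sg ω'
  have hKB : pstab Sg G ω ≤ MulAction.stabilizer G ω' := fun z hz =>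
    MulAction.mem_stabilizer_iff.mpr (((mem_pstab Sg).mp hz).2 ω' hadj)
  have hK'A : pstab Sg G ω' ≤ MulAction.stabilizer G ω := fun z hz =>
    MulAction.mem_stabilizer_iff.mpr (((mem_pstab Sg).mp hz).2 ω hadj')
  have h2pow : ∀ z : G, z ∈ MulAction.stabilizer G ω → ∃ k : ℕ, z ^ 2 ^ k = 1 := by
    intro z hz
    obtain ⟨k, hk⟩ := h2 ⟨z, hz⟩
    exact ⟨k, by simpa using congrArg Subtype.val hk⟩
  haveI hAfin : Finite ↥(MulAction.stabilizer G ω) := by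
    have : 0 < Nat.card ↥(MulAction.stabilizer G ω) := by omega
    exact (Nat.card_pos_iff.mp this).2
  -- Step A : there is an element of K' not in K
  have hKne : ∃ y : G, y ∈ pstab Sg G ω' ∧ y ∉ pstab Sg G ω := by
    by_contra hc
    push_neg at hc
    have hle : pstab Sg G ω' ≤ pstab Sg G ω := fun z hz => hc z hz
    have hstep : ∀ a b : V, Sg.Adj a b → pstab Sg G b ≤ pstab Sg G a := by
      intro a b hab z hz
      obtain ⟨h, hhω, hhω'⟩ := harc ω ω' a b hadj hab
      have h1 : z ∈ pstab Sg G (h • ω') := hhω' ▸ hz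
      have h2' : h⁻¹ * z * h ∈ pstab Sg G ω' := (pstab_conj Sg hact h ω').mp h1
      have h3 : h⁻¹ * z * h ∈ pstab Sg G ω := hle h2'
      have h4 : z ∈ pstab Sg G (h • ω) := (pstab_conj Sg hact h ω).mpr h3
      rwa [hhω] at h4
    have heq : ∀ a b : V, Sg.Adj a b → pstab Sg G a = pstab Sg G b :=
      fun a b hab => le_antisymm (hstep b a hab.symm) (hstep a b hab)
    have hwalk : ∀ (a b : V) (p : Sg.Walk a b), pstab Sg G a = pstab Sg G b := by
      intro a b p
      induction p with
      | nil => rfl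
      | cons h p ih => exact (heq _ _ h).trans ih
    have hall : ∀ v : V, pstab Sg G ω = pstab Sg G v := by
      intro v
      obtain ⟨p⟩ := hconn.preconnected ω v
      exact hwalk ω v p
    have hbot : ∀ z ∈ pstab Sg G ω, z = 1 := by
      intro z hz
      apply eq_of_smul_eq_smul (α := V)
      intro v
      rw [one_smul]
      exact ((mem_pstab Sg).mp ((hall v) ▸ hz)).1
    have hker : (rho Sg hact ω).ker = ⊥ := by
      rw [eq_bot_iff]
      intro a ha
      have h1 : (a : G) ∈ pstab Sg G ω := (rho_eq_one_iff Sg hact ω a).mp ha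
      rw [Subgroup.mem_bot]
      exact Subtype.ext (hbot _ h1)
    have hinj := (MonoidHom.ker_eq_bot_iff _).mp hker
    have hdvd : Nat.card ↥(MulAction.stabilizer G ω) ∣ 24 := by
      have := Subgroup.card_dvd_of_injective (rho Sg hact ω) hinj
      rwa [card_perm24 Sg ω (hval ω)] at this
    haveI : Fact (Nat.Prime 2) := ⟨Nat.prime_two⟩
    obtain ⟨n, hn⟩ := h2.exists_card_eq
    rw [hn] at hdvd hbig
    have hle24 : (2:ℕ)^n ≤ 24 := Nat.le_of_dvd (by norm_num) hdvd
    have hn4 : n ≤ 4 := by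
      by_contra hcc
      push_neg at hcc
      have : (2:ℕ)^5 ≤ 2^n := Nat.pow_le_pow_right (by norm_num) hcc
      norm_num at this
      omega
    interval_cases n <;> revert hdvd hbig <;> decide
  
  -- Step B : the element y and its conjugate y2
  obtain ⟨y, hyK', hyK⟩ := hKne
  have hyA : y ∈ MulAction.stabilizer G ω := hK'A hyK'
  have hyB : y ∈ MulAction.stabilizer G ω' := hK'B hyK'
  have hyE : y ∈ MulAction.stabilizer G ω ⊓ MulAction.stabilizer G ω' := ⟨hyA, hyB⟩
  have hyfixω' : y • ω' = ω' := ((mem_pstab Sg).mp hyK').1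
  have hyfixω : y • ω = ω := ((mem_pstab Sg).mp hyK').2 ω hadj'
  have hy2mem : g⁻¹ * y * g ∈ pstab Sg G ω := by
    have h1 := pstab_conj Sg hact (z := y) g ω
    rw [hgω] at h1
    exact h1.mp hyK'
  have hy2not : g⁻¹ * y * g ∉ pstab Sg G ω' := by
    intro hcon
    have h1 := pstab_conj Sg hact (z := y) g ω'
    rw [hgω'] at h1
    exact hyK (h1.mpr hcon)
  have hy2A : g⁻¹ * y * g ∈ MulAction.stabilizer G ω := hKA hy2mem
  have hy2B : g⁻¹ * y * g ∈ MulAction.stabilizer G ω' := hKB hy2mem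
  have hy2E : g⁻¹ * y * g ∈ MulAction.stabilizer G ω ⊓ MulAction.stabilizer G ω' :=
    ⟨hy2A, hy2B⟩
  have hy2fixω : (g⁻¹ * y * g) • ω = ω := hy2A
  -- subtype-level 2-power torsion
  have h2powA : ∀ (v : V) (a : MulAction.stabilizer G v),
      (a : G) ∈ MulAction.stabilizer G ω → ∃ k : ℕ, a ^ 2 ^ k = 1 := by
    intro v a ha
    obtain ⟨k, hk⟩ := h2pow (a : G) ha
    exact ⟨k, Subtype.ext (by simpa using hk)⟩
  -- sign values
  have hσ1y : sgn Sg hact ω ⟨y, hyA⟩ = -1 :=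
    not_mem_sgn Sg hact ω (hval ω) ⟨y, hyA⟩ (h2powA ω ⟨y, hyA⟩ hyA) ω' hadj hyfixω' hyK
  have hσ2y : sgn Sg hact ω' ⟨y, hyB⟩ = 1 := sgn_eq_one_of_mem Sg hact ω' ⟨y, hyB⟩ hyK'
  have hσ1y2 : sgn Sg hact ω ⟨g⁻¹ * y * g, hy2A⟩ = 1 :=
    sgn_eq_one_of_mem Sg hact ω ⟨g⁻¹ * y * g, hy2A⟩ hy2mem
  have hσ2y2 : sgn Sg hact ω' ⟨g⁻¹ * y * g, hy2B⟩ = -1 :=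
    not_mem_sgn Sg hact ω' (hval ω') ⟨g⁻¹ * y * g, hy2B⟩
      (h2powA ω' ⟨g⁻¹ * y * g, hy2B⟩ hy2A) ω hadj' hy2fixω hy2not
  -- membership from signs
  have hmem1 : ∀ (z : G) (hz : z ∈ MulAction.stabilizer G ω), z • ω' = ω' →
      sgn Sg hact ω ⟨z, hz⟩ = 1 → z ∈ pstab Sg G ω := fun z hz hfix hs =>
    mem_of_sgn_eq_one Sg hact ω (hval ω) ⟨z, hz⟩ (h2powA ω ⟨z, hz⟩ hz) ω' hadj hfix hs
  have hmem2 : ∀ (z : G) (hz : z ∈ MulAction.stabilizer G ω'), z • ω = ω →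
      z ∈ MulAction.stabilizer G ω →
      sgn Sg hact ω' ⟨z, hz⟩ = 1 → z ∈ pstab Sg G ω' := fun z hz hfix hzA hs =>
    mem_of_sgn_eq_one Sg hact ω' (hval ω') ⟨z, hz⟩ (h2powA ω' ⟨z, hz⟩ hzA) ω hadj' hfix hs
  -- the homomorphism f for part (a)
  set σ1E : ↥(MulAction.stabilizer G ω ⊓ MulAction.stabilizer G ω') →* ℤˣ :=
    (sgn Sg hact ω).comp (Subgroup.inclusion inf_le_left) with hσ1Edef
  set σ2E : ↥(MulAction.stabilizer G ω ⊓ MulAction.stabilizer G ω') →* ℤˣ :=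
    (sgn Sg hact ω').comp (Subgroup.inclusion inf_le_right) with hσ2Edef
  set f : ↥(MulAction.stabilizer G ω ⊓ MulAction.stabilizer G ω') →*
      Multiplicative (ZMod 2 × ZMod 2) :=
    { toFun := fun e => Multiplicative.ofAdd (zsgn (σ1E e), zsgn (σ2E e))
      map_one' := by
        show Multiplicative.ofAdd (zsgn (σ1E 1), zsgn (σ2E 1)) = 1
        rw [map_one, map_one, zsgn_one]
        rfl
      map_mul' := by
        intro a b
        show Multiplicative.ofAdd (zsgn (σ1E (a * b)), zsgn (σ2E (a * b)))
            = Multiplicative.ofAdd (zsgn (σ1E a), zsgn (σ2E a))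
            * Multiplicative.ofAdd (zsgn (σ1E b), zsgn (σ2E b))
        rw [map_mul, map_mul, zsgn_mul, zsgn_mul, ← ofAdd_add]
        rfl } with hfdef
  have hfapply : ∀ e, f e = Multiplicative.ofAdd (zsgn (σ1E e), zsgn (σ2E e)) := fun e => rfl
  have hσ1E_apply : ∀ (z : G) (hz : z ∈ MulAction.stabilizer G ω ⊓ MulAction.stabilizer G ω'),
      σ1E ⟨z, hz⟩ = sgn Sg hact ω ⟨z, hz.1⟩ := fun z hz => rfl
  have hσ2E_apply : ∀ (z : G) (hz : z ∈ MulAction.stabilizer G ω ⊓ MulAction.stabilizer G ω'),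
      σ2E ⟨z, hz⟩ = sgn Sg hact ω' ⟨z, hz.2⟩ := fun z hz => rfl
  have hfy : f ⟨y, hyE⟩ = Multiplicative.ofAdd ((1 : ZMod 2), (0 : ZMod 2)) := by
    rw [hfapply, hσ1E_apply, hσ2E_apply, hσ1y, hσ2y, zsgn_one, zsgn_neg_one]
  have hfy2 : f ⟨g⁻¹ * y * g, hy2E⟩ = Multiplicative.ofAdd ((0 : ZMod 2), (1 : ZMod 2)) := by
    rw [hfapply, hσ1E_apply, hσ2E_apply, hσ1y2, hσ2y2, zsgn_one, zsgn_neg_one]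
  have hfsurj : Function.Surjective f := by
    intro t
    have ht : t = 1 ∨ t = Multiplicative.ofAdd ((1 : ZMod 2), (0 : ZMod 2)) ∨
        t = Multiplicative.ofAdd ((0 : ZMod 2), (1 : ZMod 2)) ∨
        t = Multiplicative.ofAdd ((1 : ZMod 2), (1 : ZMod 2)) := by
      revert t
      decide
    rcases ht with h | h | h | h
    · exact ⟨1, by rw [map_one, h]⟩
    · exact ⟨⟨y, hyE⟩, by rw [hfy, h]⟩
    · exact ⟨⟨g⁻¹ * y * g, hy2E⟩, by rw [hfy2, h]⟩
    · refine ⟨⟨y, hyE⟩ * ⟨g⁻¹ * y * g, hy2E⟩, ?_⟩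
      rw [map_mul, hfy, hfy2, h, ← ofAdd_add]
      rfl
  have hfker : f.ker = (pstab Sg G ω ⊓ pstab Sg G ω').subgroupOf
      (MulAction.stabilizer G ω ⊓ MulAction.stabilizer G ω') := by
    ext e
    rw [MonoidHom.mem_ker, Subgroup.mem_subgroupOf, Subgroup.mem_inf, hfapply]
    constructor
    · intro h
      have hpair : (zsgn (σ1E e), zsgn (σ2E e)) = ((0 : ZMod 2), (0 : ZMod 2)) := h
      have h1 : σ1E e = 1 := zsgn_eq_zero _ (congrArg Prod.fst hpair)
      have h2' : σ2E e = 1 := zsgn_eq_zero _ (congrArg Prod.snd hpair)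
      obtain ⟨z, hz⟩ := e
      rw [hσ1E_apply] at h1
      rw [hσ2E_apply] at h2'
      exact ⟨hmem1 z hz.1 hz.2 h1, hmem2 z hz.2 hz.1 hz.1 h2'⟩
    · rintro ⟨h1, h2'⟩
      obtain ⟨z, hz⟩ := e
      rw [hσ1E_apply, hσ2E_apply]
      rw [sgn_eq_one_of_mem Sg hact ω ⟨z, hz.1⟩ h1,
        sgn_eq_one_of_mem Sg hact ω' ⟨z, hz.2⟩ h2', zsgn_one]
      rfl
  have hrelidx : (pstab Sg G ω ⊓ pstab Sg G ω').relIndex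
      (MulAction.stabilizer G ω ⊓ MulAction.stabilizer G ω') = 4 := by
    show ((pstab Sg G ω ⊓ pstab Sg G ω').subgroupOf _).index = 4
    rw [← hfker, Subgroup.index_ker, MonoidHom.range_eq_top.mpr hfsurj, Subgroup.card_top,
      Nat.card_eq_fintype_card]
    rfl
  have hnormala : ((pstab Sg G ω ⊓ pstab Sg G ω').subgroupOf
      (MulAction.stabilizer G ω ⊓ MulAction.stabilizer G ω')).Normal := by
    rw [← hfker]
    exact f.normal_ker
  
  -- Step C : index computations
  have hKE : pstab Sg G ω ≤ MulAction.stabilizer G ω ⊓ MulAction.stabilizer G ω' :=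
    le_inf hKA hKB
  have hK'E : pstab Sg G ω' ≤ MulAction.stabilizer G ω ⊓ MulAction.stabilizer G ω' :=
    le_inf hK'A hK'B
  have horb : MulAction.orbit (↥(MulAction.stabilizer G ω)) ω' = Sg.neighborSet ω := by
    ext u
    constructor
    · rintro ⟨a, rfl⟩
      have h1 : Sg.Adj ((a : G) • ω) ((a : G) • ω') := (hact _ _ _).mpr hadj
      have h2' : (a : G) • ω = ω := a.2
      rw [h2'] at h1
      exact h1
    · intro hu
      obtain ⟨h, h1, h2'⟩ := harc ω ω' ω u hadj hu
      exact ⟨⟨h, h1⟩, h2'⟩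
  have hstabA : MulAction.stabilizer (↥(MulAction.stabilizer G ω)) ω'
      = (MulAction.stabilizer G ω ⊓ MulAction.stabilizer G ω').subgroupOf
        (MulAction.stabilizer G ω) := by
    ext a
    rw [MulAction.mem_stabilizer_iff, Subgroup.mem_subgroupOf, Subgroup.mem_inf]
    constructor
    · intro h
      exact ⟨a.2, h⟩
    · intro h
      exact h.2
  have hEidx : (MulAction.stabilizer G ω ⊓ MulAction.stabilizer G ω').relIndex
      (MulAction.stabilizer G ω) = 4 := by
    show ((MulAction.stabilizer G ω ⊓ MulAction.stabilizer G ω').subgroupOf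
      (MulAction.stabilizer G ω)).index = 4
    rw [← hstabA, MulAction.index_stabilizer, horb, hval ω]
  have hσ1Eker : σ1E.ker = (pstab Sg G ω).subgroupOf
      (MulAction.stabilizer G ω ⊓ MulAction.stabilizer G ω') := by
    ext e
    obtain ⟨z, hz⟩ := e
    rw [MonoidHom.mem_ker, Subgroup.mem_subgroupOf, hσ1E_apply]
    constructor
    · intro h
      exact hmem1 z hz.1 hz.2 h
    · intro h
      exact sgn_eq_one_of_mem Sg hact ω ⟨z, hz.1⟩ h
  have hσ1Erange : σ1E.range = ⊤ := by
    rw [eq_top_iff]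
    intro u _
    rcases Int.units_eq_one_or u with h | h
    · exact ⟨1, by rw [map_one, h]⟩
    · exact ⟨⟨y, hyE⟩, by rw [hσ1E_apply, hσ1y, h]⟩
  have hKEidx : (pstab Sg G ω).relIndex
      (MulAction.stabilizer G ω ⊓ MulAction.stabilizer G ω') = 2 := by
    show ((pstab Sg G ω).subgroupOf _).index = 2
    rw [← hσ1Eker, Subgroup.index_ker, hσ1Erange, Subgroup.card_top,
      Nat.card_eq_fintype_card]
    rfl
  have hKAidx : (pstab Sg G ω).relIndex (MulAction.stabilizer G ω) = 8 := by
    rw [← Subgroup.relIndex_mul_relIndex (pstab Sg G ω)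
      (MulAction.stabilizer G ω ⊓ MulAction.stabilizer G ω')
      (MulAction.stabilizer G ω) hKE inf_le_left, hKEidx, hEidx]
  -- Step D : the quotient group Q
  have hkerρ : (rho Sg hact ω).ker = (pstab Sg G ω).subgroupOf
      (MulAction.stabilizer G ω) := by
    ext a
    rw [MonoidHom.mem_ker, Subgroup.mem_subgroupOf]
    exact rho_eq_one_iff Sg hact ω a
  haveI hKnormal : ((pstab Sg G ω).subgroupOf (MulAction.stabilizer G ω)).Normal := by
    rw [← hkerρ]
    exact (rho Sg hact ω).normal_ker
  have hcardQ : Nat.card (↥(MulAction.stabilizer G ω) ⧸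
      (pstab Sg G ω).subgroupOf (MulAction.stabilizer G ω)) = 8 := hKAidx
  
  set mkq := QuotientGroup.mk' ((pstab Sg G ω).subgroupOf (MulAction.stabilizer G ω))
    with hmkqdef
  have hy_sq : y ^ 2 ∈ pstab Sg G ω :=
    sq_mem_pstab Sg hact ω (hval ω) ⟨y, hyA⟩ (h2powA ω ⟨y, hyA⟩ hyA) ω' hadj hyfixω'
  have hmk_mem : ∀ a : ↥(MulAction.stabilizer G ω), mkq a = 1 ↔ (a : G) ∈ pstab Sg G ω := by
    intro a
    rw [QuotientGroup.mk'_apply, QuotientGroup.eq_one_iff, Subgroup.mem_subgroupOf]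
  have hybar2 : (mkq ⟨y, hyA⟩) ^ 2 = 1 := by
    rw [← map_pow]
    rw [hmk_mem]
    exact_mod_cast hy_sq
  have hybar1 : mkq ⟨y, hyA⟩ ≠ 1 := by
    intro h
    exact hyK ((hmk_mem _).mp h)
  -- noncentrality of ȳ
  have hnc : ∃ q, q * mkq ⟨y, hyA⟩ ≠ mkq ⟨y, hyA⟩ * q := by
    have hyK2 := hyK
    rw [mem_pstab Sg] at hyK2
    push_neg at hyK2
    obtain ⟨u, hu, hyu⟩ := hyK2 hyfixω
    obtain ⟨aG, ha1, ha2⟩ := harc ω ω' ω u hadj hu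
    refine ⟨mkq ⟨aG, ha1⟩, ?_⟩
    intro hq
    have h5 : mkq (⟨aG, ha1⟩⁻¹ * ⟨y, hyA⟩ * ⟨aG, ha1⟩) = mkq ⟨y, hyA⟩ := by
      rw [map_mul, map_mul, map_inv, mul_assoc, ← hq]
      group
    have h6 : mkq (⟨y, hyA⟩⁻¹ * (⟨aG, ha1⟩⁻¹ * ⟨y, hyA⟩ * ⟨aG, ha1⟩)) = 1 := by
      rw [map_mul, map_inv, h5]
      group
    have h8 : (y⁻¹ * (aG⁻¹ * y * aG)) ∈ pstab Sg G ω := by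
      have := (hmk_mem _).mp h6
      simpa using this
    have h9 : (y⁻¹ * (aG⁻¹ * y * aG)) • ω' = ω' := hKB h8
    have h10 : y⁻¹ • (aG⁻¹ • (y • u)) = ω' := by
      simpa [mul_smul, ha2] using h9
    rw [inv_smul_eq_iff, hyfixω'] at h10
    rw [inv_smul_eq_iff, ha2] at h10
    exact hyu h10
  -- D8 structure
  obtain ⟨xq, hxq4, hxqrel, hxqnot, hxqgen⟩ := d8_struct hcardQ hybar2 hybar1 hnc
  obtain ⟨xA, hxAmk⟩ := QuotientGroup.mk'_surjective
    ((pstab Sg G ω).subgroupOf (MulAction.stabilizer G ω)) xq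
  have hxnotE : (xA : G) ∉ MulAction.stabilizer G ω ⊓ MulAction.stabilizer G ω' := by
    intro hmem
    have hsq : ((xA : G)) ^ 2 ∈ pstab Sg G ω :=
      sq_mem_pstab Sg hact ω (hval ω) xA (h2powA ω xA xA.2) ω' hadj hmem.2
    have hq2 : xq ^ 2 = 1 := by
      rw [← hxAmk, ← map_pow, hmk_mem]
      exact_mod_cast hsq
    have := orderOf_dvd_of_pow_eq_one hq2
    rw [hxq4] at this
    exact absurd this (by decide)
  have hxy2 : ((xA : G) * y) ^ 2 ∈ pstab Sg G ω := by
    have hq1 : mkq ((xA * ⟨y, hyA⟩) ^ 2) = 1 := by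
      rw [map_pow, map_mul, hxAmk]
      calc (xq * mkq ⟨y, hyA⟩) ^ 2
          = xq * (mkq ⟨y, hyA⟩ * xq * (mkq ⟨y, hyA⟩)⁻¹) * (mkq ⟨y, hyA⟩) ^ 2 := by
            rw [pow_two, pow_two]
            group
      _ = 1 := by rw [hxqrel, hybar2]; group
    have := (hmk_mem _).mp hq1
    simpa using this
  -- the dihedral isomorphism
  obtain ⟨ψ, hψr, hψs⟩ := dihedral_hom xq (mkq ⟨y, hyA⟩) hxq4 hybar2 hxqrel
  have hψsurj : Function.Surjective ψ := by
    rw [← MonoidHom.range_eq_top, eq_top_iff, ← hxqgen, Subgroup.closure_le]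
    rintro z (rfl | rfl)
    · exact ⟨DihedralGroup.r 1, hψr⟩
    · exact ⟨DihedralGroup.sr 0, hψs⟩
  have hψbij : Function.Bijective ψ :=
    (Nat.bijective_iff_surjective_and_card ψ).mpr ⟨hψsurj, by
      rw [Nat.card_eq_fintype_card, DihedralGroup.card, hcardQ]⟩
  set eiso := MulEquiv.ofBijective ψ hψbij with heisodef
  set fb : ↥(MulAction.stabilizer G ω) →* DihedralGroup 4 :=
    eiso.symm.toMonoidHom.comp mkq with hfbdef
  have hfbapply : ∀ a, fb a = eiso.symm (mkq a) := fun a => rfl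
  have hfbsurj : Function.Surjective fb :=
    (MulEquiv.surjective eiso.symm).comp (QuotientGroup.mk'_surjective _)
  have hfbker : fb.ker = (pstab Sg G ω).subgroupOf (MulAction.stabilizer G ω) := by
    ext a
    rw [MonoidHom.mem_ker, hfbapply, MulEquiv.map_eq_one_iff, Subgroup.mem_subgroupOf]
    exact hmk_mem a
  have hfbgen : Subgroup.closure {fb xA, fb ⟨y, hyA⟩} = ⊤ := by
    have h1 : fb xA = eiso.symm.toMonoidHom xq := by rw [hfbapply, hxAmk]; rfl
    have h2' : fb ⟨y, hyA⟩ = eiso.symm.toMonoidHom (mkq ⟨y, hyA⟩) := rfl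
    rw [h1, h2', ← Set.image_pair, ← MonoidHom.map_closure, hxqgen]
    exact Subgroup.map_top_of_surjective _ (MulEquiv.surjective eiso.symm)
  
  -- generic closure lemma
  have hclosure_top : ∀ S : Set G, S ⊆ ↑(MulAction.stabilizer G ω) →
      pstab Sg G ω ≤ Subgroup.closure S → (xA : G) ∈ Subgroup.closure S →
      y ∈ Subgroup.closure S → MulAction.stabilizer G ω = Subgroup.closure S := by
    intro S hSA hKS hxS hyS
    apply le_antisymm ?_ ((Subgroup.closure_le _).mpr hSA)
    intro a ha
    have hmap : Subgroup.map mkq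
        ((Subgroup.closure S).subgroupOf (MulAction.stabilizer G ω)) = ⊤ := by
      rw [eq_top_iff, ← hxqgen, Subgroup.closure_le]
      rintro z (rfl | rfl)
      · exact ⟨xA, Subgroup.mem_subgroupOf.mpr hxS, hxAmk⟩
      · exact ⟨⟨y, hyA⟩, Subgroup.mem_subgroupOf.mpr hyS, rfl⟩
    have hmem : mkq ⟨a, ha⟩ ∈ Subgroup.map mkq
        ((Subgroup.closure S).subgroupOf (MulAction.stabilizer G ω)) := by
      rw [hmap]
      trivial
    obtain ⟨b, hbH, hbmk⟩ := hmem
    have hker2 : mkq (b⁻¹ * ⟨a, ha⟩) = 1 := by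
      rw [map_mul, map_inv, hbmk]
      group
    have hker3 : ((b⁻¹ * (⟨a, ha⟩ : ↥(MulAction.stabilizer G ω)) : _) : G)
        ∈ pstab Sg G ω := (hmk_mem _).mp hker2
    have hbG : (b : G) ∈ Subgroup.closure S := Subgroup.mem_subgroupOf.mp hbH
    have haeq : a = (b : G) *
        ((b⁻¹ * (⟨a, ha⟩ : ↥(MulAction.stabilizer G ω)) : _) : G) := by
      push_cast
      group
    rw [haeq]
    exact mul_mem hbG (hKS hker3)
  have hcl1 : MulAction.stabilizer G ω = Subgroup.closure
      (((MulAction.stabilizer G ω ⊓ MulAction.stabilizer G ω') : Set G) ∪ {(xA : G)}) := by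
    apply hclosure_top
    · rintro z (hz | rfl)
      · exact (Subgroup.mem_inf.mp (SetLike.mem_coe.mp hz)).1
      · exact xA.2
    · intro z hz
      exact Subgroup.subset_closure (Or.inl (hKE hz))
    · exact Subgroup.subset_closure (Or.inr rfl)
    · exact Subgroup.subset_closure (Or.inl hyE)
  have hcl2 : MulAction.stabilizer G ω = Subgroup.closure
      ((pstab Sg G ω : Set G) ∪ {(xA : G), y}) := by
    apply hclosure_top
    · rintro z (hz | rfl | rfl)
      · exact hKA (SetLike.mem_coe.mp hz)
      · exact xA.2
      · exact hyA
    · intro z hz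
      exact Subgroup.subset_closure (Or.inl hz)
    · exact Subgroup.subset_closure (Or.inr (Or.inl rfl))
    · exact Subgroup.subset_closure (Or.inr (Or.inr rfl))
  have hcl3 : pstab Sg G ω = Subgroup.closure
      (((pstab Sg G ω ⊓ pstab Sg G ω') : Set G) ∪ {g⁻¹ * y * g}) := by
    apply le_antisymm
    · intro k hk
      have hkA := hKA hk
      have hkB := hKB hk
      have hkfixω : k • ω = ω := hkA
      rcases Int.units_eq_one_or (sgn Sg hact ω' ⟨k, hkB⟩) with hs | hs
      · have hkK' : k ∈ pstab Sg G ω' := hmem2 k hkB hkfixω hkA hs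
        exact Subgroup.subset_closure (Or.inl ⟨hk, hkK'⟩)
      · have hk'B : (g⁻¹ * y * g)⁻¹ * k ∈ MulAction.stabilizer G ω' :=
          mul_mem (inv_mem hy2B) hkB
        have hk'A : (g⁻¹ * y * g)⁻¹ * k ∈ MulAction.stabilizer G ω :=
          mul_mem (inv_mem hy2A) hkA
        have heqsub : (⟨(g⁻¹ * y * g)⁻¹ * k, hk'B⟩ : ↥(MulAction.stabilizer G ω'))
            = ⟨g⁻¹ * y * g, hy2B⟩⁻¹ * ⟨k, hkB⟩ := rfl
        have hσ : sgn Sg hact ω' ⟨(g⁻¹ * y * g)⁻¹ * k, hk'B⟩ = 1 := by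
          rw [heqsub, map_mul, map_inv, hσ2y2, hs]
          decide
        have hk'fix : ((g⁻¹ * y * g)⁻¹ * k) • ω = ω := hk'A
        have hk'K' : (g⁻¹ * y * g)⁻¹ * k ∈ pstab Sg G ω' :=
          hmem2 _ hk'B hk'fix hk'A hσ
        have hk'K : (g⁻¹ * y * g)⁻¹ * k ∈ pstab Sg G ω := mul_mem (inv_mem hy2mem) hk
        have hkeq : k = (g⁻¹ * y * g) * ((g⁻¹ * y * g)⁻¹ * k) := by group
        rw [hkeq]
        exact mul_mem (Subgroup.subset_closure (Or.inr rfl))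
          (Subgroup.subset_closure (Or.inl ⟨hk'K, hk'K'⟩))
    · rw [Subgroup.closure_le]
      rintro z (hz | rfl)
      · exact (Subgroup.mem_inf.mp (SetLike.mem_coe.mp hz)).1
      · exact hy2mem
  -- part (c)
  have hg2fix : (g ^ 2) • ω = ω := by
    rw [pow_two, mul_smul, hgω, hgω']
  have hg2fix' : (g ^ 2) • ω' = ω' := by
    rw [pow_two, mul_smul, hgω', hgω]
  have hg2A : g ^ 2 ∈ MulAction.stabilizer G ω := hg2fix
  have hgyg : g * y * g⁻¹ ∈ pstab Sg G ω := by
    have h1 := pstab_conj Sg hact (z := g * y * g⁻¹) g ω'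
    rw [hgω'] at h1
    apply h1.mpr
    have heq2 : g⁻¹ * (g * y * g⁻¹) * g = y := by group
    rw [heq2]
    exact hyK'
  have hpartc : ∃ gt : G, inDC (MulAction.stabilizer G ω) g gt ∧
      (∀ z : G, inDC (MulAction.stabilizer G ω) gt z ↔ inDC (MulAction.stabilizer G ω) g z) ∧
      gt • ω = ω' ∧ gt • ω' = ω ∧ gt ^ 2 ∈ pstab Sg G ω := by
    rcases Int.units_eq_one_or (sgn Sg hact ω ⟨g ^ 2, hg2A⟩) with hs | hs
    · exact ⟨g, ⟨1, one_mem _, 1, one_mem _, by group⟩, fun z => Iff.rfl, hgω, hgω',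
        hmem1 (g ^ 2) hg2A hg2fix' hs⟩
    · have hygω : (y * g) • ω = ω' := by rw [mul_smul, hgω, hyfixω']
      have hygω' : (y * g) • ω' = ω := by rw [mul_smul, hgω', hyfixω]
      have hyg2fix : ((y * g) ^ 2) • ω = ω := by
        rw [pow_two, mul_smul, hygω, hygω']
      have hyg2fix' : ((y * g) ^ 2) • ω' = ω' := by
        rw [pow_two, mul_smul, hygω', hygω]
      have hyg2A : (y * g) ^ 2 ∈ MulAction.stabilizer G ω := hyg2fix
      have heqsub : (⟨(y * g) ^ 2, hyg2A⟩ : ↥(MulAction.stabilizer G ω))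
          = ⟨y, hyA⟩ * ⟨g * y * g⁻¹, hKA hgyg⟩ * ⟨g ^ 2, hg2A⟩ := by
        apply Subtype.ext
        show (y * g) ^ 2 = y * (g * y * g⁻¹) * g ^ 2
        rw [pow_two, pow_two]
        group
      have hσyg : sgn Sg hact ω ⟨(y * g) ^ 2, hyg2A⟩ = 1 := by
        rw [heqsub, map_mul, map_mul, hσ1y,
          sgn_eq_one_of_mem Sg hact ω ⟨g * y * g⁻¹, hKA hgyg⟩ hgyg, hs]
        decide
      refine ⟨y * g, ⟨y, hyA, 1, one_mem _, by group⟩, ?_, hygω, hygω',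
        hmem1 ((y * g) ^ 2) hyg2A hyg2fix' hσyg⟩
      intro z
      constructor
      · rintro ⟨h, hh, h', hh', rfl⟩
        exact ⟨h * y, mul_mem hh hyA, h', hh', by group⟩
      · rintro ⟨h, hh, h', hh', rfl⟩
        exact ⟨h * y⁻¹, mul_mem hh (inv_mem hyA), h', hh', by group⟩
  -- final assembly
  refine ⟨⟨hnormala, hrelidx, f, hfsurj, hfker⟩,
    ⟨(xA : G), y, xA.2, hyA, hxnotE, hyK', hyK, hcl1, hcl2, hcl3, hxy2,
      fb, hfbsurj, hfbker, hfbgen⟩, hpartc⟩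
end
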